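/- arXiv:2209.05958 — 12 statements merged into one kernel-verified Lean document; each statement's English description precedes it below -/
import Mathlib

section
/- Let n ≥ 3, let L_1,…,L_n be pairwise distinct complex lines through the origin of ℂ², and let a_1,…,a_n be nonzero real numbers (of arbitrary signs). If there exists a Dunkl inner product adapted to (L_i, a_i), then |a_j| < Σ_{i≠j} |a_i| for every j (strict inequality). -/
open Matrix Finset
open scoped ComplexOrder

lemma cayley2 (M : Matrix (Fin 2) (Fin 2) ℂ) : M * M = M.trace • M - M.det • 1 := by
  ext i j
  fin_cases i <;> fin_cases j <;>
    simp [Matrix.mul_apply, Matrix.trace_fin_two, Matrix.det_fin_two, Fin.sum_univ_two,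
      Matrix.one_apply, Matrix.smul_apply] <;> ring

lemma trace_eq_one {M : Matrix (Fin 2) (Fin 2) ℂ} (h1 : M * M = M) (h2 : M.det = 0)
    (h3 : M ≠ 0) : M.trace = 1 := by
  have := cayley2 M
  rw [h1, h2, zero_smul, sub_zero] at this
  by_contra hne
  apply h3
  have : (M.trace - 1) • M = 0 := by
    rw [sub_smul, one_smul, ← this, sub_self]
  rcases smul_eq_zero.mp this with h | h
  · exact absurd (by linear_combination h : M.trace = 1) hne
  · exact absurd h h3


/-- `H` is a Dunkl inner product adapted to the lines `L i` (1-dimensional complex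
subspaces of `ℂ²`) with weights `a i`: `H` is positive definite (Hermitian) and there
are matrices `P i` which are the `H`-orthogonal projections onto the `H`-orthogonal
complements of the `L i` (idempotent, kernel `L i`, `H`-self-adjoint) with
`∑ i, a i • P i` a scalar multiple of the identity. -/
def IsDunklInnerProduct {n : ℕ} (L : Fin n → Submodule ℂ (Fin 2 → ℂ))
    (a : Fin n → ℝ) (H : Matrix (Fin 2) (Fin 2) ℂ) : Prop :=
  H.PosDef ∧
  ∃ P : Fin n → Matrix (Fin 2) (Fin 2) ℂ, ∃ c : ℂ,
    (∀ i, P i * P i = P i) ∧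
    (∀ i, LinearMap.ker (Matrix.toLin' (P i)) = L i) ∧
    (∀ i, H * P i = (P i)ᴴ * H) ∧
    (∑ i, (a i : ℂ) • P i) = c • (1 : Matrix (Fin 2) (Fin 2) ℂ)

/-- If a Dunkl inner product adapted to `n ≥ 3` pairwise distinct complex lines
through the origin of `ℂ²` with nonzero real weights `a i` (of arbitrary signs)
exists, then `|a j| < ∑_{i ≠ j} |a i|` for every `j`. -/
theorem dunkl_inner_product_implies_strict_triangle {n : ℕ} (hn : 3 ≤ n)
    (L : Fin n → Submodule ℂ (Fin 2 → ℂ))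
    (hL1 : ∀ i, Module.finrank ℂ (L i) = 1) (hLd : Function.Injective L)
    (a : Fin n → ℝ) (ha : ∀ i, a i ≠ 0)
    (H : Matrix (Fin 2) (Fin 2) ℂ) (hH : IsDunklInnerProduct L a H) :
    ∀ j, |a j| < ∑ i ∈ Finset.univ.erase j, |a i| := by
  obtain ⟨hPD, P, c, hidem, hker, hsa, hsum⟩ := hH
  set S := (open scoped MatrixOrder in CFC.sqrt H) with hSdef
  have hS : S * S = H := by
    open scoped MatrixOrder in exact CFC.sqrt_mul_sqrt_self H hPD.posSemidef.nonneg
  have hSH : Sᴴ = S := by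
    open scoped MatrixOrder in exact (CFC.sqrt_nonneg H).posSemidef.isHermitian
  have hSU : IsUnit S := by
    have hdet : IsUnit H.det := hPD.det_pos.ne'.isUnit
    rw [← hS, det_mul] at hdet
    exact (Matrix.isUnit_iff_isUnit_det S).mpr (isUnit_of_mul_isUnit_left hdet)
  have : Invertible S := hSU.invertible
  set T := S⁻¹ with hTdef
  have hST : S * T = 1 := Matrix.mul_inv_of_invertible S
  have hTS : T * S = 1 := Matrix.inv_mul_of_invertible S
  have hTH : Tᴴ = T := by rw [hTdef, conjTranspose_nonsing_inv, hSH]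
  have cancTS : ∀ X : Matrix (Fin 2) (Fin 2) ℂ, T * (S * X) = X := fun X => by
    rw [← mul_assoc, hTS, one_mul]
  have cancST : ∀ X : Matrix (Fin 2) (Fin 2) ℂ, S * (T * X) = X := fun X => by
    rw [← mul_assoc, hST, one_mul]
  set M : Fin n → Matrix (Fin 2) (Fin 2) ℂ := fun i => S * P i * T with hMdef
  have hPM : ∀ i, P i = T * (M i * S) := by
    intro i
    simp only [hMdef, mul_assoc, cancTS]
    rw [hTS, mul_one]
  have hMidem : ∀ i, M i * M i = M i := by
    intro i
    have hP2 : ∀ X, P i * (P i * X) = P i * X := fun X => by rw [← mul_assoc, hidem i]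
    simp only [hMdef, mul_assoc, cancTS, hP2]
  have hMher : ∀ i, (M i)ᴴ = M i := by
    intro i
    have key : (P i)ᴴ * (S * S) = S * (S * P i) := by
      rw [hS, ← mul_assoc, hS]; exact (hsa i).symm
    have key' : (P i)ᴴ * S = S * (S * (P i * T)) := by
      have h := congrArg (fun X => X * T) key
      simpa only [mul_assoc, hST, mul_one] using h
    calc (M i)ᴴ = T * ((P i)ᴴ * S) := by
          simp only [hMdef, conjTranspose_mul, hSH, hTH, mul_assoc]
      _ = M i := by simp only [key', cancTS, hMdef, mul_assoc]
  -- det and nonzero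
  have hMdet : ∀ i, (M i).det = 0 := by
    intro i
    have hL : L i ≠ ⊥ := by
      intro h
      have h1 := hL1 i
      rw [h] at h1
      simp at h1
    obtain ⟨x, hxL, hx0⟩ := Submodule.ne_bot_iff (L i) |>.mp hL
    have hPx : P i *ᵥ x = 0 := by
      have : x ∈ LinearMap.ker (Matrix.toLin' (P i)) := by rw [hker i]; exact hxL
      simpa [Matrix.toLin'_apply] using this
    have hPdet : (P i).det = 0 := (Matrix.exists_mulVec_eq_zero_iff).mp ⟨x, hx0, hPx⟩
    simp [hMdef, det_mul, hPdet]
  have hMne : ∀ i, M i ≠ 0 := by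
    intro i h
    have hP0 : P i = 0 := by rw [hPM i, h, Matrix.zero_mul, Matrix.mul_zero]
    have hLt : L i = ⊤ := by
      rw [← hker i, hP0]
      simp [map_zero]
    have h1 := hL1 i
    rw [hLt] at h1
    have h2 : Module.finrank ℂ (⊤ : Submodule ℂ (Fin 2 → ℂ)) = 2 := by
      simpa using (Module.finrank_fin_fun ℂ (n := 2))
    omega
  have hMtr : ∀ i, (M i).trace = 1 := fun i => trace_eq_one (hMidem i) (hMdet i) (hMne i)
  have hMinj : ∀ i k, M i = M k → i = k := by
    intro i k h
    apply hLd
    rw [← hker i, ← hker k, hPM i, hPM k, h]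
  have hMsum : ∑ i, (a i : ℂ) • M i = c • 1 := by
    have h1 : ∑ i, (a i : ℂ) • M i = S * (∑ i, (a i : ℂ) • P i) * T := by
      rw [Finset.mul_sum, Finset.sum_mul]
      exact Finset.sum_congr rfl fun i _ => by
        simp [hMdef, Matrix.mul_smul, Matrix.smul_mul]
    rw [h1, hsum]
    simp [Matrix.mul_smul, Matrix.smul_mul, hST]
  have hc : c * 2 = ∑ i, (a i : ℂ) := by
    have h := congrArg Matrix.trace hMsum
    simpa [Matrix.trace_sum, Matrix.trace_smul, hMtr, Matrix.trace_one, smul_eq_mul,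
      mul_comm] using h.symm
  set Q : Fin n → Matrix (Fin 2) (Fin 2) ℂ := fun i => M i - (1/2 : ℂ) • 1 with hQdef
  have hQher : ∀ i, (Q i)ᴴ = Q i := by
    intro i
    simp [hQdef, Matrix.conjTranspose_sub, Matrix.conjTranspose_smul, hMher i]
  have hQsq : ∀ i, Q i * Q i = (1/4 : ℂ) • 1 := by
    intro i
    have expand : Q i * Q i = M i * M i - M i + (1/4 : ℂ) • 1 := by
      simp only [hQdef, sub_mul, mul_sub, Matrix.smul_mul, Matrix.mul_smul, smul_smul,
        Matrix.one_mul, Matrix.mul_one]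
      module
    rw [expand, hMidem i]
    simp
  have hQtr : ∀ i, (Q i).trace = 0 := by
    intro i
    simp [hQdef, Matrix.trace_sub, Matrix.trace_smul, hMtr i, Matrix.trace_one, smul_eq_mul]
  have hQsum : ∑ i, (a i : ℂ) • Q i = 0 := by
    simp only [hQdef, smul_sub, Finset.sum_sub_distrib, hMsum, smul_smul, ← Finset.sum_smul]
    rw [sub_eq_zero]
    congr 1
    rw [← Finset.sum_mul]
    linear_combination hc / 2
  have hQinj : ∀ i k, Q i = Q k → i = k := by
    intro i k h
    exact hMinj i k (by simpa [hQdef, sub_left_inj] using h)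
  -- entry facts
  have f1 : ∀ i, ((Q i) 0 0).im = 0 := by
    intro i
    have h := congrFun (congrFun (hQher i) 0) 0
    rw [Matrix.conjTranspose_apply] at h
    have h2 := congrArg Complex.im h
    simp only [Complex.star_def, Complex.conj_im] at h2
    linarith
  have f2 : ∀ i, (Q i) 1 0 = star ((Q i) 0 1) := by
    intro i
    have h := congrFun (congrFun (hQher i) 1) 0
    rw [Matrix.conjTranspose_apply] at h
    exact h.symm
  have f3 : ∀ i, (Q i) 1 1 = -(Q i) 0 0 := by
    intro i
    have h := hQtr i
    rw [Matrix.trace_fin_two] at h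
    linear_combination h
  have f4 : ∀ i, (Q i 0 0) * (Q i 0 0) + (Q i 0 1) * star (Q i 0 1) = 1/4 := by
    intro i
    have h := congrFun (congrFun (hQsq i) 0) 0
    rw [← f2 i]
    simpa [Matrix.mul_apply, Fin.sum_univ_two, Matrix.one_apply] using h
  -- the vectors in ℝ³
  set v : Fin n → EuclideanSpace ℝ (Fin 3) := fun i =>
    (WithLp.equiv 2 (Fin 3 → ℝ)).symm ![(Q i 0 0).re, (Q i 0 1).re, (Q i 0 1).im] with hvdef
  have hvinner : ∀ i k, (inner ℝ (v i) (v k) : ℝ) =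
      (Q i 0 0).re * (Q k 0 0).re + (Q i 0 1).re * (Q k 0 1).re
        + (Q i 0 1).im * (Q k 0 1).im := by
    intro i k
    simp [hvdef, PiLp.inner_apply, Fin.sum_univ_three, WithLp.equiv_symm_apply, PiLp.toLp_apply, mul_comm]
  have hvnormsq : ∀ i, (inner ℝ (v i) (v i) : ℝ) = 1/4 := by
    intro i
    have h := congrArg Complex.re (f4 i)
    rw [hvinner]
    simp only [Complex.add_re, Complex.mul_re, Complex.star_def, Complex.conj_re,
      Complex.conj_im, f1 i] at h
    norm_num at h ⊢
    linarith
  have hvnorm : ∀ i, ‖v i‖ = 1/2 := by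
    intro i
    have h : ‖v i‖ * ‖v i‖ = 1/4 := by rw [← real_inner_self_eq_norm_mul_norm, hvnormsq]
    have h2 : (‖v i‖ - 1/2) * (‖v i‖ + 1/2) = 0 := by ring_nf; linarith
    rcases mul_eq_zero.mp h2 with h3 | h3
    · linarith
    · have := norm_nonneg (v i); linarith
  have hvinj : ∀ i k, v i = v k → i = k := by
    intro i k h
    apply hQinj
    have h0 : (Q i 0 0).re = (Q k 0 0).re := congrFun (congrArg (WithLp.equiv 2 (Fin 3 → ℝ)) h) 0
    have h1 : (Q i 0 1).re = (Q k 0 1).re := congrFun (congrArg (WithLp.equiv 2 (Fin 3 → ℝ)) h) 1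
    have h2 : (Q i 0 1).im = (Q k 0 1).im := congrFun (congrArg (WithLp.equiv 2 (Fin 3 → ℝ)) h) 2
    have e00 : Q i 0 0 = Q k 0 0 := by
      rw [Complex.ext_iff]; exact ⟨h0, by rw [f1 i, f1 k]⟩
    have e01 : Q i 0 1 = Q k 0 1 := by rw [Complex.ext_iff]; exact ⟨h1, h2⟩
    ext r s
    fin_cases r <;> fin_cases s
    · exact e00
    · exact e01
    · show Q i 1 0 = Q k 1 0
      rw [f2 i, f2 k, e01]
    · show Q i 1 1 = Q k 1 1
      rw [f3 i, f3 k, e00]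
  have hvsum : ∑ i, a i • v i = 0 := by
    have h00 := fun r s => congrFun (congrFun hQsum r) s
    ext t
    have hs : ∀ (r s : Fin 2), ∑ i, a i * (Q i r s).re = 0 := by
      intro r s
      have := congrArg Complex.re (h00 r s)
      simpa [Matrix.sum_apply, Matrix.smul_apply, smul_eq_mul, Complex.re_sum,
        Complex.re_ofReal_mul] using this
    have hs' : ∀ (r s : Fin 2), ∑ i, a i * (Q i r s).im = 0 := by
      intro r s
      have := congrArg Complex.im (h00 r s)
      simpa [Matrix.sum_apply, Matrix.smul_apply, smul_eq_mul, Complex.im_sum,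
        Complex.im_ofReal_mul] using this
    have hsum_t : (∑ i, a i • v i) t = ∑ i, a i * (v i t) := by
      rw [WithLp.ofLp_sum, Finset.sum_apply]
      exact Finset.sum_congr rfl fun i _ => rfl
    rw [hsum_t]
    show _ = (0 : EuclideanSpace ℝ (Fin 3)) t
    fin_cases t
    · simpa [hvdef] using hs 0 0
    · simpa [hvdef] using hs 0 1
    · simpa [hvdef] using hs' 0 1
  intro j
  have key : ∀ i, |(inner ℝ (v i) (v j) : ℝ)| ≤ 1/4 := by
    intro i
    have h := abs_real_inner_le_norm (v i) (v j)
    rw [hvnorm i, hvnorm j] at h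
    linarith
  have hid : a j * (1/4) = -∑ i ∈ Finset.univ.erase j, a i * (inner ℝ (v i) (v j) : ℝ) := by
    have h0 : (inner ℝ (∑ i, a i • v i) (v j) : ℝ) = 0 := by rw [hvsum]; simp
    rw [sum_inner] at h0
    simp only [real_inner_smul_left] at h0
    rw [← Finset.sum_erase_add _ _ (Finset.mem_univ j), hvnormsq j] at h0
    linarith
  have hcase : ∀ i, |(inner ℝ (v i) (v j) : ℝ)| = 1/4 → v i = v j ∨ v i = -v j := by
    intro i hi
    rcases (abs_eq (by norm_num : (0:ℝ) ≤ 1/4)).mp hi with h | h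
    · left
      have heq : (inner ℝ (v i) (v j) : ℝ) = ‖v i‖ * ‖v j‖ := by
        rw [hvnorm i, hvnorm j]; linarith
      have h2 := inner_eq_norm_mul_iff_real.mp heq
      rw [hvnorm i, hvnorm j] at h2
      exact smul_right_injective _ (by norm_num : (1/2 : ℝ) ≠ 0) h2
    · right
      have heq : (inner ℝ (v i) (-v j) : ℝ) = ‖v i‖ * ‖-v j‖ := by
        rw [inner_neg_right, norm_neg, hvnorm i, hvnorm j]; linarith
      have h2 := inner_eq_norm_mul_iff_real.mp heq
      rw [norm_neg, hvnorm i, hvnorm j] at h2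
      exact smul_right_injective _ (by norm_num : (1/2 : ℝ) ≠ 0) h2
  have hstrict : ∃ i ∈ Finset.univ.erase j,
      |a i| * |(inner ℝ (v i) (v j) : ℝ)| < |a i| * (1/4) := by
    by_contra hc
    push_neg at hc
    have hall : ∀ i ∈ Finset.univ.erase j, v i = v j ∨ v i = -v j := by
      intro i hi
      apply hcase
      have hai : 0 < |a i| := abs_pos.mpr (ha i)
      have h3 : (1:ℝ)/4 ≤ |(inner ℝ (v i) (v j) : ℝ)| :=
        le_of_mul_le_mul_left (by linarith [hc i hi]) hai
      exact le_antisymm (key i) h3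
    have hcard : 1 < (Finset.univ.erase j).card := by
      rw [Finset.card_erase_of_mem (Finset.mem_univ j), Finset.card_univ, Fintype.card_fin]
      omega
    obtain ⟨i₁, hi₁, i₂, hi₂, hne⟩ := Finset.one_lt_card.mp hcard
    rcases hall i₁ hi₁ with h1 | h1 <;> rcases hall i₂ hi₂ with h2 | h2
    · exact Finset.ne_of_mem_erase hi₁ (hvinj i₁ j h1)
    · exact Finset.ne_of_mem_erase hi₁ (hvinj i₁ j h1)
    · exact Finset.ne_of_mem_erase hi₂ (hvinj i₂ j h2)
    · exact hne (hvinj i₁ i₂ (h1.trans h2.symm))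
  have hfinal : |a j| * (1/4) < (∑ i ∈ Finset.univ.erase j, |a i|) * (1/4) := by
    calc |a j| * (1/4) = |a j * (1/4)| := by rw [abs_mul, abs_of_nonneg (by norm_num : (0:ℝ) ≤ 1/4)]
      _ = |∑ i ∈ Finset.univ.erase j, a i * (inner ℝ (v i) (v j) : ℝ)| := by
          rw [hid, abs_neg]
      _ ≤ ∑ i ∈ Finset.univ.erase j, |a i * (inner ℝ (v i) (v j) : ℝ)| :=
          Finset.abs_sum_le_sum_abs _ _
      _ = ∑ i ∈ Finset.univ.erase j, |a i| * |(inner ℝ (v i) (v j) : ℝ)| := by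
          exact Finset.sum_congr rfl fun i _ => abs_mul _ _
      _ < ∑ i ∈ Finset.univ.erase j, |a i| * (1/4) :=
          Finset.sum_lt_sum (fun i _ => mul_le_mul_of_nonneg_left (key i) (abs_nonneg _)) hstrict
      _ = (∑ i ∈ Finset.univ.erase j, |a i|) * (1/4) := by rw [Finset.sum_mul]
  linarith
end

section
/- Let n ≥ 3 and let L_1,…,L_n be pairwise distinct complex lines through the origin of ℂ². Let W ⊆ (M_2(ℂ))ⁿ be the set of n-tuples (A_1,…,A_n) of 2×2 complex matrices such that L_i ⊆ ker A_i for every i and Σ_i A_i is a complex scalar multiple of the identity. Then W is a complex linear subspace of complex dimension 2n−3, and the complex-linear map W → ℂⁿ sending (A_1,…,A_n) to (tr A_1,…,tr A_n) is surjective. Consequently, for every (a_1,…,a_n) ∈ ℂⁿ the set of tuples in W with tr A_i = a_i for all i is a nonempty affine subspace of complex dimension n−3. -/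
open Matrix Finset

noncomputable section StdConnAux

/-- The linear functional with kernel the line spanned by `v`. -/
def StdConn.ell (v : Fin 2 → ℂ) : Fin 2 → ℂ := ![v 1, -(v 0)]

/-- `w ↦ (vecMulVec (w i) (ℓ i))ᵢ` as a linear map. -/
def StdConn.Phi {n : ℕ} (ℓ : Fin n → Fin 2 → ℂ) :
    (Fin n → Fin 2 → ℂ) →ₗ[ℂ] (Fin n → Matrix (Fin 2) (Fin 2) ℂ) where
  toFun w := fun i => vecMulVec (w i) (ℓ i)
  map_add' a b := by
    funext i p q
    simp [vecMulVec_apply]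
    ring
  map_smul' c a := by
    funext i p q
    simp [vecMulVec_apply]
    ring

/-- Summation as a linear map. -/
def StdConn.sumL {n : ℕ} : (Fin n → Matrix (Fin 2) (Fin 2) ℂ) →ₗ[ℂ] Matrix (Fin 2) (Fin 2) ℂ where
  toFun A := ∑ i, A i
  map_add' a b := by simp [Finset.sum_add_distrib]
  map_smul' c a := by simp [Finset.smul_sum]

/-- Linear map whose kernel is the scalar matrices. -/
def StdConn.qmap : Matrix (Fin 2) (Fin 2) ℂ →ₗ[ℂ] (Fin 3 → ℂ) where
  toFun A := ![A 0 1, A 1 0, A 0 0 - A 1 1]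
  map_add' a b := by funext r; fin_cases r <;> simp <;> ring
  map_smul' c a := by funext r; fin_cases r <;> simp <;> ring

/-- Entrywise trace as a linear map. -/
def StdConn.trmap {n : ℕ} : (Fin n → Matrix (Fin 2) (Fin 2) ℂ) →ₗ[ℂ] (Fin n → ℂ) where
  toFun A := fun i => (A i).trace
  map_add' a b := by funext i; simp
  map_smul' c a := by funext i; simp

namespace StdConn

lemma qmap_eq_zero_iff (A : Matrix (Fin 2) (Fin 2) ℂ) :
    qmap A = 0 ↔ ∃ c : ℂ, A = c • 1 := by
  constructor
  · intro h
    have h0 := congrFun h 0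
    have h1 := congrFun h 1
    have h2 := congrFun h 2
    simp [qmap] at h0 h1 h2
    have h2' : A 1 1 = A 0 0 := by linear_combination -h2
    refine ⟨A 0 0, ?_⟩
    ext p q
    fin_cases p <;> fin_cases q <;>
      simp [Matrix.one_apply, h0, h1, h2']
  · rintro ⟨c, rfl⟩
    funext r
    fin_cases r <;> simp [qmap, Matrix.one_apply]

lemma rep {v : Fin 2 → ℂ} (hv : v ≠ 0) {A : Matrix (Fin 2) (Fin 2) ℂ}
    (hA : A.mulVec v = 0) : ∃ w : Fin 2 → ℂ, A = vecMulVec w (ell v) := by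
  have key : ∀ p, A p 0 * v 0 + A p 1 * v 1 = 0 := by
    intro p
    have := congrFun hA p
    simpa [Matrix.mulVec, dotProduct, Fin.sum_univ_two] using this
  by_cases h1 : v 1 ≠ 0
  · refine ⟨fun p => A p 0 / v 1, ?_⟩
    ext p q
    fin_cases q <;> simp [vecMulVec_apply, ell]
    · field_simp
    · have := key p
      field_simp
      linear_combination this
  · push_neg at h1
    have h0 : v 0 ≠ 0 := by
      intro h0; apply hv; funext q; fin_cases q <;> simp [h0, h1]
    refine ⟨fun p => -(A p 1) / v 0, ?_⟩
    ext p q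
    fin_cases q <;> simp [vecMulVec_apply, ell, h1]
    · have := key p
      rw [h1] at this
      simp at this
      rcases this with h | h
      · exact h
      · exact absurd h h0
    · field_simp

lemma vecMulVec_mulVec' (w ℓ v : Fin 2 → ℂ) :
    (vecMulVec w ℓ).mulVec v = (ℓ ⬝ᵥ v) • w := by
  funext p
  simp [Matrix.mulVec, dotProduct, vecMulVec_apply, Fin.sum_univ_two]
  ring

lemma trace_vecMulVec (w ℓ : Fin 2 → ℂ) :
    (vecMulVec w ℓ).trace = w 0 * ℓ 0 + w 1 * ℓ 1 := by
  simp [Matrix.trace_fin_two, vecMulVec_apply]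

lemma ell_dot (v : Fin 2 → ℂ) : ell v ⬝ᵥ v = 0 := by
  simp [ell, dotProduct, Fin.sum_univ_two]
  ring

lemma Phi_injective {n : ℕ} {ℓ : Fin n → Fin 2 → ℂ} (hℓ : ∀ i, ℓ i ≠ 0) :
    Function.Injective (Phi ℓ) := by
  rw [← LinearMap.ker_eq_bot]
  rw [LinearMap.ker_eq_bot']
  intro w hw
  funext i p
  obtain ⟨q, hq⟩ : ∃ q, ℓ i q ≠ 0 := by
    by_contra h
    push_neg at h
    exact hℓ i (funext h)
  have := congrFun (congrFun (congrFun hw i) p) q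
  simp [Phi, vecMulVec_apply] at this
  rcases this with h | h
  · simpa using h
  · exact absurd h hq

lemma Phi_single {n : ℕ} (ℓ : Fin n → Fin 2 → ℂ) (j : Fin n) (u : Fin 2 → ℂ) :
    sumL (Phi ℓ (Pi.single j u)) = vecMulVec u (ℓ j) := by
  simp only [Phi, sumL, LinearMap.coe_mk, AddHom.coe_mk]
  rw [Finset.sum_eq_single j]
  · simp
  · intro b _ hb
    ext p q
    simp [Pi.single_eq_of_ne hb, vecMulVec_apply]
  · simp

end StdConn

end StdConnAux
open StdConn in
set_option maxHeartbeats 1000000 in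
set_option synthInstance.maxHeartbeats 400000 in
/-- For `n ≥ 3` pairwise distinct complex lines `L i` through the origin of `ℂ²`,
the set `W` of tuples `(A 1, …, A n)` of `2×2` complex matrices with `L i ⊆ ker (A i)`
and `∑ i, A i` a scalar multiple of the identity is a complex subspace of dimension
`2n − 3`; the trace map `W → ℂⁿ` is surjective; and each fiber of the trace map is a
nonempty affine subspace of complex dimension `n − 3`. -/
theorem standard_connection_space_dimension {n : ℕ} (hn : 3 ≤ n)
    (L : Fin n → Submodule ℂ (Fin 2 → ℂ))
    (hL1 : ∀ i, Module.finrank ℂ (L i) = 1) (hLd : Function.Injective L) :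
    ∃ W : Submodule ℂ (Fin n → Matrix (Fin 2) (Fin 2) ℂ),
      (↑W : Set (Fin n → Matrix (Fin 2) (Fin 2) ℂ)) =
        {A | (∀ i, L i ≤ LinearMap.ker (Matrix.toLin' (A i))) ∧
          ∃ c : ℂ, ∑ i, A i = c • (1 : Matrix (Fin 2) (Fin 2) ℂ)} ∧
      Module.finrank ℂ W = 2 * n - 3 ∧
      (∀ a : Fin n → ℂ, ∃ A ∈ W, ∀ i, (A i).trace = a i) ∧
      (∀ a : Fin n → ℂ, ∃ A₀ ∈ W, (∀ i, (A₀ i).trace = a i) ∧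
        ∃ W₀ : Submodule ℂ (Fin n → Matrix (Fin 2) (Fin 2) ℂ),
          Module.finrank ℂ W₀ = n - 3 ∧
          {A | A ∈ W ∧ ∀ i, (A i).trace = a i} = {A | ∃ B ∈ W₀, A = A₀ + B}) := by
  classical
  -- choose a nonzero vector in each line
  have hv' : ∀ i, ∃ v : Fin 2 → ℂ, v ∈ L i ∧ v ≠ 0 := by
    intro i
    have hpos : 0 < Module.finrank ℂ (L i) := by rw [hL1]; norm_num
    have : Nontrivial (L i) := Module.finrank_pos_iff.mp hpos
    obtain ⟨x, hx⟩ := exists_ne (0 : L i)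
    exact ⟨(x : Fin 2 → ℂ), x.2, fun h => hx (Subtype.ext h)⟩
  choose v hvL hv0 using hv'
  have hspan : ∀ i, L i = Submodule.span ℂ {v i} := by
    intro i
    refine (Submodule.eq_of_le_of_finrank_le ?_ ?_).symm
    · rw [Submodule.span_singleton_le_iff_mem]; exact hvL i
    · rw [hL1 i, finrank_span_singleton (hv0 i)]
  set ℓ : Fin n → Fin 2 → ℂ := fun i => StdConn.ell (v i) with hℓdef
  have hℓ0 : ∀ i q, ℓ i q = (![v i 1, -(v i 0)]) q := fun i q => rfl
  have hℓa : ∀ i, ℓ i 0 = v i 1 := fun i => rfl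
  have hℓb : ∀ i, ℓ i 1 = -(v i 0) := fun i => rfl
  have hℓne : ∀ i, ℓ i ≠ 0 := by
    intro i h
    apply hv0 i
    have h0 := congrFun h 0
    have h1 := congrFun h 1
    rw [hℓa] at h0
    rw [hℓb] at h1
    funext q
    fin_cases q
    · simpa using h1
    · simpa using h0
  -- distinctness in coordinates
  have hd : ∀ i j, i ≠ j → v i 0 * v j 1 - v j 0 * v i 1 ≠ 0 := by
    intro i j hij heq
    apply hij
    apply hLd
    rw [hspan i, hspan j]
    have : ∃ c : ℂ, c ≠ 0 ∧ v i = c • v j := by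
      by_cases hj1 : v j 1 = 0
      · have hj0 : v j 0 ≠ 0 := by
          intro h; exact hv0 j (by funext q; fin_cases q <;> simp [h, hj1])
        have hi1 : v i 1 = 0 := by
          have : v j 0 * v i 1 = 0 := by linear_combination -heq + v i 0 * hj1
          rcases mul_eq_zero.mp this with h | h
          · exact absurd h hj0
          · exact h
        refine ⟨v i 0 / v j 0, ?_, ?_⟩
        · intro h
          apply hv0 i
          have : v i 0 = 0 := by
            field_simp at h; simpa using h
          funext q; fin_cases q <;> simp [this, hi1]
        · funext q; fin_cases q <;> simp [hi1, hj1]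
          field_simp
      · refine ⟨v i 1 / v j 1, ?_, ?_⟩
        · intro h
          apply hv0 i
          have h1 : v i 1 = 0 := by field_simp at h; simpa using h
          have h0 : v i 0 = 0 := by
            have : v i 0 * v j 1 = 0 := by linear_combination heq + v j 0 * h1
            rcases mul_eq_zero.mp this with h | h
            · exact h
            · exact absurd h hj1
          funext q; fin_cases q <;> simp [h0, h1]
        · funext q; fin_cases q <;> simp
          · field_simp
            linear_combination heq
          · field_simp
    obtain ⟨c, hc, hvij⟩ := this
    rw [hvij, Submodule.span_singleton_smul_eq (isUnit_iff_ne_zero.mpr hc)]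
  -- the parametrizing kernel
  set Tq : (Fin n → Fin 2 → ℂ) →ₗ[ℂ] (Fin 3 → ℂ) :=
    StdConn.qmap ∘ₗ StdConn.sumL ∘ₗ StdConn.Phi ℓ with hTqdef
  set V : Submodule ℂ (Fin n → Fin 2 → ℂ) := LinearMap.ker Tq with hVdef
  set W : Submodule ℂ (Fin n → Matrix (Fin 2) (Fin 2) ℂ) :=
    Submodule.map (StdConn.Phi ℓ) V with hWdef
  have hPhiApp : ∀ (w : Fin n → Fin 2 → ℂ) i,
      (StdConn.Phi ℓ) w i = vecMulVec (w i) (ℓ i) := fun _ _ => rfl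
  have hsumL : ∀ (A : Fin n → Matrix (Fin 2) (Fin 2) ℂ), StdConn.sumL A = ∑ i, A i :=
    fun _ => rfl
  have hq1 : StdConn.qmap (1 : Matrix (Fin 2) (Fin 2) ℂ) = 0 := by
    funext r; fin_cases r <;> simp [StdConn.qmap, Matrix.one_apply]
  -- membership characterization
  have hmemW : ∀ A, A ∈ W ↔ ((∀ i, L i ≤ LinearMap.ker (Matrix.toLin' (A i))) ∧
      ∃ c : ℂ, ∑ i, A i = c • (1 : Matrix (Fin 2) (Fin 2) ℂ)) := by
    intro A
    constructor
    · rintro ⟨w, hw, rfl⟩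
      constructor
      · intro i
        rw [hspan i, Submodule.span_singleton_le_iff_mem, LinearMap.mem_ker,
          Matrix.toLin'_apply, hPhiApp, vecMulVec_mulVec', ell_dot, zero_smul]
      · rw [← qmap_eq_zero_iff]
        have : Tq w = 0 := hw
        simpa [hTqdef, hsumL] using this
    · rintro ⟨h1, c, hc⟩
      have hrep : ∀ i, ∃ w : Fin 2 → ℂ, A i = vecMulVec w (ℓ i) := by
        intro i
        apply rep (hv0 i)
        have := h1 i
        rw [hspan i, Submodule.span_singleton_le_iff_mem, LinearMap.mem_ker,
          Matrix.toLin'_apply] at this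
        exact this
      choose w hw using hrep
      refine ⟨w, ?_, by funext i; exact (hw i).symm⟩
      show Tq w = 0
      have hA : (StdConn.Phi ℓ) w = A := by funext i; exact (hw i).symm
      have : Tq w = StdConn.qmap (∑ i, A i) := by
        simp only [hTqdef, LinearMap.comp_apply, hA, hsumL]
      rw [this, hc, _root_.map_smul, hq1, smul_zero]
  -- surjectivity of Tq
  have hTsurj : Function.Surjective Tq := by
    intro t
    set j0 : Fin n := ⟨0, by omega⟩
    set j1 : Fin n := ⟨1, by omega⟩
    have hj01 : j0 ≠ j1 := by simp [j0, j1, Fin.ext_iff]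
    set x0 := v j0 0; set y0 := v j0 1; set x1 := v j1 0; set y1 := v j1 1
    have hD : x0 * y1 - x1 * y0 ≠ 0 := hd j0 j1 hj01
    set M : Matrix (Fin 2) (Fin 2) ℂ := Matrix.of ![![t 2, t 0], ![t 1, 0]] with hMdef
    set D := x0 * y1 - x1 * y0
    set w0 : Fin 2 → ℂ := fun p => (M p 0 * (-x1) - M p 1 * y1) / D
    set w1 : Fin 2 → ℂ := fun p => (y0 * M p 1 + x0 * M p 0) / D
    refine ⟨Pi.single j0 w0 + Pi.single j1 w1, ?_⟩
    have hsum : StdConn.sumL ((StdConn.Phi ℓ) (Pi.single j0 w0 + Pi.single j1 w1)) =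
        vecMulVec w0 (ℓ j0) + vecMulVec w1 (ℓ j1) := by
      rw [map_add, map_add, Phi_single, Phi_single]
    have hM : vecMulVec w0 (ℓ j0) + vecMulVec w1 (ℓ j1) = M := by
      ext p q
      fin_cases q <;>
        simp only [Matrix.add_apply, vecMulVec_apply, w0, w1] <;>
        simp [hℓdef, StdConn.ell] <;>
        field_simp <;> ring
    have : Tq (Pi.single j0 w0 + Pi.single j1 w1) = StdConn.qmap M := by
      simp only [hTqdef, LinearMap.comp_apply, hsum, hM]
    rw [this]
    funext r
    fin_cases r <;> simp [StdConn.qmap, hMdef]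
  -- dimension of V and W
  have hVrank : Module.finrank ℂ V = 2 * n - 3 := by
    have h1 := LinearMap.finrank_range_add_finrank_ker Tq
    have h2 : LinearMap.range Tq = ⊤ := LinearMap.range_eq_top.mpr hTsurj
    have h3 : Module.finrank ℂ (Fin n → Fin 2 → ℂ) = 2 * n := by
      rw [Module.finrank_pi_fintype]
      simp [Module.finrank_pi]
      ring
    rw [h2, h3] at h1
    rw [← hVdef] at h1
    have h4 : Module.finrank ℂ (⊤ : Submodule ℂ (Fin 3 → ℂ)) = 3 := by
      rw [finrank_top, Module.finrank_pi]; simp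
    rw [h4] at h1
    omega
  have hPhiInj : Function.Injective (StdConn.Phi ℓ) := Phi_injective hℓne
  have hWrank : Module.finrank ℂ W = 2 * n - 3 := by
    rw [← hVrank]
    exact (LinearEquiv.finrank_eq
      (Submodule.equivMapOfInjective (StdConn.Phi ℓ) hPhiInj V)).symm
  -- trace surjectivity
  have htrsurj : ∀ a : Fin n → ℂ, ∃ A ∈ W, ∀ i, (A i).trace = a i := by
    intro a
    -- step 1: tuple with the right traces
    set w' : Fin n → Fin 2 → ℂ := fun i =>
      if h : v i 1 = 0 then ![0, -(a i) / v i 0] else ![a i / v i 1, 0] with hw'def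
    have hw'tr : ∀ i, w' i 0 * v i 1 - w' i 1 * v i 0 = a i := by
      intro i
      by_cases h : v i 1 = 0
      · have h0 : v i 0 ≠ 0 := by
          intro h0; exact hv0 i (by funext q; fin_cases q <;> simp [h0, h])
        simp only [hw'def, dif_pos h]
        simp [h]
        field_simp
      · simp only [hw'def, dif_neg h]
        simp
        field_simp
    -- step 2: correction
    set emb : Fin 3 → Fin n := Fin.castLE hn with hembdef
    have hembinj : Function.Injective emb := Fin.castLE_injective hn
    set Q : Matrix (Fin 3) (Fin 3) ℂ :=
      Matrix.of (fun r j => StdConn.qmap (vecMulVec (v (emb j)) (ℓ (emb j))) r) with hQdef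
    have hQdet : Q.det = 2 * (v (emb 0) 0 * v (emb 1) 1 - v (emb 1) 0 * v (emb 0) 1) *
        (v (emb 0) 0 * v (emb 2) 1 - v (emb 2) 0 * v (emb 0) 1) *
        (v (emb 1) 0 * v (emb 2) 1 - v (emb 2) 0 * v (emb 1) 1) := by
      rw [Matrix.det_fin_three]
      simp only [hQdef, Matrix.of_apply, StdConn.qmap, vecMulVec_apply, hℓa, hℓb,
        LinearMap.coe_mk, AddHom.coe_mk, Matrix.cons_val_zero, Matrix.cons_val_one,
        Matrix.head_cons, Matrix.cons_val_two, Matrix.tail_cons]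
      ring
    have hQdet0 : IsUnit Q.det := by
      rw [hQdet, isUnit_iff_ne_zero]
      have h01 : emb 0 ≠ emb 1 := fun h => by simpa using hembinj h
      have h02 : emb 0 ≠ emb 2 := fun h => by simpa using hembinj h
      have h12 : emb 1 ≠ emb 2 := fun h => by simpa using hembinj h
      exact mul_ne_zero (mul_ne_zero (mul_ne_zero two_ne_zero (hd _ _ h01)) (hd _ _ h02))
        (hd _ _ h12)
    set s : Fin 3 → ℂ := -(Tq w') with hsdef
    set t : Fin 3 → ℂ := Q⁻¹.mulVec s with htdef
    have hQt : Q.mulVec t = s := by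
      rw [htdef, Matrix.mulVec_mulVec, Matrix.mul_nonsing_inv _ hQdet0, Matrix.one_mulVec]
    set u : Fin n → Fin 2 → ℂ := ∑ j : Fin 3, Pi.single (emb j) (t j • v (emb j)) with hudef
    have hui : ∀ i, u i = (∑ j : Fin 3, if i = emb j then t j else 0) • v i := by
      intro i
      have hterm : ∀ j : Fin 3, (Pi.single (emb j) (t j • v (emb j)) : Fin n → Fin 2 → ℂ) i =
          (if i = emb j then t j else 0) • v i := by
        intro j
        rcases eq_or_ne i (emb j) with h | h
        · subst h; simp
        · simp [Pi.single_eq_of_ne h, h]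
      calc u i = ∑ j : Fin 3, (Pi.single (emb j) (t j • v (emb j)) : Fin n → Fin 2 → ℂ) i := by
            simp [hudef, Finset.sum_apply]
        _ = ∑ j : Fin 3, (if i = emb j then t j else 0) • v i :=
            Finset.sum_congr rfl (fun j _ => hterm j)
        _ = (∑ j : Fin 3, if i = emb j then t j else 0) • v i := by
            rw [Finset.sum_smul]
    have hTu : Tq u = Q.mulVec t := by
      have : Tq u = ∑ j : Fin 3, t j • StdConn.qmap (vecMulVec (v (emb j)) (ℓ (emb j))) := by
        rw [hudef]
        rw [map_sum]
        refine Finset.sum_congr rfl (fun j _ => ?_)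
        have : (StdConn.sumL ((StdConn.Phi ℓ) (Pi.single (emb j) (t j • v (emb j))))) =
            vecMulVec (t j • v (emb j)) (ℓ (emb j)) := Phi_single ℓ _ _
        have h2 : vecMulVec (t j • v (emb j)) (ℓ (emb j)) =
            t j • vecMulVec (v (emb j)) (ℓ (emb j)) := by
          ext p q; simp [vecMulVec_apply]; ring
        simp only [hTqdef, LinearMap.comp_apply, this, h2, _root_.map_smul]
      rw [this]
      funext r
      simp [Matrix.mulVec, dotProduct, hQdef, Finset.sum_apply, mul_comm]
    set wfin : Fin n → Fin 2 → ℂ := w' + u with hwfindef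
    have hwfinV : wfin ∈ V := by
      show Tq wfin = 0
      rw [hwfindef, map_add, hTu, hQt, hsdef]
      simp
    refine ⟨(StdConn.Phi ℓ) wfin, ⟨wfin, hwfinV, rfl⟩, ?_⟩
    intro i
    rw [hPhiApp, StdConn.trace_vecMulVec, hℓa, hℓb]
    have : wfin i 0 * v i 1 + wfin i 1 * -(v i 0) =
        (w' i 0 * v i 1 - w' i 1 * v i 0) +
        (u i 0 * v i 1 - u i 1 * v i 0) := by
      simp [hwfindef]; ring
    rw [this, hw'tr i, hui i]
    simp
    ring
  clear hWdef
  clear_value W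
  refine ⟨W, ?_, hWrank, htrsurj, ?_⟩
  · ext A
    simp only [SetLike.mem_coe, Set.mem_setOf_eq]
    exact hmemW A
  · intro a
    obtain ⟨A₀, hA₀W, hA₀tr⟩ := htrsurj a
    refine ⟨A₀, hA₀W, hA₀tr, W ⊓ LinearMap.ker StdConn.trmap, ?_, ?_⟩
    · -- dimension of the fiber direction
      have hτ := LinearMap.finrank_range_add_finrank_ker (StdConn.trmap.domRestrict W)
      have hrange : LinearMap.range (StdConn.trmap.domRestrict W) = ⊤ := by
        rw [LinearMap.range_eq_top]
        intro b
        obtain ⟨A, hAW, hAtr⟩ := htrsurj b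
        exact ⟨⟨A, hAW⟩, funext hAtr⟩
      have hker : LinearMap.ker (StdConn.trmap.domRestrict W) =
          Submodule.comap W.subtype (W ⊓ LinearMap.ker StdConn.trmap) := by
        ext x
        simp only [LinearMap.mem_ker, LinearMap.domRestrict_apply, Submodule.mem_comap,
          Submodule.mem_inf]
        constructor
        · intro h; exact ⟨x.2, h⟩
        · intro h; exact h.2
      have heq : Module.finrank ℂ ↥(W ⊓ LinearMap.ker StdConn.trmap) =
          Module.finrank ℂ (LinearMap.ker (StdConn.trmap.domRestrict W)) := by
        rw [hker]
        exact (LinearEquiv.finrank_eq (Submodule.comapSubtypeEquivOfLe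
          (inf_le_left : W ⊓ LinearMap.ker StdConn.trmap ≤ W))).symm
      rw [hrange, finrank_top, Module.finrank_pi] at hτ
      simp only [Fintype.card_fin] at hτ
      rw [hWrank] at hτ
      rw [heq]
      omega
    · ext A
      simp only [Set.mem_setOf_eq]
      constructor
      · rintro ⟨hAW, hAtr⟩
        refine ⟨A - A₀, ⟨Submodule.sub_mem W hAW hA₀W, ?_⟩, by abel⟩
        simp only [SetLike.mem_coe, LinearMap.mem_ker]
        funext i
        show ((A - A₀) i).trace = 0
        simp [Matrix.trace_sub, hAtr i, hA₀tr i]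
      · rintro ⟨B, ⟨hBW, hBker⟩, rfl⟩
        refine ⟨Submodule.add_mem W hA₀W hBW, fun i => ?_⟩
        have hB0 : (B i).trace = 0 := congrFun (show StdConn.trmap B = 0 from hBker) i
        show ((A₀ + B) i).trace = a i
        simp [Matrix.trace_add, hA₀tr i, hB0]
end

section
/- Let n ≥ 1 and a_1,…,a_n ∈ ℂ with a_i ∉ ℤ for all i, and set c = (a_1 + ⋯ + a_n)/2. Let M_1,…,M_n be 2×2 complex matrices such that for each i there exist linearly independent vectors u_i, v_i ∈ ℂ² with M_i u_i = u_i and M_i v_i = exp(2πi·a_i)·v_i (so M_i is diagonalizable with eigenvalues 1 and exp(2πi·a_i)), and such that M_1·M_2·⋯·M_n = exp(2πi·c)·Id. If for every subset I ⊆ {1,…,n} the number Σ_{i∈I} a_i − Σ_{i∉I} a_i is not an even integer, then there is no 1-dimensional complex subspace L ⊆ ℂ² with M_i(L) ⊆ L for all i; in particular the matrices M_1,…,M_n have no common eigenvector. -/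
open Matrix Finset

private lemma prod_scale_aux (l : List ((Matrix (Fin 2) (Fin 2) ℂ) × ℂ)) (v : Fin 2 → ℂ)
    (h : ∀ p ∈ l, p.1 *ᵥ v = p.2 • v) :
    (l.map Prod.fst).prod *ᵥ v = (l.map Prod.snd).prod • v := by
  induction l with
  | nil => simp
  | cons p l ih =>
    have h1 := h p List.mem_cons_self
    have h2 := ih fun q hq => h q (List.mem_cons_of_mem _ hq)
    simp only [List.map_cons, List.prod_cons]
    rw [← Matrix.mulVec_mulVec, h2, Matrix.mulVec_smul, h1, smul_smul,
      mul_comm]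

/-- Irreducibility of the holonomy: if `M 1, …, M n` are `2×2` complex matrices, each
diagonalizable with eigenvalues `1` and `exp(2πi a i)` where `a i ∉ ℤ`, whose product is
`exp(2πi c)·Id` with `c = (∑ a i)/2`, and if for every subset `I` of the indices
`∑_{i∈I} a i − ∑_{i∉I} a i` is not an even integer, then no complex line of `ℂ²` is
invariant under all the `M i`; in particular they have no common eigenvector. -/
theorem no_common_invariant_line {n : ℕ} (hn : 1 ≤ n) (a : Fin n → ℂ)
    (ha : ∀ i, ∀ k : ℤ, a i ≠ (k : ℂ))
    (c : ℂ) (hc : c = (∑ i, a i) / 2)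
    (M : Fin n → Matrix (Fin 2) (Fin 2) ℂ)
    (hM : ∀ i, ∃ u v : Fin 2 → ℂ, LinearIndependent ℂ ![u, v] ∧
      M i *ᵥ u = u ∧
      M i *ᵥ v = Complex.exp (2 * Real.pi * Complex.I * a i) • v)
    (hprod : (List.ofFn M).prod =
      Complex.exp (2 * Real.pi * Complex.I * c) • (1 : Matrix (Fin 2) (Fin 2) ℂ))
    (hodd : ∀ I : Finset (Fin n), ∀ k : ℤ,
      (∑ i ∈ I, a i) - (∑ i ∈ Iᶜ, a i) ≠ 2 * (k : ℂ)) :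
    (¬ ∃ L : Submodule ℂ (Fin 2 → ℂ), Module.finrank ℂ L = 1 ∧
        ∀ i, ∀ x ∈ L, M i *ᵥ x ∈ L) ∧
    (¬ ∃ v : Fin 2 → ℂ, v ≠ 0 ∧ ∀ i, ∃ μ : ℂ, M i *ᵥ v = μ • v) := by
  classical
  have core : ¬ ∃ v : Fin 2 → ℂ, v ≠ 0 ∧ ∀ i, ∃ μ : ℂ, M i *ᵥ v = μ • v := by
    rintro ⟨v, hv0, hμ⟩
    choose μ hμ using hμ
    -- each eigenvalue is 1 or exp(2πi a i)
    have hμ12 : ∀ i, μ i = 1 ∨ μ i = Complex.exp (2 * Real.pi * Complex.I * a i) := by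
      intro i
      obtain ⟨u, w, hli, hu, hw⟩ := hM i
      set e := Complex.exp (2 * Real.pi * Complex.I * a i) with he
      have hcard : Fintype.card (Fin 2) = Module.finrank ℂ (Fin 2 → ℂ) := by simp
      let B := basisOfLinearIndependentOfCardEqFinrank hli hcard
      have hB : ⇑B = ![u, w] := coe_basisOfLinearIndependentOfCardEqFinrank hli hcard
      set s := B.repr v 0 with hs
      set t := B.repr v 1 with ht
      have hv : v = s • u + t • w := by
        have h0 := B.sum_repr v
        rw [Fin.sum_univ_two, hB] at h0
        rw [← h0]
        simp [hs, ht]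
      have h1 : M i *ᵥ v = s • u + (e * t) • w := by
        rw [hv, Matrix.mulVec_add, Matrix.mulVec_smul, Matrix.mulVec_smul, hu, hw,
          smul_smul, mul_comm t e]
      have h2 : M i *ᵥ v = (μ i * s) • u + (μ i * t) • w := by
        rw [hμ i, hv, smul_add, smul_smul, smul_smul]
      rw [h1] at h2
      have hzero : ∑ j, (![s - μ i * s, e * t - μ i * t]) j • (![u, w]) j = 0 := by
        rw [Fin.sum_univ_two]
        simp only [Matrix.cons_val_zero, Matrix.cons_val_one, Matrix.head_cons]
        have : (s - μ i * s) • u + (e * t - μ i * t) • w =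
            (s • u + (e * t) • w) - ((μ i * s) • u + (μ i * t) • w) := by
          module
        rw [this, h2, sub_self]
      have hcoef := Fintype.linearIndependent_iff.mp hli _ hzero
      have c0 : s - μ i * s = 0 := by simpa using hcoef 0
      have c1 : e * t - μ i * t = 0 := by simpa using hcoef 1
      by_cases hs0 : s = 0
      · have ht0 : t ≠ 0 := by
          intro ht0
          apply hv0
          rw [hv, hs0, ht0, zero_smul, zero_smul, add_zero]
        right
        have hz : (e - μ i) * t = 0 := by linear_combination c1
        exact (sub_eq_zero.mp ((mul_eq_zero.mp hz).resolve_right ht0)).symm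
      · left
        have hz : s * (1 - μ i) = 0 := by linear_combination c0
        exact (sub_eq_zero.mp ((mul_eq_zero.mp hz).resolve_left hs0)).symm
    -- product of eigenvalues
    have hPv : (List.ofFn M).prod *ᵥ v = (∏ i, μ i) • v := by
      have h := prod_scale_aux (List.ofFn (fun i => (M i, μ i))) v
        (by
          intro p hp
          rw [List.mem_ofFn] at hp
          obtain ⟨i, rfl⟩ := hp
          exact hμ i)
      simpa [List.map_ofFn, Function.comp_def, List.prod_ofFn] using h
    have hPv' : (List.ofFn M).prod *ᵥ v =
        Complex.exp (2 * Real.pi * Complex.I * c) • v := by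
      rw [hprod, Matrix.smul_mulVec, Matrix.one_mulVec]
    have hprodμ : ∏ i, μ i = Complex.exp (2 * Real.pi * Complex.I * c) := by
      have h := hPv.symm.trans hPv'
      have h2 : (∏ i, μ i - Complex.exp (2 * Real.pi * Complex.I * c)) • v = 0 := by
        rw [sub_smul, h, sub_self]
      rcases smul_eq_zero.mp h2 with h3 | h3
      · exact sub_eq_zero.mp h3
      · exact absurd h3 hv0
    -- the subset of indices with nontrivial eigenvalue
    set I : Finset (Fin n) := Finset.univ.filter (fun i => μ i ≠ 1) with hI
    have hsplit : ∏ i, μ i = Complex.exp (2 * Real.pi * Complex.I * ∑ i ∈ I, a i) := by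
      rw [← Finset.prod_filter_mul_prod_filter_not Finset.univ (fun i => μ i ≠ 1), ← hI]
      have hone : ∏ i ∈ Finset.univ.filter (fun i => ¬ μ i ≠ 1), μ i = 1 := by
        apply Finset.prod_eq_one
        intro i hi
        simpa using (Finset.mem_filter.mp hi).2
      rw [hone, mul_one]
      rw [Finset.mul_sum, Complex.exp_sum]
      apply Finset.prod_congr rfl
      intro i hi
      have := Finset.mem_filter.mp hi
      exact (hμ12 i).resolve_left this.2
    rw [hsplit] at hprodμ
    obtain ⟨k, hk⟩ := Complex.exp_eq_exp_iff_exists_int.mp hprodμ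
    have h2pi : (2 * (Real.pi : ℂ) * Complex.I) ≠ 0 := by
      simp [Real.pi_ne_zero, Complex.I_ne_zero]
    have hS : ∑ i ∈ I, a i = c + k := by
      apply mul_left_cancel₀ h2pi
      rw [hk]; ring
    have hcompl : (∑ i ∈ Iᶜ, a i) + ∑ i ∈ I, a i = ∑ i, a i :=
      Finset.sum_compl_add_sum I a
    exact hodd I k (by linear_combination 2 * hS + 2 * hc - hcompl)
  refine ⟨?_, core⟩
  rintro ⟨L, hL1, hLinv⟩
  obtain ⟨v, hv0, hvspan⟩ := finrank_eq_one_iff'.mp hL1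
  apply core
  refine ⟨(v : Fin 2 → ℂ), by simpa using hv0, fun i => ?_⟩
  obtain ⟨d, hd⟩ := hvspan ⟨M i *ᵥ (v : Fin 2 → ℂ), hLinv i _ v.2⟩
  refine ⟨d, ?_⟩
  have := congrArg (Subtype.val) hd
  simpa using this.symm
end

section
/- Let n ≥ 3 and let A_1,…,A_n be nonzero 2×2 complex matrices whose kernels ker A_i are 1-dimensional and pairwise distinct; write a_i = tr A_i, and suppose Σ_i A_i = c·Id for some c ∈ ℂ. Let X ∈ ℂ² be a nonzero vector such that for every i either A_i X = 0 or A_i X = a_i·X. Then there exists an index j such that a_j = Σ_{i≠j} a_i or −a_j = Σ_{i≠j} a_i. -/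
open Matrix Finset

lemma ker_eq_span_of_mulVec_eq_zero {m : ℕ} (A : Matrix (Fin m) (Fin m) ℂ)
    (hk : Module.finrank ℂ (LinearMap.ker (Matrix.toLin' A)) = 1)
    (X : Fin m → ℂ) (hX : X ≠ 0) (h : A *ᵥ X = 0) :
    LinearMap.ker (Matrix.toLin' A) = Submodule.span ℂ {X} := by
  have hmem : X ∈ LinearMap.ker (Matrix.toLin' A) := by
    simp [LinearMap.mem_ker, Matrix.toLin'_apply, h]
  have hle : Submodule.span ℂ {X} ≤ LinearMap.ker (Matrix.toLin' A) :=
    Submodule.span_le.2 (by simpa using hmem)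
  have hrk : Module.finrank ℂ (Submodule.span ℂ {X}) = 1 :=
    finrank_span_singleton hX
  exact (Submodule.eq_of_le_of_finrank_le hle (by rw [hk, hrk])).symm

lemma sum_mulVec' {ι m : Type*} [Fintype m] (s : Finset ι)
    (A : ι → Matrix m m ℂ) (X : m → ℂ) :
    (∑ i ∈ s, A i) *ᵥ X = ∑ i ∈ s, A i *ᵥ X := by
  induction s using Finset.cons_induction with
  | empty => simp [Matrix.zero_mulVec]
  | cons i s hi ih => simp [Matrix.add_mulVec, ih]

/-- If `A 1, …, A n` (`n ≥ 3`) are nonzero `2×2` complex matrices with pairwise distinct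
1-dimensional kernels, traces `a i`, and `∑ i, A i = c·Id`, and if a nonzero vector `X`
satisfies `A i X = 0` or `A i X = a i • X` for every `i`, then `a j = ∑_{i≠j} a i` or
`−a j = ∑_{i≠j} a i` for some index `j`. -/
theorem constant_invariant_vector_residue_relation {n : ℕ} (hn : 3 ≤ n)
    (A : Fin n → Matrix (Fin 2) (Fin 2) ℂ)
    (hA0 : ∀ i, A i ≠ 0)
    (hker : ∀ i, Module.finrank ℂ (LinearMap.ker (Matrix.toLin' (A i))) = 1)
    (hdist : ∀ i j, i ≠ j →
      LinearMap.ker (Matrix.toLin' (A i)) ≠ LinearMap.ker (Matrix.toLin' (A j)))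
    (a : Fin n → ℂ) (ha : ∀ i, a i = (A i).trace)
    (c : ℂ) (hsum : ∑ i, A i = c • (1 : Matrix (Fin 2) (Fin 2) ℂ))
    (X : Fin 2 → ℂ) (hX : X ≠ 0)
    (hXi : ∀ i, A i *ᵥ X = 0 ∨ A i *ᵥ X = a i • X) :
    ∃ j, a j = ∑ i ∈ Finset.univ.erase j, a i ∨
         -a j = ∑ i ∈ Finset.univ.erase j, a i := by
  have npos : 0 < n := by omega
  -- trace of the sum equation
  have htr : ∑ i, a i = 2 * c := by
    have := congrArg Matrix.trace hsum
    simp only [Matrix.trace_sum, Matrix.trace_smul, Matrix.trace_one] at this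
    simp only [ha]
    rw [this]
    simp [smul_eq_mul, Fintype.card_fin]
    ring
  by_cases hall : ∀ i, A i *ᵥ X = a i • X
  · -- all eigen: c = ∑ a i and ∑ a i = 2c ⇒ ∑ a i = 0
    have key : (∑ i, a i) • X = c • X := by
      have := congrArg (fun M => M *ᵥ X) hsum
      simpa [sum_mulVec', hall, Matrix.smul_mulVec,
        Matrix.one_mulVec, ← Finset.sum_smul] using this
    have hc : ∑ i, a i = c := by
      have := sub_eq_zero.2 key
      rw [← sub_smul] at this
      rcases smul_eq_zero.1 this with h | h
      · exact sub_eq_zero.1 h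
      · exact absurd h hX
    have hzero : ∑ i, a i = 0 := by
      have : c = 2 * c := hc ▸ htr
      have : c = 0 := by linear_combination -this
      rw [hc, this]
    refine ⟨⟨0, npos⟩, Or.inr ?_⟩
    have := Finset.add_sum_erase Finset.univ a (Finset.mem_univ (⟨0, npos⟩ : Fin n))
    rw [hzero] at this
    linear_combination -this
  · push_neg at hall
    obtain ⟨j, hj⟩ := hall
    have hj0 : A j *ᵥ X = 0 := (hXi j).resolve_right hj
    have hother : ∀ i, i ≠ j → A i *ᵥ X = a i • X := by
      intro i hij
      rcases hXi i with h0 | he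
      · exfalso
        apply hdist i j hij
        rw [ker_eq_span_of_mulVec_eq_zero (A i) (hker i) X hX h0,
          ker_eq_span_of_mulVec_eq_zero (A j) (hker j) X hX hj0]
      · exact he
    have key : (∑ i ∈ Finset.univ.erase j, a i) • X = c • X := by
      have h1 := congrArg (fun M => M *ᵥ X) hsum
      simp only [sum_mulVec', Matrix.smul_mulVec, Matrix.one_mulVec] at h1
      rw [← Finset.add_sum_erase Finset.univ (fun i => A i *ᵥ X) (Finset.mem_univ j),
        hj0, zero_add] at h1
      rw [Finset.sum_congr rfl (fun i hi => hother i (Finset.ne_of_mem_erase hi))] at h1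
      rw [← Finset.sum_smul] at h1
      exact h1
    have hc : ∑ i ∈ Finset.univ.erase j, a i = c := by
      have := sub_eq_zero.2 key
      rw [← sub_smul] at this
      rcases smul_eq_zero.1 this with h | h
      · exact sub_eq_zero.1 h
      · exact absurd h hX
    refine ⟨j, Or.inl ?_⟩
    have hsplit := Finset.add_sum_erase Finset.univ a (Finset.mem_univ j)
    rw [htr, hc] at hsplit
    -- hsplit : a j + c = 2 * c  ... careful with orientation
    linear_combination hsplit - hc
end

section
/- Let R and S be 2×2 complex matrices such that R is diagonalizable with eigenvalues r₁, r₂ and S is diagonalizable with eigenvalues s₁, s₂, where r₁, r₂, s₁, s₂ all have modulus 1, r₁ ≠ r₂, s₁ ≠ s₂, and {r₁,r₂} ∩ {s₁,s₂} = ∅. Suppose moreover that 1 is an eigenvalue of R·S⁻¹. Then the four eigenlines (the eigenspace of R for r₁, of R for r₂, of S for s₁, of S for s₂) are pairwise distinct 1-dimensional subspaces, and there exists an invertible 2×2 complex matrix P such that P⁻¹RP = [[0, −r₁r₂],[1, r₁+r₂]] and P⁻¹SP = [[0, −s₁s₂],[1, s₁+s₂]]; in this common basis the four eigenlines are spanned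 by (−r₂,1), (−r₁,1), (−s₂,1), (−s₁,1), whose first coordinates −r₂, −r₁, −s₂, −s₁ lie on the unit circle — hence the four eigenlines, viewed as points of ℂP¹, lie on a common circle. -/
open Matrix Finset

lemma exists_coords2 {u v : Fin 2 → ℂ} (h : LinearIndependent ℂ ![u, v]) (y : Fin 2 → ℂ) :
    ∃ a b : ℂ, y = a • u + b • v := by
  have htop : Submodule.span ℂ (Set.range ![u, v]) = ⊤ :=
    h.span_eq_top_of_card_eq_finrank (by simp [Module.finrank_fin_fun])
  have hy : y ∈ Submodule.span ℂ ({u, v} : Set (Fin 2 → ℂ)) := by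
    have : Set.range ![u, v] = {u, v} := by
      simp only [Matrix.range_cons, Matrix.range_empty, Set.union_empty, Set.union_singleton]
      exact Set.pair_comm v u
    rw [← this, htop]; trivial
  obtain ⟨a, b, hab⟩ := Submodule.mem_span_pair.mp hy
  exact ⟨a, b, hab.symm⟩

lemma li_eig {M : Matrix (Fin 2) (Fin 2) ℂ} {a b : ℂ} {u v : Fin 2 → ℂ}
    (hu : u ≠ 0) (hv : v ≠ 0) (hab : a ≠ b)
    (hMu : M *ᵥ u = a • u) (hMv : M *ᵥ v = b • v) :
    LinearIndependent ℂ ![u, v] := by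
  rw [LinearIndependent.pair_iff]
  intro s t hst
  have h1 : M *ᵥ (s • u + t • v) = 0 := by rw [hst, Matrix.mulVec_zero]
  rw [Matrix.mulVec_add, Matrix.mulVec_smul, Matrix.mulVec_smul, hMu, hMv] at h1
  have h2 : a • (s • u + t • v) = 0 := by rw [hst, smul_zero]
  have h3 : (t * (b - a)) • v = 0 := by
    have := sub_eq_zero_of_eq (h1.trans h2.symm)
    rw [← this]; module
  have ht : t = 0 := by
    rcases smul_eq_zero.mp h3 with h | h
    · rcases mul_eq_zero.mp h with h' | h'
      · exact h'
      · exact absurd (sub_eq_zero.mp h') hab.symm.elim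
    · exact absurd h hv
  subst ht
  have hsu : s • u = 0 := by simpa using hst
  have hs : s = 0 := by
    rcases smul_eq_zero.mp hsu with h | h
    · exact h
    · exact absurd h hu
  exact ⟨hs, rfl⟩

lemma eig_mem {M : Matrix (Fin 2) (Fin 2) ℂ} {a b c : ℂ} {u v w : Fin 2 → ℂ}
    (hLI : LinearIndependent ℂ ![u, v])
    (hu : M *ᵥ u = a • u) (hv : M *ᵥ v = b • v)
    (hw : w ≠ 0) (hc : M *ᵥ w = c • w) : c = a ∨ c = b := by
  obtain ⟨α, β, rfl⟩ := exists_coords2 hLI w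
  rw [Matrix.mulVec_add, Matrix.mulVec_smul, Matrix.mulVec_smul, hu, hv] at hc
  have h1 : (α * a - c * α) • u + (β * b - c * β) • v = 0 := by
    have := sub_eq_zero_of_eq hc
    rw [← this]; module
  obtain ⟨h2, h3⟩ := LinearIndependent.pair_iff.mp hLI _ _ h1
  by_cases hα : α = 0
  · have hβ : β ≠ 0 := by rintro rfl; simp [hα] at hw
    right
    have : β * (b - c) = 0 := by linear_combination h3
    rcases mul_eq_zero.mp this with h | h
    · exact absurd h hβ
    · exact (sub_eq_zero.mp h).symm
  · left
    have : α * (a - c) = 0 := by linear_combination h2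
    rcases mul_eq_zero.mp this with h | h
    · exact absurd h hα
    · exact (sub_eq_zero.mp h).symm

lemma CH2 {M : Matrix (Fin 2) (Fin 2) ℂ} {a b : ℂ} {u v : Fin 2 → ℂ}
    (hLI : LinearIndependent ℂ ![u, v])
    (hu : M *ᵥ u = a • u) (hv : M *ᵥ v = b • v) (y : Fin 2 → ℂ) :
    M *ᵥ (M *ᵥ y) = (a + b) • (M *ᵥ y) - (a * b) • y := by
  obtain ⟨α, β, rfl⟩ := exists_coords2 hLI y
  simp only [Matrix.mulVec_add, Matrix.mulVec_smul, hu, hv, smul_smul]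
  module

lemma eigenline {M : Matrix (Fin 2) (Fin 2) ℂ} {a b : ℂ} {w x : Fin 2 → ℂ}
    (hLI : LinearIndependent ℂ ![w, x]) (hMw : M *ᵥ w = x)
    (hCH : ∀ y, M *ᵥ (M *ᵥ y) = (a + b) • (M *ᵥ y) - (a * b) • y) :
    Module.End.eigenspace (Matrix.toLin' M) a = ℂ ∙ ((-b) • w + x) := by
  have hMx : M *ᵥ x = (a + b) • x - (a * b) • w := by
    have := hCH w; rwa [hMw] at this
  apply le_antisymm
  · intro y hy
    rw [Module.End.mem_eigenspace_iff, Matrix.toLin'_apply] at hy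
    obtain ⟨α, β, rfl⟩ := exists_coords2 hLI y
    rw [Matrix.mulVec_add, Matrix.mulVec_smul, Matrix.mulVec_smul, hMw, hMx] at hy
    have h1 : (-(a * b) * β - a * α) • w + (α + (a + b) * β - a * β) • x = 0 := by
      have := sub_eq_zero_of_eq hy
      rw [← this]; module
    obtain ⟨h2, h3⟩ := LinearIndependent.pair_iff.mp hLI _ _ h1
    refine Submodule.mem_span_singleton.mpr ⟨β, ?_⟩
    have hα : α = -b * β := by linear_combination h3
    rw [hα]; module
  · rw [Submodule.span_singleton_le_iff_mem, Module.End.mem_eigenspace_iff, Matrix.toLin'_apply,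
      Matrix.mulVec_add, Matrix.mulVec_smul, hMw, hMx]
    module

lemma span_ne2 {w x : Fin 2 → ℂ} (hLI : LinearIndependent ℂ ![w, x]) {c d : ℂ} (hcd : c ≠ d) :
    (ℂ ∙ ((-c) • w + x)) ≠ ℂ ∙ ((-d) • w + x) := by
  intro h
  have hm : (-c) • w + x ∈ ℂ ∙ ((-d) • w + x) := h ▸ Submodule.mem_span_singleton_self _
  obtain ⟨t, ht⟩ := Submodule.mem_span_singleton.mp hm
  have h1 : (t * (-d) - (-c)) • w + (t - 1) • x = 0 := by
    have := sub_eq_zero_of_eq ht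
    rw [← this]; module
  obtain ⟨h2, h3⟩ := LinearIndependent.pair_iff.mp hLI _ _ h1
  have ht1 : t = 1 := by linear_combination h3
  apply hcd
  rw [ht1] at h2
  linear_combination h2

lemma vec_ne_zero2 {w x : Fin 2 → ℂ} (hLI : LinearIndependent ℂ ![w, x]) (c : ℂ) :
    (-c) • w + x ≠ 0 := by
  intro h
  have h1 : (-c) • w + (1 : ℂ) • x = 0 := by rw [one_smul]; exact h
  obtain ⟨-, h3⟩ := LinearIndependent.pair_iff.mp hLI _ _ h1
  exact one_ne_zero h3

lemma matrix_ext_of_mulVec {M N : Matrix (Fin 2) (Fin 2) ℂ}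
    (h : ∀ y, M *ᵥ y = N *ᵥ y) : M = N := by
  ext i j
  have := congrFun (h (Pi.single j 1)) i
  simpa [Matrix.mulVec_single] using this

/-- Two diagonalizable `2×2` matrices `R`, `S` with distinct unit eigenvalues
`r₁ ≠ r₂`, `s₁ ≠ s₂`, `{r₁,r₂} ∩ {s₁,s₂} = ∅`, such that `R·S⁻¹` has eigenvalue `1`,
have four pairwise distinct eigenlines, and can be simultaneously conjugated to the
companion matrices `[[0,−r₁r₂],[1,r₁+r₂]]` and `[[0,−s₁s₂],[1,s₁+s₂]]`; in this common
basis the four eigenlines are spanned by `(−r₂,1)`, `(−r₁,1)`, `(−s₂,1)`, `(−s₁,1)`,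
so (their first coordinates being on the unit circle) they lie on a common circle
in `ℂP¹`. -/
theorem eigenlines_on_common_circle (R S : Matrix (Fin 2) (Fin 2) ℂ)
    (r₁ r₂ s₁ s₂ : ℂ)
    (hr₁ : ‖r₁‖ = 1) (hr₂ : ‖r₂‖ = 1)
    (hs₁ : ‖s₁‖ = 1) (hs₂ : ‖s₂‖ = 1)
    (hr12 : r₁ ≠ r₂) (hs12 : s₁ ≠ s₂)
    (hdisj : r₁ ≠ s₁ ∧ r₁ ≠ s₂ ∧ r₂ ≠ s₁ ∧ r₂ ≠ s₂)
    (u₁ u₂ v₁ v₂ : Fin 2 → ℂ)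
    (hu₁ : u₁ ≠ 0) (hu₂ : u₂ ≠ 0) (hv₁ : v₁ ≠ 0) (hv₂ : v₂ ≠ 0)
    (hRu₁ : R *ᵥ u₁ = r₁ • u₁) (hRu₂ : R *ᵥ u₂ = r₂ • u₂)
    (hSv₁ : S *ᵥ v₁ = s₁ • v₁) (hSv₂ : S *ᵥ v₂ = s₂ • v₂)
    (heig : ∃ x : Fin 2 → ℂ, x ≠ 0 ∧ (R * S⁻¹) *ᵥ x = x) :
    (Module.finrank ℂ (Module.End.eigenspace (Matrix.toLin' R) r₁) = 1 ∧
     Module.finrank ℂ (Module.End.eigenspace (Matrix.toLin' R) r₂) = 1 ∧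
     Module.finrank ℂ (Module.End.eigenspace (Matrix.toLin' S) s₁) = 1 ∧
     Module.finrank ℂ (Module.End.eigenspace (Matrix.toLin' S) s₂) = 1) ∧
    (List.Pairwise (· ≠ ·)
      [Module.End.eigenspace (Matrix.toLin' R) r₁,
       Module.End.eigenspace (Matrix.toLin' R) r₂,
       Module.End.eigenspace (Matrix.toLin' S) s₁,
       Module.End.eigenspace (Matrix.toLin' S) s₂]) ∧
    ∃ P : Matrix (Fin 2) (Fin 2) ℂ, IsUnit P.det ∧
      P⁻¹ * R * P = !![0, -(r₁ * r₂); 1, r₁ + r₂] ∧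
      P⁻¹ * S * P = !![0, -(s₁ * s₂); 1, s₁ + s₂] ∧
      Module.End.eigenspace (Matrix.toLin' R) r₁ = (ℂ ∙ (P *ᵥ ![-r₂, 1])) ∧
      Module.End.eigenspace (Matrix.toLin' R) r₂ = (ℂ ∙ (P *ᵥ ![-r₁, 1])) ∧
      Module.End.eigenspace (Matrix.toLin' S) s₁ = (ℂ ∙ (P *ᵥ ![-s₂, 1])) ∧
      Module.End.eigenspace (Matrix.toLin' S) s₂ = (ℂ ∙ (P *ᵥ ![-s₁, 1])) := by
  
  obtain ⟨hd11, hd12, hd21, hd22⟩ := hdisj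
  obtain ⟨x, hx0, hx⟩ := heig
  -- basic linear independence of eigenvectors
  have hLIu : LinearIndependent ℂ ![u₁, u₂] := li_eig hu₁ hu₂ hr12 hRu₁ hRu₂
  have hLIv : LinearIndependent ℂ ![v₁, v₂] := li_eig hv₁ hv₂ hs12 hSv₁ hSv₂
  -- S is invertible
  have hs₁0 : s₁ ≠ 0 := fun h => by simp [h] at hs₁
  have hSdet : IsUnit S.det := by
    rw [isUnit_iff_ne_zero]
    intro hdet
    obtain ⟨y, hy0, hy⟩ := Matrix.exists_mulVec_eq_zero_iff.mpr hdet
    have : (0 : ℂ) = s₁ ∨ (0 : ℂ) = s₂ := by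
      refine eig_mem hLIv hSv₁ hSv₂ hy0 ?_
      rw [hy, zero_smul]
    rcases this with h | h
    · simp [← h] at hs₁
    · simp [← h] at hs₂
  -- the common vector w with R w = S w = x
  set w : Fin 2 → ℂ := S⁻¹ *ᵥ x with hw_def
  have hSw : S *ᵥ w = x := by
    rw [hw_def, Matrix.mulVec_mulVec, Matrix.mul_nonsing_inv S hSdet, Matrix.one_mulVec]
  have hRw : R *ᵥ w = x := by
    rw [hw_def, Matrix.mulVec_mulVec]; exact hx
  have hw0 : w ≠ 0 := by
    intro h
    rw [h, Matrix.mulVec_zero] at hSw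
    exact hx0 hSw.symm
  -- w, x are linearly independent
  have key : ∀ s t : ℂ, s • w + t • x = 0 → t ≠ 0 → False := by
    intro s t hst ht
    have hxw : x = (-s / t) • w := by
      have htx : t • x = -(s • w) := by
        rw [eq_neg_iff_add_eq_zero, add_comm]; exact hst
      have : x = t⁻¹ • (t • x) := by rw [smul_smul, inv_mul_cancel₀ ht, one_smul]
      rw [this, htx, smul_neg, smul_smul, div_eq_mul_inv, neg_mul, mul_comm, neg_smul]
    have hRc : R *ᵥ w = (-s / t) • w := by rw [hRw]; exact hxw
    have hSc : S *ᵥ w = (-s / t) • w := by rw [hSw]; exact hxw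
    have hrc := eig_mem hLIu hRu₁ hRu₂ hw0 hRc
    have hsc := eig_mem hLIv hSv₁ hSv₂ hw0 hSc
    rcases hrc with h | h <;> rcases hsc with h' | h' <;>
      [exact hd11 (h.symm.trans h'); exact hd12 (h.symm.trans h');
       exact hd21 (h.symm.trans h'); exact hd22 (h.symm.trans h')]
  have hLI : LinearIndependent ℂ ![w, x] := by
    rw [LinearIndependent.pair_iff]
    intro s t hst
    have ht0 : t = 0 := by
      by_contra ht
      exact key s t hst ht
    subst ht0
    have hsw : s • w = 0 := by simpa using hst
    rcases smul_eq_zero.mp hsw with h | h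
    · exact ⟨h, rfl⟩
    · exact absurd h hw0
  -- Cayley-Hamilton identities
  have hCHR : ∀ y, R *ᵥ (R *ᵥ y) = (r₁ + r₂) • (R *ᵥ y) - (r₁ * r₂) • y :=
    CH2 hLIu hRu₁ hRu₂
  have hCHR' : ∀ y, R *ᵥ (R *ᵥ y) = (r₂ + r₁) • (R *ᵥ y) - (r₂ * r₁) • y := by
    intro y; rw [add_comm r₂ r₁, mul_comm r₂ r₁]; exact hCHR y
  have hCHS : ∀ y, S *ᵥ (S *ᵥ y) = (s₁ + s₂) • (S *ᵥ y) - (s₁ * s₂) • y :=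
    CH2 hLIv hSv₁ hSv₂
  have hCHS' : ∀ y, S *ᵥ (S *ᵥ y) = (s₂ + s₁) • (S *ᵥ y) - (s₂ * s₁) • y := by
    intro y; rw [add_comm s₂ s₁, mul_comm s₂ s₁]; exact hCHS y
  -- the four eigenlines
  have hER1 : Module.End.eigenspace (Matrix.toLin' R) r₁ = ℂ ∙ ((-r₂) • w + x) :=
    eigenline hLI hRw hCHR
  have hER2 : Module.End.eigenspace (Matrix.toLin' R) r₂ = ℂ ∙ ((-r₁) • w + x) :=
    eigenline hLI hRw hCHR'
  have hES1 : Module.End.eigenspace (Matrix.toLin' S) s₁ = ℂ ∙ ((-s₂) • w + x) :=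
    eigenline hLI hSw hCHS
  have hES2 : Module.End.eigenspace (Matrix.toLin' S) s₂ = ℂ ∙ ((-s₁) • w + x) :=
    eigenline hLI hSw hCHS'
  -- the matrix P with columns w and x
  set P : Matrix (Fin 2) (Fin 2) ℂ := Matrix.of (fun i j => ![w, x] j i) with hP_def
  have hPmul : ∀ y : Fin 2 → ℂ, P *ᵥ y = y 0 • w + y 1 • x := by
    intro y
    ext i
    simp [hP_def, Matrix.mulVec, dotProduct, Fin.sum_univ_two, mul_comm]
  have hPdet : IsUnit P.det := by
    rw [isUnit_iff_ne_zero]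
    intro hdet
    obtain ⟨y, hy0, hy⟩ := Matrix.exists_mulVec_eq_zero_iff.mpr hdet
    rw [hPmul] at hy
    obtain ⟨h1, h2⟩ := LinearIndependent.pair_iff.mp hLI _ _ hy
    apply hy0
    ext i
    fin_cases i <;> simp [h1, h2]
  have hPinv := Matrix.nonsing_inv_mul P hPdet
  have hvec : ∀ c : ℂ, P *ᵥ ![-c, 1] = (-c) • w + x := by
    intro c
    rw [hPmul]
    simp
  -- conjugation identities
  have hRP : R * P = P * !![0, -(r₁ * r₂); 1, r₁ + r₂] := by
    apply matrix_ext_of_mulVec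
    intro y
    rw [← Matrix.mulVec_mulVec, ← Matrix.mulVec_mulVec, hPmul]
    have hcv : (!![0, -(r₁ * r₂); 1, r₁ + r₂] *ᵥ y) = ![-(r₁ * r₂) * y 1, y 0 + (r₁ + r₂) * y 1] := by
      ext i
      fin_cases i <;> simp [Matrix.mulVec, dotProduct, Fin.sum_univ_two]
    rw [hcv, hPmul, Matrix.mulVec_add, Matrix.mulVec_smul, Matrix.mulVec_smul, hRw]
    have hRx : R *ᵥ x = (r₁ + r₂) • x - (r₁ * r₂) • w := by
      have := hCHR w; rwa [hRw] at this
    rw [hRx]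
    simp only [Matrix.cons_val_zero, Matrix.cons_val_one, Matrix.head_cons]
    module
  have hSP : S * P = P * !![0, -(s₁ * s₂); 1, s₁ + s₂] := by
    apply matrix_ext_of_mulVec
    intro y
    rw [← Matrix.mulVec_mulVec, ← Matrix.mulVec_mulVec, hPmul]
    have hcv : (!![0, -(s₁ * s₂); 1, s₁ + s₂] *ᵥ y) = ![-(s₁ * s₂) * y 1, y 0 + (s₁ + s₂) * y 1] := by
      ext i
      fin_cases i <;> simp [Matrix.mulVec, dotProduct, Fin.sum_univ_two]
    rw [hcv, hPmul, Matrix.mulVec_add, Matrix.mulVec_smul, Matrix.mulVec_smul, hSw]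
    have hSx : S *ᵥ x = (s₁ + s₂) • x - (s₁ * s₂) • w := by
      have := hCHS w; rwa [hSw] at this
    rw [hSx]
    simp only [Matrix.cons_val_zero, Matrix.cons_val_one, Matrix.head_cons]
    module
  refine ⟨⟨?_, ?_, ?_, ?_⟩, ?_, P, hPdet, ?_, ?_, ?_, ?_, ?_, ?_⟩
  · rw [hER1]; exact finrank_span_singleton (vec_ne_zero2 hLI r₂)
  · rw [hER2]; exact finrank_span_singleton (vec_ne_zero2 hLI r₁)
  · rw [hES1]; exact finrank_span_singleton (vec_ne_zero2 hLI s₂)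
  · rw [hES2]; exact finrank_span_singleton (vec_ne_zero2 hLI s₁)
  · rw [hER1, hER2, hES1, hES2]
    refine List.Pairwise.cons ?_ (List.Pairwise.cons ?_ (List.Pairwise.cons ?_
      (List.pairwise_singleton _ _)))
    · intro a ha
      simp only [List.mem_cons, List.not_mem_nil, or_false] at ha
      rcases ha with rfl | rfl | rfl
      · exact span_ne2 hLI (Ne.symm hr12)
      · exact span_ne2 hLI hd22
      · exact span_ne2 hLI hd21
    · intro a ha
      simp only [List.mem_cons, List.not_mem_nil, or_false] at ha
      rcases ha with rfl | rfl
      · exact span_ne2 hLI hd12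
      · exact span_ne2 hLI hd11
    · intro a ha
      simp only [List.mem_cons, List.not_mem_nil, or_false] at ha
      rcases ha with rfl
      exact span_ne2 hLI (Ne.symm hs12)
  · rw [mul_assoc, hRP, ← mul_assoc, hPinv, one_mul]
  · rw [mul_assoc, hSP, ← mul_assoc, hPinv, one_mul]
  · rw [hvec]; exact hER1
  · rw [hvec]; exact hER2
  · rw [hvec]; exact hES1
  · rw [hvec]; exact hES2
end

section
/- Let R and S be 2×2 complex matrices, diagonalizable with eigenvalues r₁ ≠ r₂ and s₁ ≠ s₂ respectively, all four eigenvalues of modulus 1, with {r₁,r₂} ∩ {s₁,s₂} = ∅, and such that 1 is an eigenvalue of R·S⁻¹. Then there exists a Hermitian 2×2 matrix H with det H ≠ 0, R*·H·R = H and S*·H·S = H; and H is unique up to real scalar: any Hermitian matrix H' satisfying R*·H'·R = H' and S*·H'·S = H' is equal to t·H for some real number t. -/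
open Matrix Finset

private lemma eigen_basis (R : Matrix (Fin 2) (Fin 2) ℂ) (r₁ r₂ : ℂ) (hr : r₁ ≠ r₂)
    (u₁ u₂ : Fin 2 → ℂ) (hu₁ : u₁ ≠ 0) (hu₂ : u₂ ≠ 0)
    (h1 : R *ᵥ u₁ = r₁ • u₁) (h2 : R *ᵥ u₂ = r₂ • u₂) :
    ∃ P : Matrix (Fin 2) (Fin 2) ℂ, IsUnit P.det ∧
      R * P = P * diagonal ![r₁, r₂] := by
  refine ⟨Matrix.of fun i j => ![u₁, u₂] j i, ?_, ?_⟩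
  · rw [isUnit_iff_ne_zero]
    intro hdet
    obtain ⟨v, hv0, hv⟩ := (Matrix.exists_mulVec_eq_zero_iff).mpr hdet
    have hvc : (Matrix.of fun i j => ![u₁, u₂] j i) *ᵥ v =
        v 0 • u₁ + v 1 • u₂ := by
      funext k
      simp [Matrix.mulVec, dotProduct, Fin.sum_univ_two, mul_comm]
    have hsum : v 0 • u₁ + v 1 • u₂ = 0 := by rw [← hvc]; exact hv
    have hRsum : (v 0 * r₁) • u₁ + (v 1 * r₂) • u₂ = 0 := by
      have := congrArg (fun w => R *ᵥ w) hsum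
      simpa [Matrix.mulVec_add, Matrix.mulVec_smul, h1, h2, smul_smul] using this
    have hrsum : (v 0 * r₂) • u₁ + (v 1 * r₂) • u₂ = 0 := by
      have := congrArg (fun w => r₂ • w) hsum
      simpa [smul_add, smul_smul, mul_comm] using this
    have h01 : (v 0 * (r₁ - r₂)) • u₁ = 0 := by
      have := sub_eq_zero.mpr (hRsum.trans hrsum.symm)
      simpa [mul_sub, sub_smul, add_sub_add_right_eq_sub] using this
    have hv00 : v 0 = 0 := by
      rcases smul_eq_zero.mp h01 with h | h
      · rcases mul_eq_zero.mp h with h | h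
        · exact h
        · exact absurd (sub_eq_zero.mp (by linear_combination h)) hr
      · exact absurd h hu₁
    have hv10 : v 1 = 0 := by
      have : v 1 • u₂ = 0 := by simpa [hv00] using hsum
      rcases smul_eq_zero.mp this with h | h
      · exact h
      · exact absurd h hu₂
    apply hv0
    funext i
    fin_cases i <;> simp [hv00, hv10]
  · ext i j
    have e1 := congrFun h1 i
    have e2 := congrFun h2 i
    fin_cases j <;>
      simp_all [Matrix.mul_apply, Matrix.mulVec, dotProduct,
        Fin.sum_univ_two, Matrix.diagonal, mul_comm]

private lemma sandwich (Q E D S : Matrix (Fin 2) (Fin 2) ℂ) (hQ : IsUnit Q.det)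
    (hS : S = Q * E * Q⁻¹) (hcomm : Eᴴ * D * E = D) :
    Sᴴ * (Q⁻¹ᴴ * D * Q⁻¹) * S = Q⁻¹ᴴ * D * Q⁻¹ := by
  have hQQ : Q * Q⁻¹ = 1 := Matrix.mul_nonsing_inv Q hQ
  have hQiQ : Q⁻¹ * Q = 1 := Matrix.nonsing_inv_mul Q hQ
  have c1 : ∀ X : Matrix (Fin 2) (Fin 2) ℂ, Qᴴ * (Q⁻¹ᴴ * X) = X := by
    intro X
    rw [← Matrix.mul_assoc, ← conjTranspose_mul, hQiQ, conjTranspose_one, Matrix.one_mul]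
  have c2 : ∀ X : Matrix (Fin 2) (Fin 2) ℂ, Q⁻¹ * (Q * X) = X := by
    intro X
    rw [← Matrix.mul_assoc, hQiQ, Matrix.one_mul]
  have hc : ∀ X : Matrix (Fin 2) (Fin 2) ℂ, Eᴴ * (D * (E * X)) = D * X := by
    intro X
    calc Eᴴ * (D * (E * X)) = (Eᴴ * D * E) * X := by
          simp only [Matrix.mul_assoc]
      _ = D * X := by rw [hcomm]
  rw [hS]
  simp only [conjTranspose_mul, Matrix.mul_assoc, c1, c2, hc]

private lemma diag_sandwich (r k : Fin 2 → ℂ)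
    (h : ∀ i, (starRingEnd ℂ) (r i) * r i = 1) :
    (diagonal r)ᴴ * diagonal k * diagonal r = diagonal k := by
  rw [diagonal_conjTranspose, diagonal_mul_diagonal, diagonal_mul_diagonal]
  refine congrArg diagonal (funext fun i => ?_)
  simp only [Pi.mul_apply, Pi.star_apply, Complex.star_def]
  calc (starRingEnd ℂ) (r i) * k i * r i
      = ((starRingEnd ℂ) (r i) * r i) * k i := by ring
    _ = k i := by rw [h i, one_mul]

private lemma off_diag_zero (r : Fin 2 → ℂ) (K : Matrix (Fin 2) (Fin 2) ℂ)
    (h : (diagonal r)ᴴ * K * diagonal r = K) (i j : Fin 2)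
    (hij : (starRingEnd ℂ) (r i) * r j ≠ 1) : K i j = 0 := by
  have he : ((diagonal (star r) * K) * diagonal r) i j = K i j := by
    rw [← diagonal_conjTranspose]; exact congrFun (congrFun h i) j
  rw [Matrix.mul_diagonal, Matrix.diagonal_mul] at he
  have he' : (starRingEnd ℂ) (r i) * K i j * r j = K i j := by
    simpa [Complex.star_def] using he
  have : K i j * ((starRingEnd ℂ) (r i) * r j - 1) = 0 := by linear_combination he'
  rcases mul_eq_zero.mp this with h' | h'
  · exact h'
  · exact absurd (by linear_combination h') hij


private lemma cross_real (a ca c cc p cp q cq r₁ r₂ s₁ s₂ : ℂ)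
    (hq : q ≠ 0) (hcq : cq ≠ 0)
    (hr₁ : r₁ ≠ 0) (hr₂ : r₂ ≠ 0) (hs₁ : s₁ ≠ 0) (hs₂ : s₂ ≠ 0)
    (h1 : s₁ - r₂ ≠ 0) (h2 : s₂ - r₂ ≠ 0)
    (h3 : s₁⁻¹ - r₂⁻¹ ≠ 0) (h4 : s₂⁻¹ - r₂⁻¹ ≠ 0) :
    a * (ca * cp * (r₁⁻¹ - s₁⁻¹) / (cq * (s₁⁻¹ - r₂⁻¹))) *
      (cc * (c * p * (r₁ - s₂) / (q * (s₂ - r₂)))) =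
    ca * (a * p * (r₁ - s₁) / (q * (s₁ - r₂))) *
      (c * (cc * cp * (r₁⁻¹ - s₂⁻¹) / (cq * (s₂⁻¹ - r₂⁻¹)))) := by
  have e3 : s₁⁻¹ - r₂⁻¹ = (r₂ - s₁) / (s₁ * r₂) := by field_simp
  have e4 : s₂⁻¹ - r₂⁻¹ = (r₂ - s₂) / (s₂ * r₂) := by field_simp
  have e1 : r₁⁻¹ - s₁⁻¹ = (s₁ - r₁) / (r₁ * s₁) := by field_simp
  have e2 : r₁⁻¹ - s₂⁻¹ = (s₂ - r₁) / (r₁ * s₂) := by field_simp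
  rw [e1, e2, e3, e4]
  have hr2s1 : r₂ - s₁ ≠ 0 := fun h => h3 (by rw [e3, h, zero_div])
  have hr2s2 : r₂ - s₂ ≠ 0 := fun h => h4 (by rw [e4, h, zero_div])
  field_simp
  ring

/-- For diagonalizable `2×2` matrices `R`, `S` with distinct unit eigenvalues
`r₁ ≠ r₂`, `s₁ ≠ s₂`, `{r₁,r₂} ∩ {s₁,s₂} = ∅`, such that `R·S⁻¹` has eigenvalue `1`,
there is a non-degenerate Hermitian matrix `H` invariant under both `R` and `S`
(`R*·H·R = H` and `S*·H·S = H`), unique up to a real scalar. -/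
theorem exists_unique_invariant_hermitian_form (R S : Matrix (Fin 2) (Fin 2) ℂ)
    (r₁ r₂ s₁ s₂ : ℂ)
    (hr₁ : ‖r₁‖ = 1) (hr₂ : ‖r₂‖ = 1)
    (hs₁ : ‖s₁‖ = 1) (hs₂ : ‖s₂‖ = 1)
    (hr12 : r₁ ≠ r₂) (hs12 : s₁ ≠ s₂)
    (hdisj : r₁ ≠ s₁ ∧ r₁ ≠ s₂ ∧ r₂ ≠ s₁ ∧ r₂ ≠ s₂)
    (u₁ u₂ v₁ v₂ : Fin 2 → ℂ)
    (hu₁ : u₁ ≠ 0) (hu₂ : u₂ ≠ 0) (hv₁ : v₁ ≠ 0) (hv₂ : v₂ ≠ 0)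
    (hRu₁ : R *ᵥ u₁ = r₁ • u₁) (hRu₂ : R *ᵥ u₂ = r₂ • u₂)
    (hSv₁ : S *ᵥ v₁ = s₁ • v₁) (hSv₂ : S *ᵥ v₂ = s₂ • v₂)
    (heig : ∃ x : Fin 2 → ℂ, x ≠ 0 ∧ (R * S⁻¹) *ᵥ x = x) :
    ∃ H : Matrix (Fin 2) (Fin 2) ℂ, H.IsHermitian ∧ H.det ≠ 0 ∧
      Rᴴ * H * R = H ∧ Sᴴ * H * S = H ∧
      ∀ H' : Matrix (Fin 2) (Fin 2) ℂ, H'.IsHermitian →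
        Rᴴ * H' * R = H' → Sᴴ * H' * S = H' → ∃ t : ℝ, H' = t • H := by
  obtain ⟨hrs11, hrs12, hrs21, hrs22⟩ := hdisj
  have key : ∀ z : ℂ, ‖z‖ = 1 → (starRingEnd ℂ) z * z = 1 := by
    intro z hz
    rw [mul_comm, Complex.mul_conj, Complex.normSq_eq_norm_sq, hz]; norm_num
  have hr₁0 : r₁ ≠ 0 := by intro h; rw [h] at hr₁; simp at hr₁
  have hr₂0 : r₂ ≠ 0 := by intro h; rw [h] at hr₂; simp at hr₂
  have hs₁0 : s₁ ≠ 0 := by intro h; rw [h] at hs₁; simp at hs₁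
  have hs₂0 : s₂ ≠ 0 := by intro h; rw [h] at hs₂; simp at hs₂
  obtain ⟨P, hPdet, hRP⟩ := eigen_basis R r₁ r₂ hr12 u₁ u₂ hu₁ hu₂ hRu₁ hRu₂
  obtain ⟨Q, hQdet, hSQ⟩ := eigen_basis S s₁ s₂ hs12 v₁ v₂ hv₁ hv₂ hSv₁ hSv₂
  set Dr : Matrix (Fin 2) (Fin 2) ℂ := diagonal ![r₁, r₂] with hDrdef
  set Ds : Matrix (Fin 2) (Fin 2) ℂ := diagonal ![s₁, s₂] with hDsdef
  have hPP : P * P⁻¹ = 1 := Matrix.mul_nonsing_inv P hPdet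
  have hPPi : P⁻¹ * P = 1 := Matrix.nonsing_inv_mul P hPdet
  have hQQ : Q * Q⁻¹ = 1 := Matrix.mul_nonsing_inv Q hQdet
  have hQQi : Q⁻¹ * Q = 1 := Matrix.nonsing_inv_mul Q hQdet
  have hR : R = P * Dr * P⁻¹ := by
    rw [← hRP, Matrix.mul_assoc, hPP, Matrix.mul_one]
  have hS : S = Q * Ds * Q⁻¹ := by
    rw [← hSQ, Matrix.mul_assoc, hQQ, Matrix.mul_one]
  set M : Matrix (Fin 2) (Fin 2) ℂ := Q⁻¹ * P with hMdef
  have hMdet : IsUnit M.det := by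
    rw [hMdef, Matrix.det_mul]
    exact (Matrix.isUnit_nonsing_inv_det Q hQdet).mul hPdet
  -- S is invertible
  have hSright : S * (Q * diagonal ![s₁⁻¹, s₂⁻¹] * Q⁻¹) = 1 := by
    rw [hS]
    have hDD : Ds * (diagonal ![s₁⁻¹, s₂⁻¹]) = 1 := by
      rw [hDsdef, diagonal_mul_diagonal]
      ext i j
      fin_cases i <;> fin_cases j <;>
        simp [hs₁0, hs₂0, Matrix.one_apply]
    calc Q * Ds * Q⁻¹ * (Q * diagonal ![s₁⁻¹, s₂⁻¹] * Q⁻¹)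
        = Q * (Ds * ((Q⁻¹ * Q) * (diagonal ![s₁⁻¹, s₂⁻¹] * Q⁻¹))) := by
          simp only [Matrix.mul_assoc]
      _ = Q * ((Ds * diagonal ![s₁⁻¹, s₂⁻¹]) * Q⁻¹) := by
          rw [hQQi, Matrix.one_mul, Matrix.mul_assoc]
      _ = 1 := by rw [hDD, Matrix.one_mul, hQQ]
  have hSdet : IsUnit S.det := Matrix.isUnit_det_of_right_inverse hSright
  have hSS : S * S⁻¹ = 1 := Matrix.mul_nonsing_inv S hSdet
  obtain ⟨x, hx0, hx⟩ := heig
  set y : Fin 2 → ℂ := S⁻¹ *ᵥ x with hydef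
  have hSy : S *ᵥ y = x := by
    rw [hydef, Matrix.mulVec_mulVec, hSS, Matrix.one_mulVec]
  have hy0 : y ≠ 0 := fun h => hx0 (by rw [← hSy, h, Matrix.mulVec_zero])
  have hRSy : R *ᵥ y = S *ᵥ y := by
    rw [hSy, hydef, Matrix.mulVec_mulVec]; exact hx
  clear hydef
  clear_value y
  set w : Fin 2 → ℂ := P⁻¹ *ᵥ y with hwdef
  have hPw : P *ᵥ w = y := by
    rw [hwdef, Matrix.mulVec_mulVec, hPP, Matrix.one_mulVec]
  have hw0 : w ≠ 0 := fun h => hy0 (by rw [← hPw, h, Matrix.mulVec_zero])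
  clear hwdef
  clear_value w
  have hkey : (M * Dr) *ᵥ w = Ds *ᵥ (M *ᵥ w) := by
    have h1 : R *ᵥ y = (P * Dr) *ᵥ w := by
      rw [hR, ← hPw, Matrix.mulVec_mulVec]
      refine congrArg (· *ᵥ w) ?_
      rw [Matrix.mul_assoc, hPPi, Matrix.mul_one]
    have h2 : Q⁻¹ *ᵥ (S *ᵥ y) = Ds *ᵥ (M *ᵥ w) := by
      rw [← hPw, hS]
      rw [Matrix.mulVec_mulVec, Matrix.mulVec_mulVec, Matrix.mulVec_mulVec]
      refine congrArg (· *ᵥ w) ?_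
      calc Q⁻¹ * (Q * Ds * Q⁻¹) * P = (Q⁻¹ * Q) * Ds * (Q⁻¹ * P) := by
            simp only [Matrix.mul_assoc]
        _ = Ds * M := by rw [hQQi, Matrix.one_mul, hMdef]
    have h3 : Q⁻¹ *ᵥ (R *ᵥ y) = (M * Dr) *ᵥ w := by
      rw [h1, Matrix.mulVec_mulVec, ← Matrix.mul_assoc, ← hMdef]
    rw [← h3, ← h2, hRSy]
  -- entrywise equations
  have e0 := congrFun hkey 0
  have e1 := congrFun hkey 1
  rw [hDrdef, hDsdef] at e0 e1
  simp only [Matrix.mulVec, dotProduct, Matrix.mul_apply, Fin.sum_univ_two,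
    Matrix.diagonal, Matrix.of_apply, Matrix.cons_val_zero, Matrix.cons_val_one,
    Matrix.head_cons, if_true, if_false, Fin.isValue] at e0 e1
  norm_num at e0 e1
  have eqA : M 0 0 * w 0 * (r₁ - s₁) = M 0 1 * w 1 * (s₁ - r₂) := by
    linear_combination e0
  have eqB : M 1 0 * w 0 * (r₁ - s₂) = M 1 1 * w 1 * (s₂ - r₂) := by
    linear_combination e1
  have hdet2 : M.det = M 0 0 * M 1 1 - M 0 1 * M 1 0 := Matrix.det_fin_two M
  have hMne : M.det ≠ 0 := hMdet.ne_zero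
  have hs1r2 : s₁ - r₂ ≠ 0 := sub_ne_zero.mpr (Ne.symm hrs21)
  have hs2r2 : s₂ - r₂ ≠ 0 := sub_ne_zero.mpr (Ne.symm hrs22)
  have hr1s1 : r₁ - s₁ ≠ 0 := sub_ne_zero.mpr hrs11
  have hr1s2 : r₁ - s₂ ≠ 0 := sub_ne_zero.mpr hrs12
  have hwor : ¬(w 0 = 0 ∧ w 1 = 0) := by
    rintro ⟨h0, h1⟩
    exact hw0 (funext fun i => by fin_cases i <;> simp [h0, h1])
  have hp : w 0 ≠ 0 := by
    intro hp0
    have hq0 : w 1 ≠ 0 := fun h => hwor ⟨hp0, h⟩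
    have hβ0 : M 0 1 = 0 := by
      have : M 0 1 * w 1 * (s₁ - r₂) = 0 := by rw [← eqA, hp0]; ring
      rcases mul_eq_zero.mp this with h | h
      · rcases mul_eq_zero.mp h with h' | h'
        · exact h'
        · exact absurd h' hq0
      · exact absurd h hs1r2
    have hδ0 : M 1 1 = 0 := by
      have : M 1 1 * w 1 * (s₂ - r₂) = 0 := by rw [← eqB, hp0]; ring
      rcases mul_eq_zero.mp this with h | h
      · rcases mul_eq_zero.mp h with h' | h'
        · exact h'
        · exact absurd h' hq0
      · exact absurd h hs2r2
    exact hMne (by rw [hdet2, hβ0, hδ0]; ring)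
  have hq : w 1 ≠ 0 := by
    intro hq0
    have hα0 : M 0 0 = 0 := by
      have : M 0 0 * w 0 * (r₁ - s₁) = 0 := by rw [eqA, hq0]; ring
      rcases mul_eq_zero.mp this with h | h
      · rcases mul_eq_zero.mp h with h' | h'
        · exact h'
        · exact absurd h' hp
      · exact absurd h hr1s1
    have hγ0 : M 1 0 = 0 := by
      have : M 1 0 * w 0 * (r₁ - s₂) = 0 := by rw [eqB, hq0]; ring
      rcases mul_eq_zero.mp this with h | h
      · rcases mul_eq_zero.mp h with h' | h'
        · exact h'
        · exact absurd h' hp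
      · exact absurd h hr1s2
    exact hMne (by rw [hdet2, hα0, hγ0]; ring)
  have hαne : M 0 0 ≠ 0 := by
    intro h0
    have : M 0 1 * w 1 * (s₁ - r₂) = 0 := by rw [← eqA, h0]; ring
    have hβ0 : M 0 1 = 0 := by
      rcases mul_eq_zero.mp this with h | h
      · rcases mul_eq_zero.mp h with h' | h'
        · exact h'
        · exact absurd h' hq
      · exact absurd h hs1r2
    exact hMne (by rw [hdet2, h0, hβ0]; ring)
  have hβne : M 0 1 ≠ 0 := by
    intro h0
    have : M 0 0 * w 0 * (r₁ - s₁) = 0 := by rw [eqA, h0]; ring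
    have hα0 : M 0 0 = 0 := by
      rcases mul_eq_zero.mp this with h | h
      · rcases mul_eq_zero.mp h with h' | h'
        · exact h'
        · exact absurd h' hp
      · exact absurd h hr1s1
    exact hMne (by rw [hdet2, h0, hα0]; ring)
  have hγne : M 1 0 ≠ 0 := by
    intro h0
    have : M 1 1 * w 1 * (s₂ - r₂) = 0 := by rw [← eqB, h0]; ring
    have hδ0 : M 1 1 = 0 := by
      rcases mul_eq_zero.mp this with h | h
      · rcases mul_eq_zero.mp h with h' | h'
        · exact h'
        · exact absurd h' hq
      · exact absurd h hs2r2
    exact hMne (by rw [hdet2, h0, hδ0]; ring)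
  have hδne : M 1 1 ≠ 0 := by
    intro h0
    have : M 1 0 * w 0 * (r₁ - s₂) = 0 := by rw [eqB, h0]; ring
    have hγ0 : M 1 0 = 0 := by
      rcases mul_eq_zero.mp this with h | h
      · rcases mul_eq_zero.mp h with h' | h'
        · exact h'
        · exact absurd h' hp
      · exact absurd h hr1s2
    exact hMne (by rw [hdet2, h0, hγ0]; ring)
  -- conjugates of unit eigenvalues are inverses
  have hcr₁ : (starRingEnd ℂ) r₁ = r₁⁻¹ := eq_inv_of_mul_eq_one_left (key r₁ hr₁)
  have hcr₂ : (starRingEnd ℂ) r₂ = r₂⁻¹ := eq_inv_of_mul_eq_one_left (key r₂ hr₂)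
  have hcs₁ : (starRingEnd ℂ) s₁ = s₁⁻¹ := eq_inv_of_mul_eq_one_left (key s₁ hs₁)
  have hcs₂ : (starRingEnd ℂ) s₂ = s₂⁻¹ := eq_inv_of_mul_eq_one_left (key s₂ hs₂)
  have hcw1 : (starRingEnd ℂ) (w 1) ≠ 0 := by
    intro h; apply hq
    have := congrArg (starRingEnd ℂ) h
    simpa using this
  have hinv_s1r2 : s₁⁻¹ - r₂⁻¹ ≠ 0 :=
    sub_ne_zero.mpr (fun h => hrs21 (inv_injective h).symm)
  have hinv_s2r2 : s₂⁻¹ - r₂⁻¹ ≠ 0 :=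
    sub_ne_zero.mpr (fun h => hrs22 (inv_injective h).symm)
  -- explicit formulas
  have hβv : M 0 1 = M 0 0 * w 0 * (r₁ - s₁) / (w 1 * (s₁ - r₂)) := by
    rw [eq_div_iff (mul_ne_zero hq hs1r2)]
    linear_combination -eqA
  have hδv : M 1 1 = M 1 0 * w 0 * (r₁ - s₂) / (w 1 * (s₂ - r₂)) := by
    rw [eq_div_iff (mul_ne_zero hq hs2r2)]
    linear_combination -eqB
  have hβc : (starRingEnd ℂ) (M 0 1) =
      (starRingEnd ℂ) (M 0 0) * (starRingEnd ℂ) (w 0) * (r₁⁻¹ - s₁⁻¹) /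
        ((starRingEnd ℂ) (w 1) * (s₁⁻¹ - r₂⁻¹)) := by
    rw [hβv]
    simp only [map_div₀, _root_.map_mul, _root_.map_sub, hcr₁, hcs₁, hcr₂]
  have hδc : (starRingEnd ℂ) (M 1 1) =
      (starRingEnd ℂ) (M 1 0) * (starRingEnd ℂ) (w 0) * (r₁⁻¹ - s₂⁻¹) /
        ((starRingEnd ℂ) (w 1) * (s₂⁻¹ - r₂⁻¹)) := by
    rw [hδv]
    simp only [map_div₀, _root_.map_mul, _root_.map_sub, hcr₁, hcs₂, hcr₂]
  set e₁ : ℂ := (starRingEnd ℂ) (M 0 0) * M 0 1 with he₁def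
  set e₂ : ℂ := (starRingEnd ℂ) (M 1 0) * M 1 1 with he₂def
  have hcαne : (starRingEnd ℂ) (M 0 0) ≠ 0 := by
    intro h; apply hαne
    have := congrArg (starRingEnd ℂ) h
    simpa using this
  have hcγne : (starRingEnd ℂ) (M 1 0) ≠ 0 := by
    intro h; apply hγne
    have := congrArg (starRingEnd ℂ) h
    simpa using this
  have he₁ : e₁ ≠ 0 := mul_ne_zero hcαne hβne
  have he₂ : e₂ ≠ 0 := mul_ne_zero hcγne hδne
  have hce₂ : (starRingEnd ℂ) e₂ ≠ 0 := by
    intro h; apply he₂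
    have := congrArg (starRingEnd ℂ) h
    simpa using this
  set ρ : ℂ := e₁ / e₂ with hρdef
  have hρ0 : ρ ≠ 0 := div_ne_zero he₁ he₂
  have hρreal : (starRingEnd ℂ) ρ = ρ := by
    rw [hρdef, map_div₀, div_eq_div_iff hce₂ he₂, he₁def, he₂def]
    simp only [_root_.map_mul, Complex.conj_conj]
    rw [hβc, hδc, hβv, hδv]
    exact cross_real (M 0 0) ((starRingEnd ℂ) (M 0 0)) (M 1 0) ((starRingEnd ℂ) (M 1 0))
      (w 0) ((starRingEnd ℂ) (w 0)) (w 1) ((starRingEnd ℂ) (w 1)) r₁ r₂ s₁ s₂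
      hq hcw1 hr₁0 hr₂0 hs₁0 hs₂0 hs1r2 hs2r2 hinv_s1r2 hinv_s2r2
  -- the invariant form
  set D : Matrix (Fin 2) (Fin 2) ℂ := diagonal ![1, -ρ] with hDdef
  have hDherm : Dᴴ = D := by
    rw [hDdef, diagonal_conjTranspose]
    refine congrArg diagonal (funext fun i => ?_)
    fin_cases i <;> simp [Complex.star_def, hρreal]
  set H : Matrix (Fin 2) (Fin 2) ℂ := Q⁻¹ᴴ * D * Q⁻¹ with hHdef
  have hP_QM : P = Q * M := by rw [hMdef, ← Matrix.mul_assoc, hQQ, Matrix.one_mul]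
  have hQi_MPi : Q⁻¹ = M * P⁻¹ := by rw [hMdef, Matrix.mul_assoc, hPP, Matrix.mul_one]
  have hunitr : ∀ i : Fin 2, (starRingEnd ℂ) (![r₁, r₂] i) * ![r₁, r₂] i = 1 := by
    intro i; fin_cases i
    · simpa using key r₁ hr₁
    · simpa using key r₂ hr₂
  have hunits : ∀ i : Fin 2, (starRingEnd ℂ) (![s₁, s₂] i) * ![s₁, s₂] i = 1 := by
    intro i; fin_cases i
    · simpa using key s₁ hs₁
    · simpa using key s₂ hs₂
  set K : Matrix (Fin 2) (Fin 2) ℂ := Mᴴ * D * M with hKdef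
  have hee : (starRingEnd ℂ) (M 0 0) * M 0 1 - ρ * ((starRingEnd ℂ) (M 1 0) * M 1 1) = 0 := by
    have h0 : e₁ - ρ * e₂ = 0 := by
      rw [hρdef, div_mul_cancel₀ _ he₂]; ring
    rw [he₁def, he₂def] at h0
    exact h0
  have hee2 : M 0 0 * (starRingEnd ℂ) (M 0 1) - ρ * (M 1 0 * (starRingEnd ℂ) (M 1 1)) = 0 := by
    have := congrArg (starRingEnd ℂ) hee
    simp only [_root_.map_sub, _root_.map_mul, Complex.conj_conj, map_zero, hρreal] at this
    linear_combination this
  have hK01 : K 0 1 = 0 := by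
    rw [hKdef, hDdef]
    simp only [Matrix.mul_apply, Fin.sum_univ_two, Matrix.diagonal, Matrix.of_apply,
      Matrix.conjTranspose_apply, Complex.star_def, Matrix.cons_val_zero,
      Matrix.cons_val_one, Matrix.head_cons, Fin.isValue]
    norm_num
    linear_combination hee
  have hK10 : K 1 0 = 0 := by
    rw [hKdef, hDdef]
    simp only [Matrix.mul_apply, Fin.sum_univ_two, Matrix.diagonal, Matrix.of_apply,
      Matrix.conjTranspose_apply, Complex.star_def, Matrix.cons_val_zero,
      Matrix.cons_val_one, Matrix.head_cons, Fin.isValue]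
    norm_num
    linear_combination hee2
  have hKdiag : K = diagonal ![K 0 0, K 1 1] := by
    ext i j
    fin_cases i <;> fin_cases j <;>
      simp [Matrix.diagonal, hK01, hK10]
  have hcommR : Drᴴ * K * Dr = K := by
    rw [hKdiag, hDrdef]
    exact diag_sandwich ![r₁, r₂] ![K 0 0, K 1 1] hunitr
  have hcommS : Dsᴴ * D * Ds = D := by
    rw [hDdef, hDsdef]
    exact diag_sandwich ![s₁, s₂] ![1, -ρ] hunits
  have hHP : H = P⁻¹ᴴ * K * P⁻¹ := by
    rw [hHdef, hKdef, hQi_MPi]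
    simp only [conjTranspose_mul, Matrix.mul_assoc]
  have hRinv : Rᴴ * H * R = H := by
    rw [hHP]; exact sandwich P Dr K R hPdet hR hcommR
  have hSinv : Sᴴ * H * S = H := by
    rw [hHdef]; exact sandwich Q Ds D S hQdet hS hcommS
  have hHherm : H.IsHermitian := by
    show Hᴴ = H
    rw [hHdef]
    simp only [conjTranspose_mul, conjTranspose_conjTranspose, hDherm, Matrix.mul_assoc]
  have hdetH : H.det ≠ 0 := by
    rw [hHdef, Matrix.det_mul, Matrix.det_mul]
    have hdQ : Q⁻¹.det ≠ 0 := (Matrix.isUnit_nonsing_inv_det Q hQdet).ne_zero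
    have hdQH : (Q⁻¹ᴴ).det ≠ 0 := by
      rw [Matrix.det_conjTranspose]
      simpa using hdQ
    have hdD : D.det ≠ 0 := by
      rw [hDdef, Matrix.det_diagonal]
      simp [hρ0]
    exact mul_ne_zero (mul_ne_zero hdQH hdD) hdQ
  refine ⟨H, hHherm, hdetH, hRinv, hSinv, ?_⟩
  intro H' hH'h hR' hS'
  have hH'eq : H'ᴴ = H' := hH'h
  have hcr₁0 : (starRingEnd ℂ) r₁ ≠ 0 := by
    intro h; apply hr₁0
    have := congrArg (starRingEnd ℂ) h
    simpa using this
  have hcr₂0 : (starRingEnd ℂ) r₂ ≠ 0 := by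
    intro h; apply hr₂0
    have := congrArg (starRingEnd ℂ) h
    simpa using this
  have hcs₁0 : (starRingEnd ℂ) s₁ ≠ 0 := by
    intro h; apply hs₁0
    have := congrArg (starRingEnd ℂ) h
    simpa using this
  have hcs₂0 : (starRingEnd ℂ) s₂ ≠ 0 := by
    intro h; apply hs₂0
    have := congrArg (starRingEnd ℂ) h
    simpa using this
  have hner12 : (starRingEnd ℂ) r₁ * r₂ ≠ 1 := by
    intro h
    exact hr12 (mul_left_cancel₀ hcr₁0 ((key r₁ hr₁).trans h.symm))
  have hner21 : (starRingEnd ℂ) r₂ * r₁ ≠ 1 := by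
    intro h
    exact hr12 (mul_left_cancel₀ hcr₂0 ((key r₂ hr₂).trans h.symm)).symm
  have hnes12 : (starRingEnd ℂ) s₁ * s₂ ≠ 1 := by
    intro h
    exact hs12 (mul_left_cancel₀ hcs₁0 ((key s₁ hs₁).trans h.symm))
  have hnes21 : (starRingEnd ℂ) s₂ * s₁ ≠ 1 := by
    intro h
    exact hs12 (mul_left_cancel₀ hcs₂0 ((key s₂ hs₂).trans h.symm)).symm
  set K' : Matrix (Fin 2) (Fin 2) ℂ := Pᴴ * H' * P with hK'def
  set L' : Matrix (Fin 2) (Fin 2) ℂ := Qᴴ * H' * Q with hL'def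
  have hK'inv : (diagonal ![r₁, r₂])ᴴ * K' * diagonal ![r₁, r₂] = K' := by
    rw [← hDrdef, hK'def]
    calc Drᴴ * (Pᴴ * H' * P) * Dr = (P * Dr)ᴴ * H' * (P * Dr) := by
          simp only [conjTranspose_mul, Matrix.mul_assoc]
      _ = (R * P)ᴴ * H' * (R * P) := by rw [hRP]
      _ = Pᴴ * (Rᴴ * H' * R) * P := by
          simp only [conjTranspose_mul, Matrix.mul_assoc]
      _ = Pᴴ * H' * P := by rw [hR', Matrix.mul_assoc]
  have hL'inv : (diagonal ![s₁, s₂])ᴴ * L' * diagonal ![s₁, s₂] = L' := by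
    rw [← hDsdef, hL'def]
    calc Dsᴴ * (Qᴴ * H' * Q) * Ds = (Q * Ds)ᴴ * H' * (Q * Ds) := by
          simp only [conjTranspose_mul, Matrix.mul_assoc]
      _ = (S * Q)ᴴ * H' * (S * Q) := by rw [hSQ]
      _ = Qᴴ * (Sᴴ * H' * S) * Q := by
          simp only [conjTranspose_mul, Matrix.mul_assoc]
      _ = Qᴴ * H' * Q := by rw [hS', Matrix.mul_assoc]
  have hK'01 : K' 0 1 = 0 := by
    refine off_diag_zero ![r₁, r₂] K' hK'inv 0 1 ?_
    simpa using hner12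
  have hK'10 : K' 1 0 = 0 := by
    refine off_diag_zero ![r₁, r₂] K' hK'inv 1 0 ?_
    simpa using hner21
  have hL'01 : L' 0 1 = 0 := by
    refine off_diag_zero ![s₁, s₂] L' hL'inv 0 1 ?_
    simpa using hnes12
  have hL'10 : L' 1 0 = 0 := by
    refine off_diag_zero ![s₁, s₂] L' hL'inv 1 0 ?_
    simpa using hnes21
  have hL'herm : L'ᴴ = L' := by
    rw [hL'def]
    calc (Qᴴ * H' * Q)ᴴ = Qᴴ * (H'ᴴ * Q) := by
          simp only [conjTranspose_mul, conjTranspose_conjTranspose, Matrix.mul_assoc]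
      _ = Qᴴ * H' * Q := by rw [hH'eq, Matrix.mul_assoc]
  have hcc : (starRingEnd ℂ) (L' 0 0) = L' 0 0 := by
    have := congrFun (congrFun hL'herm 0) 0
    rw [Matrix.conjTranspose_apply] at this
    simpa [Complex.star_def] using this
  have hL'diag : L' = diagonal ![L' 0 0, L' 1 1] := by
    ext i j
    fin_cases i <;> fin_cases j <;>
      simp [Matrix.diagonal, hL'01, hL'10]
  have hK'L' : K' = Mᴴ * L' * M := by
    rw [hK'def, hL'def, hP_QM]
    simp only [conjTranspose_mul, Matrix.mul_assoc]
  have hrel : L' 0 0 * ((starRingEnd ℂ) (M 0 0) * M 0 1) +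
      L' 1 1 * ((starRingEnd ℂ) (M 1 0) * M 1 1) = 0 := by
    have h01 : (Mᴴ * L' * M) 0 1 = 0 := by rw [← hK'L']; exact hK'01
    rw [hL'diag] at h01
    simp only [Matrix.mul_apply, Fin.sum_univ_two, Matrix.diagonal, Matrix.of_apply,
      Matrix.conjTranspose_apply, Complex.star_def, Matrix.cons_val_zero,
      Matrix.cons_val_one, Matrix.head_cons, Fin.isValue] at h01
    norm_num at h01
    linear_combination h01
  have he₂' : (starRingEnd ℂ) (M 1 0) * M 1 1 ≠ 0 := by
    rw [← he₂def]; exact he₂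
  have hd' : L' 1 1 = -(L' 0 0 * ρ) := by
    rw [hρdef, he₁def, he₂def]
    rw [show -(L' 0 0 * ((starRingEnd ℂ) (M 0 0) * M 0 1 / ((starRingEnd ℂ) (M 1 0) * M 1 1)))
        = -(L' 0 0 * ((starRingEnd ℂ) (M 0 0) * M 0 1)) / ((starRingEnd ℂ) (M 1 0) * M 1 1)
      from by ring]
    rw [eq_div_iff he₂']
    linear_combination hrel
  have hL'smul : L' = L' 0 0 • D := by
    rw [hL'diag, hDdef]
    ext i j
    fin_cases i <;> fin_cases j <;>
      simp [Matrix.diagonal, hd']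
  have hH'rec : H' = Q⁻¹ᴴ * L' * Q⁻¹ := by
    rw [hL'def]
    calc H' = (Q⁻¹ᴴ * Qᴴ) * H' * (Q * Q⁻¹) := by
          rw [← conjTranspose_mul, hQQ, conjTranspose_one, Matrix.one_mul,
            Matrix.mul_one]
      _ = Q⁻¹ᴴ * (Qᴴ * H' * Q) * Q⁻¹ := by simp only [Matrix.mul_assoc]
  set c₀ : ℂ := L' 0 0 with hc₀def
  refine ⟨c₀.re, ?_⟩
  have hcre : (c₀.re : ℂ) = c₀ := (Complex.conj_eq_iff_re.mp hcc)
  have hfin : H' = c₀ • H := by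
    rw [hH'rec, hL'smul, hHdef, Matrix.mul_smul, Matrix.smul_mul]
  rw [hfin]
  ext i j
  simp only [Matrix.smul_apply, smul_eq_mul]
  rw [Complex.real_smul, hcre]
end

section
/- Let a₁, a₂, a₃ be real numbers with a_i ∉ ℤ, set b_i = (a_j + a_k − a_i)/2 for (i,j,k) running over cyclic permutations of (1,2,3), and assume b_i ∉ ℤ for all i and b₁+b₂+b₃ ∉ ℤ. Let c = (a₁+a₂+a₃)/2, r₁ = exp(−2πi·c), r₂ = exp(2πi·(a₁−c)), s₁ = 1, s₂ = exp(−2πi·a₂), and define R = [[0, −r₁r₂],[1, r₁+r₂]] and S = [[0, −s₁s₂],[1, s₁+s₂]]. Then there exists a Hermitian 2×2 matrix H with R*·H·R = H, S*·H·S = H and det H ≠ 0, such that H has exactly p positive eigenvalues and 2−p negative eigenvalues, where p = ⌊{b₁}+{b₂}+{b₃}⌋ and {·} denotes the fractional part (so {x} ∈ (0,1) for x ∉ ℤ). -/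
open Matrix Finset

section Aux

open Complex

lemma expConjUnit (θ : ℝ) :
    (starRingEnd ℂ) (Complex.exp (↑θ * I)) = (Complex.exp (↑θ * I))⁻¹ := by
  rw [← Complex.exp_conj, ← Complex.exp_neg]
  congr 1
  simp [Complex.conj_ofReal]

lemma sqSubOne (θ : ℝ) : Complex.exp (↑θ * I) ^ 2 - 1
    = 2 * ↑(Real.sin θ) * I * Complex.exp (↑θ * I) := by
  rw [Complex.exp_mul_I]
  rw [show Complex.cos ↑θ = ↑(Real.cos θ) from (Complex.ofReal_cos θ).symm,
      show Complex.sin ↑θ = ↑(Real.sin θ) from (Complex.ofReal_sin θ).symm]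
  have pyth : (↑(Real.sin θ) : ℂ)^2 + (↑(Real.cos θ) : ℂ)^2 = 1 := by
    exact_mod_cast congrArg (Complex.ofReal) (Real.sin_sq_add_cos_sq θ)
  linear_combination pyth - (↑(Real.sin θ) : ℂ)^2 * Complex.I_sq

lemma traceEqSum {n : Type*} [Fintype n] [DecidableEq n] {A : Matrix n n ℂ}
    (hA : A.IsHermitian) : A.trace = ∑ i, (hA.eigenvalues i : ℂ) := by
  conv_lhs => rw [hA.spectral_theorem]
  rw [Unitary.conjStarAlgAut_apply, Matrix.trace_mul_comm, ← Matrix.mul_assoc,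
      Unitary.star_mul_self_of_mem (hA.eigenvectorUnitary).prop, Matrix.one_mul,
      Matrix.trace_diagonal]
  rfl

lemma detEqProd {n : Type*} [Fintype n] [DecidableEq n] {A : Matrix n n ℂ}
    (hA : A.IsHermitian) : A.det = ∏ i, (hA.eigenvalues i : ℂ) := by
  simpa using hA.det_eq_prod_eigenvalues

lemma ratId (r₁ r₂ s₂ : ℂ) (h1 : r₁ ≠ 0) (h2 : r₂ ≠ 0) (h3 : s₂ ≠ 0)
    (hv : s₂ - r₁ * r₂ ≠ 0) :
    (-s₂ * ((1 + s₂ - r₁ - r₂) / (s₂ - r₁ * r₂)) + (1 + s₂)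
      = (r₁ * r₂ * s₂ + r₁ * r₂ - r₂ * s₂ - r₁ * s₂) / (r₁ * r₂ - s₂)) ∧
    (-s₂⁻¹ * ((r₁ * r₂ * s₂ + r₁ * r₂ - r₂ * s₂ - r₁ * s₂) / (r₁ * r₂ - s₂)) + (1 + s₂⁻¹)
      = (1 + s₂ - r₁ - r₂) / (s₂ - r₁ * r₂)) ∧
    (s₂ * s₂⁻¹ - s₂ * (1 + s₂⁻¹) * ((1 + s₂ - r₁ - r₂) / (s₂ - r₁ * r₂))
      - s₂⁻¹ * (1 + s₂) * ((r₁ * r₂ * s₂ + r₁ * r₂ - r₂ * s₂ - r₁ * s₂) / (r₁ * r₂ - s₂))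
      + (1 + s₂) * (1 + s₂⁻¹) = 1) ∧
    (-(r₁ * r₂) * ((1 + s₂ - r₁ - r₂) / (s₂ - r₁ * r₂)) + (r₁ + r₂)
      = (r₁ * r₂ * s₂ + r₁ * r₂ - r₂ * s₂ - r₁ * s₂) / (r₁ * r₂ - s₂)) ∧
    (-(r₁⁻¹ * r₂⁻¹) * ((r₁ * r₂ * s₂ + r₁ * r₂ - r₂ * s₂ - r₁ * s₂) / (r₁ * r₂ - s₂))
      + (r₁⁻¹ + r₂⁻¹)
      = (1 + s₂ - r₁ - r₂) / (s₂ - r₁ * r₂)) ∧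
    ((r₁ * r₂) * (r₁⁻¹ * r₂⁻¹) - (r₁ * r₂) * (r₁⁻¹ + r₂⁻¹) * ((1 + s₂ - r₁ - r₂) / (s₂ - r₁ * r₂))
      - (r₁⁻¹ * r₂⁻¹) * (r₁ + r₂) * ((r₁ * r₂ * s₂ + r₁ * r₂ - r₂ * s₂ - r₁ * s₂) / (r₁ * r₂ - s₂))
      + (r₁ + r₂) * (r₁⁻¹ + r₂⁻¹) = 1) := by
  have hw : r₁ * r₂ - s₂ ≠ 0 := fun h => hv (by linear_combination -h)
  refine ⟨by field_simp; ring, by field_simp; ring, by field_simp; ring,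
    by field_simp; ring, by field_simp; ring, ?_⟩
  have hbig : s₂ * r₁ ^ 3 * r₂ ^ 3 * 2 + (-(s₂ ^ 2 * r₁ ^ 2 * r₂ ^ 2) - r₁ ^ 4 * r₂ ^ 4) ≠ 0 := by
    intro h
    have h0 : -(r₁ ^ 2 * r₂ ^ 2) * (s₂ - r₁ * r₂) ^ 2 = 0 := by linear_combination h
    rcases mul_eq_zero.1 h0 with h' | h'
    · exact (by simpa using h' : _ ∨ _).elim
        (fun h'' => h1 (pow_eq_zero_iff (n := 2) (by norm_num) |>.1 h''))
        (fun h'' => h2 (pow_eq_zero_iff (n := 2) (by norm_num) |>.1 h''))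
    · exact hv (pow_eq_zero_iff (n := 2) (by norm_num) |>.1 h')
  field_simp
  ring

end Aux

set_option maxHeartbeats 1000000 in
/-- The invariant Hermitian form for the three-line standard connection: with real
non-integer residue traces `a₁, a₂, a₃`, parameters `b i = (a j + a k − a i)/2` non-integer
and of non-integer sum, the holonomy generators `R`, `S` (companion matrices built from
`r₁ = exp(−2πi c)`, `r₂ = exp(2πi(a₁−c))`, `s₁ = 1`, `s₂ = exp(−2πi a₂)`, `c = (∑ a i)/2`)
preserve a non-degenerate Hermitian matrix `H` with exactly `p = ⌊{b₁}+{b₂}+{b₃}⌋`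
positive eigenvalues and `2 − p` negative eigenvalues. -/
theorem three_lines_invariant_hermitian_signature (a₁ a₂ a₃ : ℝ)
    (ha₁ : ∀ k : ℤ, a₁ ≠ k) (ha₂ : ∀ k : ℤ, a₂ ≠ k) (ha₃ : ∀ k : ℤ, a₃ ≠ k)
    (b₁ b₂ b₃ : ℝ)
    (hb₁ : b₁ = (a₂ + a₃ - a₁) / 2) (hb₂ : b₂ = (a₃ + a₁ - a₂) / 2)
    (hb₃ : b₃ = (a₁ + a₂ - a₃) / 2)
    (hbZ₁ : ∀ k : ℤ, b₁ ≠ k) (hbZ₂ : ∀ k : ℤ, b₂ ≠ k) (hbZ₃ : ∀ k : ℤ, b₃ ≠ k)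
    (hbsum : ∀ k : ℤ, b₁ + b₂ + b₃ ≠ k)
    (c : ℝ) (hc : c = (a₁ + a₂ + a₃) / 2)
    (r₁ r₂ s₁ s₂ : ℂ)
    (hr₁ : r₁ = Complex.exp (-(2 * Real.pi * Complex.I * (c : ℂ))))
    (hr₂ : r₂ = Complex.exp (2 * Real.pi * Complex.I * ((a₁ : ℂ) - (c : ℂ))))
    (hs₁ : s₁ = 1)
    (hs₂ : s₂ = Complex.exp (-(2 * Real.pi * Complex.I * (a₂ : ℂ))))
    (R S : Matrix (Fin 2) (Fin 2) ℂ)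
    (hR : R = !![0, -(r₁ * r₂); 1, r₁ + r₂])
    (hS : S = !![0, -(s₁ * s₂); 1, s₁ + s₂]) :
    ∃ H : Matrix (Fin 2) (Fin 2) ℂ, ∃ hH : H.IsHermitian,
      Rᴴ * H * R = H ∧ Sᴴ * H * S = H ∧ H.det ≠ 0 ∧
      ((Finset.univ.filter fun i => 0 < hH.eigenvalues i).card : ℤ) =
        ⌊Int.fract b₁ + Int.fract b₂ + Int.fract b₃⌋ ∧
      ((Finset.univ.filter fun i => hH.eigenvalues i < 0).card : ℤ) =
        2 - ⌊Int.fract b₁ + Int.fract b₂ + Int.fract b₃⌋ := by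
  have hπ : (0:ℝ) < Real.pi := Real.pi_pos
  have hcb : c = b₁ + b₂ + b₃ := by rw [hb₁, hb₂, hb₃, hc]; ring
  have hcnotint : ∀ k : ℤ, c ≠ k := fun k hk => hbsum k (by rw [← hcb]; exact hk)
  -- complex atoms
  set A : ℂ := Complex.exp (↑(Real.pi * b₁) * Complex.I) with hAdef
  set B : ℂ := Complex.exp (↑(Real.pi * b₂) * Complex.I) with hBdef
  set C : ℂ := Complex.exp (↑(Real.pi * b₃) * Complex.I) with hCdef
  have hAne : A ≠ 0 := Complex.exp_ne_zero _
  have hBne : B ≠ 0 := Complex.exp_ne_zero _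
  have hCne : C ≠ 0 := Complex.exp_ne_zero _
  have hr₁ne : r₁ ≠ 0 := by rw [hr₁]; exact Complex.exp_ne_zero _
  have hr₂ne : r₂ ≠ 0 := by rw [hr₂]; exact Complex.exp_ne_zero _
  have hs₂ne : s₂ ≠ 0 := by rw [hs₂]; exact Complex.exp_ne_zero _
  -- representations
  have hr₁M : r₁ = ((A*B*C)^2)⁻¹ := by
    have h : (A*B*C)^2 * r₁ = 1 := by
      rw [hAdef, hBdef, hCdef, hr₁, pow_two]
      simp only [← Complex.exp_add]
      rw [← Complex.exp_zero]
      congr 1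
      rw [hcb]; push_cast; ring
    exact eq_inv_of_mul_eq_one_left (by linear_combination h)
  have hr₂A : r₂ = (A^2)⁻¹ := by
    have h : A^2 * r₂ = 1 := by
      rw [hAdef, hr₂, pow_two]
      simp only [← Complex.exp_add]
      rw [← Complex.exp_zero]
      congr 1
      rw [hb₁, hc]; push_cast; ring
    exact eq_inv_of_mul_eq_one_left (by linear_combination h)
  have hs₂AC : s₂ = ((A*C)^2)⁻¹ := by
    have h : (A*C)^2 * s₂ = 1 := by
      rw [hAdef, hCdef, hs₂, pow_two]
      simp only [← Complex.exp_add]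
      rw [← Complex.exp_zero]
      congr 1
      rw [hb₁, hb₃]; push_cast; ring
    exact eq_inv_of_mul_eq_one_left (by linear_combination h)
  -- conjugates
  have hcA : (starRingEnd ℂ) A = A⁻¹ := by rw [hAdef]; exact expConjUnit _
  have hcB : (starRingEnd ℂ) B = B⁻¹ := by rw [hBdef]; exact expConjUnit _
  have hcC : (starRingEnd ℂ) C = C⁻¹ := by rw [hCdef]; exact expConjUnit _
  have hcr₁ : (starRingEnd ℂ) r₁ = (A*B*C)^2 := by
    rw [hr₁M, map_inv₀, _root_.map_pow, _root_.map_mul, _root_.map_mul, hcA, hcB, hcC,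
      show A⁻¹*B⁻¹*C⁻¹ = (A*B*C)⁻¹ by rw [mul_inv, mul_inv], inv_pow, inv_inv]
  have hcr₂ : (starRingEnd ℂ) r₂ = A^2 := by
    rw [hr₂A, map_inv₀, _root_.map_pow, hcA, inv_pow, inv_inv]
  have hcs₂c : (starRingEnd ℂ) s₂ = (A*C)^2 := by
    rw [hs₂AC, map_inv₀, _root_.map_pow, _root_.map_mul, hcA, hcC,
      show A⁻¹*C⁻¹ = (A*C)⁻¹ by rw [mul_inv], inv_pow, inv_inv]
  have hcr₁i : (starRingEnd ℂ) r₁ = r₁⁻¹ := by rw [hcr₁, hr₁M, inv_inv]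
  have hcr₂i : (starRingEnd ℂ) r₂ = r₂⁻¹ := by rw [hcr₂, hr₂A, inv_inv]
  have hcs₂i : (starRingEnd ℂ) s₂ = s₂⁻¹ := by rw [hcs₂c, hs₂AC, inv_inv]
  -- v ≠ 0
  have hvne : s₂ - r₁ * r₂ ≠ 0 := by
    intro h
    have h2 : s₂ = r₁ * r₂ := sub_eq_zero.mp h
    rw [hs₂, hr₁, hr₂, ← Complex.exp_add] at h2
    rw [Complex.exp_eq_exp_iff_exists_int] at h2
    obtain ⟨n, hn⟩ := h2
    have hcC2 : (c:ℂ) = ((a₁:ℂ) + (a₂:ℂ) + (a₃:ℂ))/2 := by rw [hc]; push_cast; ring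
    have h3 : (2*(Real.pi:ℂ)*Complex.I) * ((a₃:ℂ) - (n:ℂ)) = 0 := by
      linear_combination hn - 4*(Real.pi:ℂ)*Complex.I*hcC2
    have h4 : (2*(Real.pi:ℂ)*Complex.I) ≠ 0 := by
      simp [Real.pi_ne_zero, Complex.I_ne_zero, Complex.ofReal_ne_zero]
    have h5 : (a₃:ℂ) = (n:ℂ) := sub_eq_zero.mp ((mul_eq_zero.1 h3).resolve_left h4)
    exact ha₃ n (by exact_mod_cast h5)
  have hvcne : (starRingEnd ℂ) (s₂ - r₁ * r₂) ≠ 0 := by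
    intro h
    apply hvne
    have := congrArg (starRingEnd ℂ) h
    simpa using this
  have hcu : (starRingEnd ℂ) (1 + s₂ - r₁ - r₂) = 1 + s₂⁻¹ - r₁⁻¹ - r₂⁻¹ := by
    simp only [_root_.map_sub, _root_.map_add, _root_.map_one, hcs₂i, hcr₁i, hcr₂i]
  have hcv : (starRingEnd ℂ) (s₂ - r₁ * r₂) = s₂⁻¹ - r₁⁻¹ * r₂⁻¹ := by
    simp only [_root_.map_sub, _root_.map_mul, hcs₂i, hcr₁i, hcr₂i]
  have hcuA : (starRingEnd ℂ) (1 + s₂ - r₁ - r₂) = 1 + (A*C)^2 - (A*B*C)^2 - A^2 := by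
    simp only [_root_.map_sub, _root_.map_add, _root_.map_one, hcs₂c, hcr₁, hcr₂]
  have hcvA : (starRingEnd ℂ) (s₂ - r₁ * r₂) = (A*C)^2 - (A*B*C)^2 * A^2 := by
    simp only [_root_.map_sub, _root_.map_mul, hcs₂c, hcr₁, hcr₂]
  have hvcne' : s₂⁻¹ - r₁⁻¹ * r₂⁻¹ ≠ 0 := hcv ▸ hvcne
  have hw : r₁ * r₂ - s₂ ≠ 0 := fun h => hvne (by linear_combination -h)
  -- the invariant fraction
  set g : ℂ := (starRingEnd ℂ) (1 + s₂ - r₁ - r₂) / (starRingEnd ℂ) (s₂ - r₁ * r₂) with hgdef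
  have hgc : (starRingEnd ℂ) g = (1 + s₂ - r₁ - r₂) / (s₂ - r₁ * r₂) := by
    rw [hgdef, map_div₀, Complex.conj_conj, Complex.conj_conj]
  have hgq : g = (r₁ * r₂ * s₂ + r₁ * r₂ - r₂ * s₂ - r₁ * s₂) / (r₁ * r₂ - s₂) := by
    rw [hgdef, hcu, hcv, div_eq_div_iff hvcne' hw]
    field_simp
  obtain ⟨i1, i2, i3, i4, i5, i6⟩ := ratId r₁ r₂ s₂ hr₁ne hr₂ne hs₂ne hvne
  have hgc2 : (starRingEnd ℂ) ((r₁ * r₂ * s₂ + r₁ * r₂ - r₂ * s₂ - r₁ * s₂) / (r₁ * r₂ - s₂))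
      = (1 + s₂ - r₁ - r₂) / (s₂ - r₁ * r₂) := by rw [← hgq, hgc]
  -- signature bookkeeping
  set f : ℝ := Int.fract b₁ + Int.fract b₂ + Int.fract b₃ with hfdef
  set P : ℤ := ⌊f⌋ with hPdef
  set ε : ℝ := if P = 0 then -1 else 1 with hεdef
  have hεsq : ε^2 = 1 := by rw [hεdef]; split <;> norm_num
  have hεne : (ε:ℝ) ≠ 0 := by rw [hεdef]; split <;> norm_num
  set H : Matrix (Fin 2) (Fin 2) ℂ :=
    !![(ε:ℂ), (ε:ℂ) * g; (ε:ℂ) * (starRingEnd ℂ) g, (ε:ℂ)] with hHdef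
  have hHherm : H.IsHermitian := by
    ext i j
    fin_cases i <;> fin_cases j <;>
      simp [hHdef, Matrix.conjTranspose_apply, Complex.conj_ofReal, _root_.map_mul, Complex.conj_conj]
  have hSinv : Sᴴ * H * S = H := by
    rw [hS, hs₁, hHdef]
    ext i j
    fin_cases i <;> fin_cases j <;>
      simp only [Fin.isValue, Fin.zero_eta, Fin.mk_one, Matrix.of_apply, Matrix.cons_val_zero, Matrix.cons_val_one, Matrix.head_cons, Matrix.mul_apply, Fin.sum_univ_two,
        Matrix.conjTranspose_apply, Matrix.cons_val', Matrix.cons_val_zero, Matrix.cons_val_one,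
        Matrix.head_cons, Matrix.empty_val', Matrix.cons_val_fin_one, Matrix.head_fin_const,
        Complex.star_def, _root_.map_neg, _root_.map_mul, _root_.map_add, _root_.map_one,
        _root_.map_zero, Complex.conj_ofReal, hgq, hgc2, hcs₂i]
    · ring
    · linear_combination (ε:ℂ) * i1
    · linear_combination (ε:ℂ) * i2
    · linear_combination (ε:ℂ) * i3
  have hRinv : Rᴴ * H * R = H := by
    rw [hR, hHdef]
    ext i j
    fin_cases i <;> fin_cases j <;>
      simp only [Fin.isValue, Fin.zero_eta, Fin.mk_one, Matrix.of_apply, Matrix.cons_val_zero, Matrix.cons_val_one, Matrix.head_cons, Matrix.mul_apply, Fin.sum_univ_two,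
        Matrix.conjTranspose_apply, Matrix.cons_val', Matrix.cons_val_zero, Matrix.cons_val_one,
        Matrix.head_cons, Matrix.empty_val', Matrix.cons_val_fin_one, Matrix.head_fin_const,
        Complex.star_def, _root_.map_neg, _root_.map_mul, _root_.map_add, _root_.map_one,
        _root_.map_zero, Complex.conj_ofReal, hgq, hgc2, hcr₁i, hcr₂i]
    · ring
    · linear_combination (ε:ℂ) * i4
    · linear_combination (ε:ℂ) * i5
    · linear_combination (ε:ℂ) * i6
  -- determinant and trace
  have hdetH : H.det = ((ε^2 * (1 - Complex.normSq g) : ℝ) : ℂ) := by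
    rw [hHdef, Matrix.det_fin_two_of]
    push_cast
    linear_combination (-(ε:ℂ)^2) * Complex.mul_conj g
  have htrH : H.trace = ((2*ε : ℝ) : ℂ) := by
    rw [hHdef, Matrix.trace_fin_two_of]
    push_cast
    ring
  have hprod : hHherm.eigenvalues 0 * hHherm.eigenvalues 1 = ε^2 * (1 - Complex.normSq g) := by
    have h := detEqProd hHherm
    rw [hdetH, Fin.prod_univ_two] at h
    have h2 : ((ε^2 * (1 - Complex.normSq g) : ℝ) : ℂ)
        = ((hHherm.eigenvalues 0 * hHherm.eigenvalues 1 : ℝ) : ℂ) := by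
      push_cast at h ⊢
      linear_combination h
    exact_mod_cast h2.symm
  have hsum : hHherm.eigenvalues 0 + hHherm.eigenvalues 1 = 2*ε := by
    have h := traceEqSum hHherm
    rw [htrH, Fin.sum_univ_two] at h
    have h2 : ((2*ε : ℝ) : ℂ)
        = ((hHherm.eigenvalues 0 + hHherm.eigenvalues 1 : ℝ) : ℂ) := by
      push_cast at h ⊢
      linear_combination h
    exact_mod_cast h2.symm
  -- normSq of g
  have hKL : Complex.normSq g
      = Complex.normSq (1 + s₂ - r₁ - r₂) / Complex.normSq (s₂ - r₁ * r₂) := by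
    rw [hgdef, map_div₀, Complex.normSq_conj, Complex.normSq_conj]
  have hLpos : 0 < Complex.normSq (s₂ - r₁ * r₂) := Complex.normSq_pos.2 hvne
  -- key identity
  have eAC : ((A*C)^2)⁻¹ * (A*C)^2 = 1 :=
    inv_mul_cancel₀ (by simp [hAne, hCne, mul_eq_zero, pow_eq_zero_iff])
  have eABC : ((A*B*C)^2)⁻¹ * (A*B*C)^2 = 1 :=
    inv_mul_cancel₀ (by simp [hAne, hBne, hCne, mul_eq_zero, pow_eq_zero_iff])
  have eA2 : (A^2)⁻¹ * A^2 = 1 := inv_mul_cancel₀ (by simp [hAne, pow_eq_zero_iff])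
  have hu2 : (1 + s₂ - r₁ - r₂) * (A*B*C)^2 = (A*B*C)^2 + B^2 - 1 - B^2*C^2 := by
    rw [hs₂AC, hr₁M, hr₂A]
    linear_combination B^2 * eAC - eABC - B^2*C^2 * eA2
  have hv2 : (s₂ - r₁ * r₂) * ((A*B*C)^2 * A^2) = A^2*B^2 - 1 := by
    rw [hs₂AC, hr₁M, hr₂A]
    linear_combination A^2*B^2 * eAC - (((A*B*C)^2)⁻¹*(A*B*C)^2) * eA2 - eABC
  have hA2 : A^2 - 1 = 2 * ↑(Real.sin (Real.pi*b₁)) * Complex.I * A := by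
    rw [hAdef]; exact sqSubOne _
  have hB2 : B^2 - 1 = 2 * ↑(Real.sin (Real.pi*b₂)) * Complex.I * B := by
    rw [hBdef]; exact sqSubOne _
  have hC2 : C^2 - 1 = 2 * ↑(Real.sin (Real.pi*b₃)) * Complex.I * C := by
    rw [hCdef]; exact sqSubOne _
  have hMe : A*B*C = Complex.exp (↑(Real.pi*c) * Complex.I) := by
    rw [hAdef, hBdef, hCdef, ← Complex.exp_add, ← Complex.exp_add]
    congr 1
    rw [hcb]; push_cast; ring
  have hM2 : (A*B*C)^2 - 1 = 2 * ↑(Real.sin (Real.pi*c)) * Complex.I * (A*B*C) := by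
    rw [hMe]; exact sqSubOne _
  have hAM : (A^2-1)*((A*B*C)^2-1)
      = -4*(↑(Real.sin (Real.pi*b₁)):ℂ)*(↑(Real.sin (Real.pi*c)):ℂ)*(A*(A*B*C)) := by
    linear_combination ((A*B*C)^2-1)*hA2 + (2*(↑(Real.sin (Real.pi*b₁)):ℂ)*Complex.I*A)*hM2
      + (4*(↑(Real.sin (Real.pi*b₁)):ℂ)*(↑(Real.sin (Real.pi*c)):ℂ)*(A*(A*B*C)))*Complex.I_sq
  have hBC : (B^2-1)*(C^2-1)
      = -4*(↑(Real.sin (Real.pi*b₂)):ℂ)*(↑(Real.sin (Real.pi*b₃)):ℂ)*(B*C) := by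
    linear_combination (C^2-1)*hB2 + (2*(↑(Real.sin (Real.pi*b₂)):ℂ)*Complex.I*B)*hC2
      + (4*(↑(Real.sin (Real.pi*b₂)):ℂ)*(↑(Real.sin (Real.pi*b₃)):ℂ)*(B*C))*Complex.I_sq
  have hMAne : ((A*B*C)^2 * A^2 * (A*B*C)^2) ≠ 0 := by
    simp [hAne, hBne, hCne, mul_eq_zero, pow_eq_zero_iff]
  have hLKC : ((Complex.normSq (s₂ - r₁*r₂) - Complex.normSq (1 + s₂ - r₁ - r₂) : ℝ) : ℂ)
        * ((A*B*C)^2 * A^2 * (A*B*C)^2)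
      = ((16*Real.sin (Real.pi*b₁)*Real.sin (Real.pi*b₂)*Real.sin (Real.pi*b₃)
          *Real.sin (Real.pi*c) : ℝ) : ℂ) * ((A*B*C)^2 * A^2 * (A*B*C)^2) := by
    rw [Complex.ofReal_sub, ← Complex.mul_conj, ← Complex.mul_conj, hcuA, hcvA]
    push_cast [-Complex.ofReal_sin]
    linear_combination (((A*C)^2 - (A*B*C)^2*A^2)*(A*B*C)^2) * hv2
      - ((1+(A*C)^2-(A*B*C)^2-A^2)*(A*B*C)^2*A^2) * hu2
      + ((B^2-1)*(C^2-1)*(A*B*C)^2*A^2) * hAM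
      + (-4*(↑(Real.sin (Real.pi*b₁)):ℂ)*(↑(Real.sin (Real.pi*c)):ℂ)
          *(A*(A*B*C))*(A*B*C)^2*A^2) * hBC
  have hLK : Complex.normSq (s₂ - r₁*r₂) - Complex.normSq (1 + s₂ - r₁ - r₂)
      = 16*Real.sin (Real.pi*b₁)*Real.sin (Real.pi*b₂)*Real.sin (Real.pi*b₃)
        *Real.sin (Real.pi*c) := by
    have h := mul_right_cancel₀ hMAne hLKC
    exact_mod_cast h
  -- fractional parts and signs
  have hfr1 : 0 < Int.fract b₁ := Int.fract_pos.2 (hbZ₁ ⌊b₁⌋)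
  have hfr2 : 0 < Int.fract b₂ := Int.fract_pos.2 (hbZ₂ ⌊b₂⌋)
  have hfr3 : 0 < Int.fract b₃ := Int.fract_pos.2 (hbZ₃ ⌊b₃⌋)
  have hfl1 : Int.fract b₁ < 1 := Int.fract_lt_one _
  have hfl2 : Int.fract b₂ < 1 := Int.fract_lt_one _
  have hfl3 : Int.fract b₃ < 1 := Int.fract_lt_one _
  have hfrc : 0 < Int.fract c := Int.fract_pos.2 (hcnotint ⌊c⌋)
  have hflc : Int.fract c < 1 := Int.fract_lt_one _
  have hsp1 : 0 < Real.sin (Real.pi * Int.fract b₁) :=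
    Real.sin_pos_of_pos_of_lt_pi (by positivity) (by nlinarith)
  have hsp2 : 0 < Real.sin (Real.pi * Int.fract b₂) :=
    Real.sin_pos_of_pos_of_lt_pi (by positivity) (by nlinarith)
  have hsp3 : 0 < Real.sin (Real.pi * Int.fract b₃) :=
    Real.sin_pos_of_pos_of_lt_pi (by positivity) (by nlinarith)
  have hspc : 0 < Real.sin (Real.pi * Int.fract c) :=
    Real.sin_pos_of_pos_of_lt_pi (by positivity) (by nlinarith)
  have hsin1 : Real.sin (Real.pi*b₁) = (-1:ℝ)^⌊b₁⌋ * Real.sin (Real.pi * Int.fract b₁) := by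
    rw [show Real.pi*b₁ = Real.pi * Int.fract b₁ + ⌊b₁⌋*Real.pi by
      rw [Int.fract]; ring, Real.sin_add_int_mul_pi]
  have hsin2 : Real.sin (Real.pi*b₂) = (-1:ℝ)^⌊b₂⌋ * Real.sin (Real.pi * Int.fract b₂) := by
    rw [show Real.pi*b₂ = Real.pi * Int.fract b₂ + ⌊b₂⌋*Real.pi by
      rw [Int.fract]; ring, Real.sin_add_int_mul_pi]
  have hsin3 : Real.sin (Real.pi*b₃) = (-1:ℝ)^⌊b₃⌋ * Real.sin (Real.pi * Int.fract b₃) := by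
    rw [show Real.pi*b₃ = Real.pi * Int.fract b₃ + ⌊b₃⌋*Real.pi by
      rw [Int.fract]; ring, Real.sin_add_int_mul_pi]
  have hsinc : Real.sin (Real.pi*c) = (-1:ℝ)^⌊c⌋ * Real.sin (Real.pi * Int.fract c) := by
    rw [show Real.pi*c = Real.pi * Int.fract c + ⌊c⌋*Real.pi by
      rw [Int.fract]; ring, Real.sin_add_int_mul_pi]
  have hfloorc : ⌊c⌋ = ⌊b₁⌋ + ⌊b₂⌋ + ⌊b₃⌋ + P := by
    rw [hcb, show b₁+b₂+b₃ = ((⌊b₁⌋+⌊b₂⌋+⌊b₃⌋ : ℤ) : ℝ) + f by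
      rw [hfdef, Int.fract, Int.fract, Int.fract]; push_cast; ring,
      Int.floor_intCast_add]
  have hsignm : ((-1:ℝ)^⌊b₁⌋ * (-1:ℝ)^⌊b₂⌋ * (-1:ℝ)^⌊b₃⌋ * (-1:ℝ)^⌊c⌋) = (-1:ℝ)^P := by
    have e1 : (-1:ℝ) ≠ 0 := by norm_num
    have sqr : ∀ n : ℤ, (-1:ℝ)^n * (-1:ℝ)^n = 1 := fun n => by
      rw [← zpow_add₀ e1, show n + n = 2*n from by ring, _root_.zpow_mul]; norm_num
    rw [hfloorc, zpow_add₀ e1, zpow_add₀ e1, zpow_add₀ e1]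
    linear_combination (((-1:ℝ)^⌊b₂⌋)^2*((-1:ℝ)^⌊b₃⌋)^2*(-1:ℝ)^P) * sqr ⌊b₁⌋
      + (((-1:ℝ)^⌊b₃⌋)^2*(-1:ℝ)^P) * sqr ⌊b₂⌋ + ((-1:ℝ)^P) * sqr ⌊b₃⌋
  have hLKsign : Complex.normSq (s₂ - r₁*r₂) - Complex.normSq (1 + s₂ - r₁ - r₂)
      = (-1:ℝ)^P * (16 * (Real.sin (Real.pi * Int.fract b₁) * Real.sin (Real.pi * Int.fract b₂)
        * Real.sin (Real.pi * Int.fract b₃) * Real.sin (Real.pi * Int.fract c))) := by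
    rw [hLK, hsin1, hsin2, hsin3, hsinc, ← hsignm]; ring
  have hQpos : 0 < Real.sin (Real.pi * Int.fract b₁) * Real.sin (Real.pi * Int.fract b₂)
      * Real.sin (Real.pi * Int.fract b₃) * Real.sin (Real.pi * Int.fract c) := by positivity
  have hf0 : 0 < f := by rw [hfdef]; positivity
  have hf3 : f < 3 := by rw [hfdef]; linarith
  have hP0 : 0 ≤ P := Int.floor_nonneg.2 hf0.le
  have hP2 : P ≤ 2 := by
    have : P < 3 := Int.floor_lt.2 (by exact_mod_cast hf3)
    omega
  -- final case analysis
  have hcpos0 : (Finset.univ.filter fun i => 0 < hHherm.eigenvalues i).card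
      = (if 0 < hHherm.eigenvalues 0 then 1 else 0)
        + (if 0 < hHherm.eigenvalues 1 then 1 else 0) := by
    rw [Finset.card_filter, Fin.sum_univ_two]
  have hcneg0 : (Finset.univ.filter fun i => hHherm.eigenvalues i < 0).card
      = (if hHherm.eigenvalues 0 < 0 then 1 else 0)
        + (if hHherm.eigenvalues 1 < 0 then 1 else 0) := by
    rw [Finset.card_filter, Fin.sum_univ_two]
  have hmain : H.det ≠ 0 ∧
      ((Finset.univ.filter fun i => 0 < hHherm.eigenvalues i).card : ℤ) = P ∧
      ((Finset.univ.filter fun i => hHherm.eigenvalues i < 0).card : ℤ) = 2 - P := by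
    rcases (by omega : P = 0 ∨ P = 1 ∨ P = 2) with hP | hP | hP
    · -- negative definite
      have hε' : ε = -1 := by rw [hεdef, if_pos hP]
      have hLKpos : 0 < Complex.normSq (s₂ - r₁*r₂) - Complex.normSq (1 + s₂ - r₁ - r₂) := by
        rw [hLKsign, hP]
        simpa using hQpos
      have hnsq : Complex.normSq g < 1 := by
        rw [hKL]
        exact (div_lt_one hLpos).2 (by linarith)
      have hpp : 0 < hHherm.eigenvalues 0 * hHherm.eigenvalues 1 := by
        rw [hprod, hεsq]; linarith
      have hss : hHherm.eigenvalues 0 + hHherm.eigenvalues 1 = -2 := by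
        rw [hsum, hε']; ring
      obtain ⟨h0, h1⟩ : hHherm.eigenvalues 0 < 0 ∧ hHherm.eigenvalues 1 < 0 := by
        rcases mul_pos_iff.1 hpp with ⟨h0', h1'⟩ | h'
        · exfalso; linarith
        · exact h'
      refine ⟨?_, ?_, ?_⟩
      · rw [hdetH]
        refine Complex.ofReal_ne_zero.2 (ne_of_gt ?_)
        rw [hεsq]; linarith
      · rw [hcpos0, if_neg (by exact not_lt.2 h0.le), if_neg (by exact not_lt.2 h1.le), hP]
        norm_num
      · rw [hcneg0, if_pos h0, if_pos h1, hP]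
        norm_num
    · -- indefinite
      have hLKneg : Complex.normSq (s₂ - r₁*r₂) - Complex.normSq (1 + s₂ - r₁ - r₂) < 0 := by
        rw [hLKsign, hP]
        simpa using hQpos
      have hnsq : 1 < Complex.normSq g := by
        rw [hKL]
        exact (one_lt_div hLpos).2 (by linarith)
      have hpn : hHherm.eigenvalues 0 * hHherm.eigenvalues 1 < 0 := by
        rw [hprod, hεsq]; linarith
      refine ⟨?_, ?_, ?_⟩
      · rw [hdetH]
        refine Complex.ofReal_ne_zero.2 (ne_of_lt ?_)
        rw [hεsq]; linarith
      · rcases mul_neg_iff.1 hpn with ⟨h0, h1⟩ | ⟨h0, h1⟩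
        · rw [hcpos0, if_pos h0, if_neg (by exact not_lt.2 h1.le), hP]
          norm_num
        · rw [hcpos0, if_neg (by exact not_lt.2 h0.le), if_pos h1, hP]
          norm_num
      · rcases mul_neg_iff.1 hpn with ⟨h0, h1⟩ | ⟨h0, h1⟩
        · rw [hcneg0, if_neg (by exact not_lt.2 h0.le), if_pos h1, hP]
          norm_num
        · rw [hcneg0, if_pos h0, if_neg (by exact not_lt.2 h1.le), hP]
          norm_num
    · -- positive definite
      have hε' : ε = 1 := by rw [hεdef, if_neg (by omega)]
      have hLKpos : 0 < Complex.normSq (s₂ - r₁*r₂) - Complex.normSq (1 + s₂ - r₁ - r₂) := by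
        rw [hLKsign, hP]
        have : ((-1:ℝ))^(2:ℤ) = 1 := by norm_num
        rw [this]
        simpa using hQpos
      have hnsq : Complex.normSq g < 1 := by
        rw [hKL]
        exact (div_lt_one hLpos).2 (by linarith)
      have hpp : 0 < hHherm.eigenvalues 0 * hHherm.eigenvalues 1 := by
        rw [hprod, hεsq]; linarith
      have hss : hHherm.eigenvalues 0 + hHherm.eigenvalues 1 = 2 := by
        rw [hsum, hε']; ring
      obtain ⟨h0, h1⟩ : 0 < hHherm.eigenvalues 0 ∧ 0 < hHherm.eigenvalues 1 := by
        rcases mul_pos_iff.1 hpp with h' | ⟨h0', h1'⟩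
        · exact h'
        · exfalso; linarith
      refine ⟨?_, ?_, ?_⟩
      · rw [hdetH]
        refine Complex.ofReal_ne_zero.2 (ne_of_gt ?_)
        rw [hεsq]; linarith
      · rw [hcpos0, if_pos h0, if_pos h1, hP]
        norm_num
      · rw [hcneg0, if_neg (by exact not_lt.2 h0.le), if_neg (by exact not_lt.2 h1.le), hP]
        norm_num
  exact ⟨H, hHherm, hRinv, hSinv, hmain.1, hmain.2.1, hmain.2.2⟩
end

section
/- Let a₁, a₂, a₃ be nonzero real numbers and define the 2×2 complex matrices A₁ = [[a₁, 0],[(a₁+a₃−a₂)/2, 0]], A₂ = [[0, (a₂+a₃−a₁)/2],[0, a₂]], and A₃ = [[(a₂+a₃−a₁)/2, (a₁−a₂−a₃)/2],[(a₂−a₁−a₃)/2, (a₁+a₃−a₂)/2]]. Then there exists a positive definite Hermitian 2×2 matrix H such that H·A_i = A_i*·H for i = 1, 2, 3 (i.e. each A_i is self-adjoint with respect to the inner product ⟨v,w⟩_H = ⟨Hv,w⟩) if and only if |a₁| < |a₂|+|a₃|, |a₂| < |a₁|+|a₃| and |a₃| < |a₁|+|a₂|. -/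
open Matrix
open scoped ComplexOrder

lemma tri_aux (x y z : ℝ) (hx : 0 < x) (hy : 0 < y) (hz : 0 < z) :
    0 < (x+y+z)*(-x+y+z)*(x-y+z)*(x+y-z) ↔ (x < y+z ∧ y < x+z ∧ z < x+y) := by
  constructor
  · intro h
    refine ⟨?_, ?_, ?_⟩ <;> by_contra hc <;> push_neg at hc
    · have h1 : 0 < (x+y+z)*(x-y+z)*(x+y-z) :=
        mul_pos (mul_pos (by linarith) (by linarith)) (by linarith)
      nlinarith
    · have h1 : 0 < (x+y+z)*(-x+y+z)*(x+y-z) :=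
        mul_pos (mul_pos (by linarith) (by linarith)) (by linarith)
      nlinarith
    · have h1 : 0 < (x+y+z)*(-x+y+z)*(x-y+z) :=
        mul_pos (mul_pos (by linarith) (by linarith)) (by linarith)
      nlinarith
  · rintro ⟨h1, h2, h3⟩
    exact mul_pos (mul_pos (mul_pos (by linarith : (0:ℝ) < x+y+z)
      (by linarith : (0:ℝ) < -x+y+z)) (by linarith : (0:ℝ) < x-y+z))
      (by linarith : (0:ℝ) < x+y-z)

lemma T_abs (a b c : ℝ) : (a+b+c)*(-a+b+c)*(a-b+c)*(a+b-c)
    = (|a|+|b|+|c|)*(-|a|+|b|+|c|)*(|a|-|b|+|c|)*(|a|+|b|-|c|) := by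
  rcases abs_cases a with ⟨h1, _⟩ | ⟨h1, _⟩ <;>
  rcases abs_cases b with ⟨h2, _⟩ | ⟨h2, _⟩ <;>
  rcases abs_cases c with ⟨h3, _⟩ | ⟨h3, _⟩ <;>
  rw [h1, h2, h3] <;> ring

lemma posdef_two (p q r : ℝ) (hp : 0 < p) (hd : q*q < p*r) :
    (!![(p:ℂ), (q:ℂ); (q:ℂ), (r:ℂ)]).PosDef := by
  have e00 : (!![(p:ℂ), (q:ℂ); (q:ℂ), (r:ℂ)]) 0 0 = (p:ℂ) := rfl
  have e01 : (!![(p:ℂ), (q:ℂ); (q:ℂ), (r:ℂ)]) 0 1 = (q:ℂ) := rfl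
  have e10 : (!![(p:ℂ), (q:ℂ); (q:ℂ), (r:ℂ)]) 1 0 = (q:ℂ) := rfl
  have e11 : (!![(p:ℂ), (q:ℂ); (q:ℂ), (r:ℂ)]) 1 1 = (r:ℂ) := rfl
  rw [Matrix.posDef_iff_dotProduct_mulVec]
  constructor
  · ext i j
    fin_cases i <;> fin_cases j <;>
      simp [Matrix.conjTranspose_apply, Complex.conj_ofReal]
  · intro x hx
    have hx' : x 0 ≠ 0 ∨ x 1 ≠ 0 := by
      by_contra hc
      push_neg at hc
      exact hx (funext fun i => by fin_cases i <;> simp [hc.1, hc.2])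
    simp only [dotProduct, mulVec, Fin.sum_univ_two, e00, e01, e10, e11,
      Pi.star_apply, RCLike.star_def]
    rw [Complex.lt_def]
    constructor
    · simp only [Complex.add_re, Complex.mul_re, Complex.add_im, Complex.mul_im,
        Complex.conj_re, Complex.conj_im, Complex.ofReal_re, Complex.ofReal_im, Complex.zero_re]
      rcases eq_or_ne (x 1) 0 with h1 | h1
      · have h : x 0 ≠ 0 := by rcases hx' with h | h; exact h; exact absurd h1 h
        have h0 : 0 < (x 0).re^2 + (x 0).im^2 := by
          have := Complex.normSq_pos.mpr h
          simpa [Complex.normSq_apply, sq] using this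
        simp [h1]
        nlinarith
      · have h0 : 0 < (x 1).re^2 + (x 1).im^2 := by
          have := Complex.normSq_pos.mpr h1
          simpa [Complex.normSq_apply, sq] using this
        nlinarith [sq_nonneg (p*(x 0).re + q*(x 1).re), sq_nonneg (p*(x 0).im + q*(x 1).im),
          sq_nonneg ((x 0).re), sq_nonneg ((x 0).im)]
    · simp only [Complex.add_im, Complex.mul_im, Complex.add_re, Complex.mul_re,
        Complex.conj_re, Complex.conj_im, Complex.ofReal_re, Complex.ofReal_im,
        Complex.zero_im]
      ring

set_option maxHeartbeats 1600000 in
/-- The three-line standard connection with nonzero real residue traces `a₁, a₂, a₃`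
is Dunkl (its residue matrices `A₁, A₂, A₃` are simultaneously self-adjoint with
respect to some positive definite Hermitian inner product `H`) if and only if the
strict triangle inequalities `|a i| < |a j| + |a k|` hold. -/
theorem three_lines_dunkl_iff_triangle (a₁ a₂ a₃ : ℝ)
    (h₁ : a₁ ≠ 0) (h₂ : a₂ ≠ 0) (h₃ : a₃ ≠ 0)
    (A₁ A₂ A₃ : Matrix (Fin 2) (Fin 2) ℂ)
    (hA₁ : A₁ = !![(a₁ : ℂ), 0; (((a₁ + a₃ - a₂) / 2 : ℝ) : ℂ), 0])
    (hA₂ : A₂ = !![0, (((a₂ + a₃ - a₁) / 2 : ℝ) : ℂ); 0, (a₂ : ℂ)])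
    (hA₃ : A₃ = !![(((a₂ + a₃ - a₁) / 2 : ℝ) : ℂ), (((a₁ - a₂ - a₃) / 2 : ℝ) : ℂ);
                   (((a₂ - a₁ - a₃) / 2 : ℝ) : ℂ), (((a₁ + a₃ - a₂) / 2 : ℝ) : ℂ)]) :
    (∃ H : Matrix (Fin 2) (Fin 2) ℂ, H.PosDef ∧
        H * A₁ = A₁ᴴ * H ∧ H * A₂ = A₂ᴴ * H ∧ H * A₃ = A₃ᴴ * H) ↔
      (|a₁| < |a₂| + |a₃| ∧ |a₂| < |a₁| + |a₃| ∧ |a₃| < |a₁| + |a₂|) := by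
  subst hA₁ hA₂ hA₃
  constructor
  · rintro ⟨H, hH, e1, e2, e3⟩
    have E1 := congrFun (congrFun e1 0) 1
    have E1' := congrFun (congrFun e1 1) 0
    have E2 := congrFun (congrFun e2 1) 0
    simp [Matrix.mul_apply, Fin.sum_univ_two, Matrix.conjTranspose_apply,
      Complex.conj_ofReal, map_ofNat] at E1 E1' E2
    have hd0 := hH.dotProduct_mulVec_pos (x := ![1,0]) (by intro h; simpa using congrFun h 0)
    have hd1 := hH.dotProduct_mulVec_pos (x := ![0,1]) (by intro h; simpa using congrFun h 1)
    simp [dotProduct, Matrix.mulVec, Fin.sum_univ_two] at hd0 hd1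
    have hdet := hH.det_pos
    rw [Matrix.det_fin_two] at hdet
    have hsym : (starRingEnd ℂ) (H 0 1) = H 1 0 := by
      have := congrFun (congrFun hH.1 1) 0
      simpa [Matrix.conjTranspose_apply] using this
    have hq : H 1 0 = H 0 1 := by
      have ha : (a₁ : ℂ) ≠ 0 := Complex.ofReal_ne_zero.mpr h₁
      apply mul_left_cancel₀ ha
      linear_combination E1' + E1
    have him0 : (H 0 0).im = 0 := by
      have := (Complex.lt_def.mp hd0).2; simpa using this.symm
    have him1 : (H 1 1).im = 0 := by
      have := (Complex.lt_def.mp hd1).2; simpa using this.symm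
    have himq : (H 0 1).im = 0 := Complex.conj_eq_iff_im.mp (by rw [hsym, hq])
    set P := (H 0 0).re with hP
    set Q := (H 0 1).re with hQ
    set R := (H 1 1).re with hR
    have hc00 : H 0 0 = (P : ℂ) := Complex.ext rfl (by simp [him0])
    have hc01 : H 0 1 = (Q : ℂ) := Complex.ext rfl (by simp [himq])
    have hc11 : H 1 1 = (R : ℂ) := Complex.ext rfl (by simp [him1])
    rw [hc00] at hd0 E2 hdet
    rw [hc01] at E1 hdet
    rw [hq, hc01] at E2 hdet
    rw [hc11] at hd1 E1 hdet
    have hd0r : 0 < P := Complex.zero_lt_real.mp hd0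
    have hd1r : 0 < R := Complex.zero_lt_real.mp hd1
    have E1r : (0:ℝ) = a₁ * Q + (a₁ + a₃ - a₂)/2 * R := by exact_mod_cast E1
    have E2r : (0:ℝ) = (a₂ + a₃ - a₁)/2 * P + a₂ * Q := by exact_mod_cast E2
    have hdetr : (0:ℝ) < P * R - Q * Q := by
      rw [show ((P:ℂ) * R - Q * Q) = ((P*R - Q*Q : ℝ) : ℂ) by push_cast; ring] at hdet
      exact Complex.zero_lt_real.mp hdet
    set α := (a₁ + a₃ - a₂)/2 with hα
    set β := (a₂ + a₃ - a₁)/2 with hβ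
    have hQ0 : Q ≠ 0 := by
      intro h0
      have hα0 : α = 0 := by
        have : α * R = 0 := by rw [h0] at E1r; linarith
        rcases mul_eq_zero.mp this with h | h
        · exact h
        · exact absurd h (ne_of_gt hd1r)
      have hβ0 : β = 0 := by
        have : β * P = 0 := by rw [h0] at E2r; linarith
        rcases mul_eq_zero.mp this with h | h
        · exact h
        · exact absurd h (ne_of_gt hd0r)
      apply h₃
      have : α + β = a₃ := by rw [hα, hβ]; ring
      rw [hα0, hβ0] at this; linarith
    set m := α * β with hm
    have hprod : m * (P * R) = (a₁ * a₂) * (Q * Q) := by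
      rw [hm]; linear_combination (-(β * P)) * E1r + (a₁ * Q) * E2r
    have hQ2 : 0 < Q * Q := mul_self_pos.mpr hQ0
    have hPR0 : 0 < P * R := mul_pos hd0r hd1r
    have hm0 : m ≠ 0 := by
      intro h0
      rw [h0, zero_mul] at hprod
      have : a₁ * a₂ ≠ 0 := mul_ne_zero h₁ h₂
      exact this (by nlinarith)
    have h1 : 0 < m * (a₁ * a₂) := by
      have h2 : m * (a₁ * a₂) * (Q * Q) = (m * m) * (P * R) := by
        linear_combination (-m) * hprod
      have h3 : 0 < (m * m) * (P * R) := mul_pos (mul_self_pos.mpr hm0) hPR0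
      nlinarith
    have h4 : m * (a₁ * a₂ - m) * (P * R) = m * (a₁ * a₂) * (P * R - Q * Q) := by
      linear_combination (-m) * hprod
    have h5 : 0 < m * (a₁ * a₂ - m) := by
      have h6 : 0 < m * (a₁ * a₂) * (P * R - Q * Q) := mul_pos h1 hdetr
      rw [← h4] at h6
      by_contra hc
      push_neg at hc
      nlinarith
    have hT : 0 < (a₁+a₂+a₃)*(-a₁+a₂+a₃)*(a₁-a₂+a₃)*(a₁+a₂-a₃) := by
      have hfin : (a₁+a₂+a₃)*(-a₁+a₂+a₃)*(a₁-a₂+a₃)*(a₁+a₂-a₃)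
          = 16 * (m * (a₁ * a₂ - m)) := by rw [hm, hα, hβ]; ring
      rw [hfin]; linarith
    rw [T_abs] at hT
    exact (tri_aux _ _ _ (abs_pos.mpr h₁) (abs_pos.mpr h₂) (abs_pos.mpr h₃)).mp hT
  · rintro ⟨t1, t2, t3⟩
    have hT : 0 < (a₁+a₂+a₃)*(-a₁+a₂+a₃)*(a₁-a₂+a₃)*(a₁+a₂-a₃) := by
      rw [T_abs]
      exact (tri_aux _ _ _ (abs_pos.mpr h₁) (abs_pos.mpr h₂) (abs_pos.mpr h₃)).mpr
        ⟨t1, t2, t3⟩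
    set α := (a₁ + a₃ - a₂)/2 with hα
    set β := (a₂ + a₃ - a₁)/2 with hβ
    have hm : 0 < (α*β) * (a₁*a₂ - α*β) := by
      have key : (α*β) * (a₁*a₂ - α*β)
          = ((a₁+a₂+a₃)*(-a₁+a₂+a₃)*(a₁-a₂+a₃)*(a₁+a₂-a₃))/16 := by
        rw [hα, hβ]; ring
      rw [key]; linarith
    have hab : 0 < (a₁*a₂) * (α*β) := by nlinarith [sq_nonneg (α*β)]
    have hαβ : α*β ≠ 0 := by intro h0; rw [h0] at hm; simp at hm
    have hca : a₂*α ≠ 0 := by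
      intro h0
      apply hαβ
      rcases mul_eq_zero.mp h0 with h | h
      · exact absurd h h₂
      · rw [h]; ring
    obtain ⟨u, hu2, hpu⟩ : ∃ u : ℝ, u*u = 1 ∧ 0 < u*(a₂*α) := by
      rcases lt_or_gt_of_ne hca with h | h
      · exact ⟨-1, by ring, by nlinarith⟩
      · exact ⟨1, by ring, by nlinarith⟩
    have hru : 0 < u*(a₁*β) := by
      by_contra hc
      push_neg at hc
      nlinarith
    have hdet : (-(u*(α*β))) * (-(u*(α*β))) < (u*(a₂*α)) * (u*(a₁*β)) := by
      have e : (u*(a₂*α)) * (u*(a₁*β)) - (-(u*(α*β))) * (-(u*(α*β)))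
          = (α*β) * (a₁*a₂ - α*β) := by
        linear_combination (a₁*a₂*(α*β) - (α*β)*(α*β)) * hu2
      linarith
    refine ⟨!![((u*(a₂*α) : ℝ) : ℂ), ((-(u*(α*β)) : ℝ) : ℂ);
               ((-(u*(α*β)) : ℝ) : ℂ), ((u*(a₁*β) : ℝ) : ℂ)],
      posdef_two _ _ _ hpu hdet, ?_, ?_, ?_⟩ <;>
    · ext i j
      fin_cases i <;> fin_cases j <;>
        simp [Matrix.mul_apply, Fin.sum_univ_two, Matrix.conjTranspose_apply,
          Complex.conj_ofReal, map_ofNat] <;>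
        push_cast [hα, hβ] <;> ring
end

section
/- Let a be a real number with 2a ∉ ℤ. Set r₁ = exp(−πi(1+2a)), r₂ = exp(−πi·a), s₁ = 1, s₂ = exp(−πi(1+a)), and define R = [[0, −r₁r₂],[1, r₁+r₂]] and S = [[0, −s₁s₂],[1, s₁+s₂]]. Then there exists a positive definite Hermitian 2×2 matrix H with R*·H·R = H and S*·H·S = H if and only if there is an integer k with 2k < a < 2k + 1/2 or with 2k + 3/2 < a < 2k + 2. -/
open Matrix
open scoped ComplexOrder

section Helpers
open Real

lemma cos_pos_iff_aux (a : ℝ) (ha : ∀ k : ℤ, 2 * a ≠ k) :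
    0 < Real.cos (Real.pi * a) ↔
      ∃ k : ℤ, (2 * (k : ℝ) < a ∧ a < 2 * (k : ℝ) + 1 / 2) ∨
               (2 * (k : ℝ) + 3 / 2 < a ∧ a < 2 * (k : ℝ) + 2) := by
  have hπ := Real.pi_pos
  constructor
  · intro hc
    set m : ℤ := round (a / 2) with hm
    have h1 : |a / 2 - m| ≤ 1 / 2 := abs_sub_round (a / 2)
    have h2 : |a - 2 * m| ≤ 1 := by
      rw [abs_le] at h1 ⊢; constructor <;> linarith [h1.1, h1.2]
    have hcos : Real.cos (Real.pi * (a - 2 * m)) = Real.cos (Real.pi * a) := by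
      have : Real.pi * (a - 2 * m) = Real.pi * a - m * (2 * Real.pi) := by ring
      rw [this, Real.cos_sub_int_mul_two_pi]
    have h3 : |a - 2 * m| < 1 / 2 := by
      by_contra h
      push_neg at h
      have h4 : Real.cos (Real.pi * |a - 2 * m|) ≤ 0 := by
        apply Real.cos_nonpos_of_pi_div_two_le_of_le
        · nlinarith [h, hπ]
        · nlinarith [h2, hπ]
      rcases abs_cases (a - 2 * m) with ⟨he, _⟩ | ⟨he, _⟩
      · rw [he] at h4; linarith [hcos ▸ hc]
      · rw [he] at h4
        rw [show Real.pi * -(a - 2*m) = -(Real.pi * (a - 2*m)) by ring, Real.cos_neg] at h4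
        linarith [hcos ▸ hc]
    have hne : a - 2 * m ≠ 0 := by
      intro h
      have : a = 2 * m := by linarith
      exact ha (4 * m) (by push_cast; linarith)
    rcases lt_or_gt_of_ne hne with h | h
    · exact ⟨m - 1, Or.inr ⟨by push_cast; rw [abs_lt] at h3; linarith [h3.1],
        by push_cast; linarith⟩⟩
    · exact ⟨m, Or.inl ⟨by linarith, by rw [abs_lt] at h3; linarith [h3.2]⟩⟩
  · rintro ⟨k, ⟨h1, h2⟩ | ⟨h1, h2⟩⟩
    · have : Real.cos (Real.pi * a - k * (2 * Real.pi)) = Real.cos (Real.pi * a) :=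
        Real.cos_sub_int_mul_two_pi _ _
      rw [← this]
      apply Real.cos_pos_of_mem_Ioo
      constructor <;> [nlinarith; nlinarith]
    · have : Real.cos (Real.pi * a - (k+1) * (2 * Real.pi)) = Real.cos (Real.pi * a) := by
        have := Real.cos_sub_int_mul_two_pi (Real.pi * a) (k+1)
        push_cast at this ⊢; linarith [this]
      rw [← this]
      apply Real.cos_pos_of_mem_Ioo
      constructor <;> [push_cast; push_cast] <;> nlinarith

end Helpers

section Helpers2
open Complex

lemma posdef_aux (x : ℝ) (b : ℂ) (hb : ‖b‖ < x) :
    (!![(x:ℂ), b; (starRingEnd ℂ) b, (x:ℂ)]).PosDef := by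
  rw [Matrix.posDef_iff_dotProduct_mulVec]
  constructor
  · ext i j
    fin_cases i <;> fin_cases j <;>
      simp [Matrix.conjTranspose_apply, Complex.conj_ofReal]
  · intro v hv
    have key : dotProduct (star v) ((!![(x:ℂ), b; (starRingEnd ℂ) b, (x:ℂ)]) *ᵥ v) =
        (((x * (Complex.normSq (v 0) + Complex.normSq (v 1))
          + 2 * (b * (starRingEnd ℂ) (v 0) * v 1).re : ℝ)) : ℂ) := by
      have h0 : ((Complex.normSq (v 0) : ℝ) : ℂ) = (starRingEnd ℂ) (v 0) * v 0 := by
        rw [mul_comm]; exact (Complex.mul_conj (v 0)).symm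
      have h1 : ((Complex.normSq (v 1) : ℝ) : ℂ) = (starRingEnd ℂ) (v 1) * v 1 := by
        rw [mul_comm]; exact (Complex.mul_conj (v 1)).symm
      have h2 : (((b * (starRingEnd ℂ) (v 0) * v 1).re : ℝ) : ℂ) =
          (b * (starRingEnd ℂ) (v 0) * v 1 + (starRingEnd ℂ) b * v 0 * (starRingEnd ℂ) (v 1)) / 2 := by
        have := Complex.add_conj (b * (starRingEnd ℂ) (v 0) * v 1)
        simp only [_root_.map_mul, Complex.conj_conj] at this
        push_cast at this
        rw [eq_div_iff (two_ne_zero : (2:ℂ) ≠ 0)]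
        linear_combination -this
      simp only [dotProduct, mulVec, Fin.sum_univ_two, Pi.star_apply, RCLike.star_def,
        Matrix.cons_val', Matrix.cons_val_zero, Matrix.cons_val_one, Matrix.head_cons,
        Matrix.head_fin_const, Matrix.empty_val', Matrix.cons_val_fin_one, Matrix.of_apply]
      push_cast
      rw [h2, h0, h1]
      ring
    rw [key]
    rw [Complex.zero_lt_real]
    have hN : 0 < Complex.normSq (v 0) + Complex.normSq (v 1) := by
      rcases (by simpa [funext_iff, Fin.forall_fin_two] using hv :
          ¬(v 0 = 0 ∧ v 1 = 0)) with h
      rcases Classical.em (v 0 = 0) with h0 | h0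
      · have h1 : v 1 ≠ 0 := fun h1 => h ⟨h0, h1⟩
        have := Complex.normSq_pos.2 h1
        linarith [Complex.normSq_nonneg (v 0)]
      · have := Complex.normSq_pos.2 h0
        linarith [Complex.normSq_nonneg (v 1)]
    have habs : ‖b * (starRingEnd ℂ) (v 0) * v 1‖
        = ‖b‖ * ‖v 0‖ * ‖v 1‖ := by
      simp [_root_.map_mul]
    have hre : -(‖b‖ * ‖v 0‖ * ‖v 1‖)
        ≤ (b * (starRingEnd ℂ) (v 0) * v 1).re := by
      rw [← habs]; exact neg_le_of_abs_le (Complex.abs_re_le_norm _)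
    have hsq0 : ‖v 0‖ ^ 2 = Complex.normSq (v 0) := Complex.sq_norm _
    have hsq1 : ‖v 1‖ ^ 2 = Complex.normSq (v 1) := Complex.sq_norm _
    have habsb : 0 ≤ ‖b‖ := norm_nonneg b
    nlinarith [sq_nonneg (‖v 0‖ - ‖v 1‖),
      norm_nonneg (v 0), norm_nonneg (v 1)]

lemma fin_two_matrix_ext {α : Type*} {a b c d a' b' c' d' : α}
    (h1 : a = a') (h2 : b = b') (h3 : c = c') (h4 : d = d') :
    !![a, b; c, d] = !![a', b'; c', d'] := by
  rw [h1, h2, h3, h4]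

end Helpers2

/-- Unitarity for the `B₂`-arrangement Dunkl connection: for real `a` with `2a ∉ ℤ`,
the holonomy generators `R`, `S` (companion matrices built from `r₁ = exp(−πi(1+2a))`,
`r₂ = exp(−πi a)`, `s₁ = 1`, `s₂ = exp(−πi(1+a))`) preserve a positive definite
Hermitian matrix if and only if `a ∈ (0,1/2) + 2ℤ` or `a ∈ (3/2,2) + 2ℤ`. -/
theorem dihedral_unitary_iff (a : ℝ) (ha : ∀ k : ℤ, 2 * a ≠ k)
    (r₁ r₂ s₁ s₂ : ℂ)
    (hr₁ : r₁ = Complex.exp (-(Real.pi * Complex.I * (1 + 2 * (a : ℂ)))))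
    (hr₂ : r₂ = Complex.exp (-(Real.pi * Complex.I * (a : ℂ))))
    (hs₁ : s₁ = 1)
    (hs₂ : s₂ = Complex.exp (-(Real.pi * Complex.I * (1 + (a : ℂ)))))
    (R S : Matrix (Fin 2) (Fin 2) ℂ)
    (hR : R = !![0, -(r₁ * r₂); 1, r₁ + r₂])
    (hS : S = !![0, -(s₁ * s₂); 1, s₁ + s₂]) :
    (∃ H : Matrix (Fin 2) (Fin 2) ℂ, H.PosDef ∧
        Rᴴ * H * R = H ∧ Sᴴ * H * S = H) ↔
      ∃ k : ℤ, (2 * (k : ℝ) < a ∧ a < 2 * (k : ℝ) + 1 / 2) ∨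
               (2 * (k : ℝ) + 3 / 2 < a ∧ a < 2 * (k : ℝ) + 2) := by
  have hπ : (Real.pi : ℂ) ≠ 0 := Complex.ofReal_ne_zero.2 (ne_of_gt Real.pi_pos)
  obtain ⟨E, hEdef⟩ : ∃ E : ℂ, E = Complex.exp (-(Real.pi * Complex.I * (a : ℂ))) := ⟨_, rfl⟩
  rw [← hEdef] at hr₂
  have hE0 : E ≠ 0 := by rw [hEdef]; exact Complex.exp_ne_zero _
  have hexpneg : Complex.exp (-(Real.pi * Complex.I)) = -1 := by
    rw [show -((Real.pi:ℂ) * Complex.I) = -(Real.pi * Complex.I) from rfl, Complex.exp_neg,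
      Complex.exp_pi_mul_I]
    norm_num
  -- conj E = E⁻¹
  have hconjEinv : (starRingEnd ℂ) E = E⁻¹ := by
    rw [hEdef, ← Complex.exp_conj, ← Complex.exp_neg]
    congr 1
    simp [Complex.conj_I]
  obtain ⟨F, hFdef⟩ : ∃ F : ℂ, F = (starRingEnd ℂ) E := ⟨_, rfl⟩
  have hconjE : (starRingEnd ℂ) E = F := hFdef.symm
  have hFinv : F = E⁻¹ := by rw [hFdef, hconjEinv]
  have hEF : E * F = 1 := by rw [hFinv, mul_inv_cancel₀ hE0]
  have hconjF : (starRingEnd ℂ) F = E := by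
    rw [hFdef, Complex.conj_conj]
  -- E^2 ≠ 1
  have hE2 : E * E ≠ 1 := by
    intro h
    rw [hEdef, ← Complex.exp_add, Complex.exp_eq_one_iff] at h
    obtain ⟨n, hn⟩ := h
    have h2 : (Real.pi:ℂ) * Complex.I * (2*a + 2*n) = 0 := by linear_combination -hn
    have h3 : (2*a + 2*(n:ℝ) : ℝ) = 0 := by
      have := mul_eq_zero.1 h2
      rcases this with h | h
      · exact absurd h (mul_ne_zero hπ Complex.I_ne_zero)
      · have h' : ((2*a + 2*(n:ℝ) : ℝ) : ℂ) = 0 := by push_cast; linear_combination h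
        exact Complex.ofReal_eq_zero.1 h'
    exact ha (-2*n) (by push_cast; linarith)
  have hE1 : E ≠ 1 := fun h => hE2 (by rw [h]; ring)
  have hEm1 : E ≠ -1 := fun h => hE2 (by rw [h]; ring)
  have h1E : (1:ℂ) - E ≠ 0 := sub_ne_zero.2 (Ne.symm hE1)
  have h1pE : (1:ℂ) + E ≠ 0 := fun h => hEm1 (by linear_combination h)
  -- r₁ = -(E*E), s₂ = -E
  have hr₁' : r₁ = -(E * E) := by
    rw [hr₁, show -((Real.pi:ℂ) * Complex.I * (1 + 2 * (a:ℂ)))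
        = -(Real.pi * Complex.I) + (-(Real.pi * Complex.I * a) + -(Real.pi * Complex.I * a)) by ring,
      Complex.exp_add, Complex.exp_add, hexpneg, ← hEdef]
    ring
  have hs₂' : s₂ = -E := by
    rw [hs₂, show -((Real.pi:ℂ) * Complex.I * (1 + (a:ℂ)))
        = -(Real.pi * Complex.I) + -(Real.pi * Complex.I * a) by ring,
      Complex.exp_add, hexpneg, ← hEdef]
    ring
  have hR' : R = !![0, E*E*E; 1, E - E*E] := by
    rw [hR, hr₁', hr₂]
    ext i j
    fin_cases i <;> fin_cases j <;> simp <;> ring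
  have hS' : S = !![0, E; 1, 1 - E] := by
    rw [hS, hs₁, hs₂']
    ext i j
    fin_cases i <;> fin_cases j <;> simp <;> ring
  -- real part of E is cos (π a)
  have hre : E.re = Real.cos (Real.pi * a) := by
    rw [hEdef, Complex.exp_re]
    simp [Complex.mul_re, Complex.mul_im]
  rw [← cos_pos_iff_aux a ha, ← hre]
  constructor
  · -- forward direction
    rintro ⟨H, hpos, hRinv, hSinv⟩
    rw [hR'] at hRinv
    rw [hS'] at hSinv
    -- entry equations
    have e00 := congrFun (congrFun hRinv 0) 0
    have e01 := congrFun (congrFun hRinv 0) 1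
    have f01 := congrFun (congrFun hSinv 0) 1
    simp [Matrix.mul_apply, Fin.sum_univ_two, Matrix.conjTranspose_apply, hconjE,
      Matrix.cons_val_zero, Matrix.cons_val_one, Matrix.head_cons, Matrix.of_apply,
      Matrix.cons_val', Matrix.empty_val', Matrix.cons_val_fin_one, map_sub,
      _root_.map_mul] at e00 e01 f01
    -- Hermitian data
    have hherm := hpos.1
    have hb10 : H 1 0 = (starRingEnd ℂ) (H 0 1) := by
      have := congrFun (congrFun hherm 1) 0
      simpa [Matrix.conjTranspose_apply] using this.symm
    -- positivity of the (0,0) entry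
    have hx : 0 < H 0 0 := by
      have hv : (![1, 0] : Fin 2 → ℂ) ≠ 0 := by
        intro h; have := congrFun h 0; simp at this
      have := hpos.dotProduct_mulVec_pos hv
      simpa [dotProduct, Matrix.mulVec, Fin.sum_univ_two] using this
    have hxre : (0:ℂ).re < (H 0 0).re := (Complex.lt_def.1 hx).1
    have hxim : (H 0 0).im = 0 := by
      have := (Complex.lt_def.1 hx).2; simpa using this.symm
    obtain ⟨X, hXdef⟩ : ∃ X : ℝ, X = (H 0 0).re := ⟨_, rfl⟩
    rw [← hXdef] at hxre
    have hX : H 0 0 = (X:ℂ) := by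
      rw [Complex.ext_iff]
      exact ⟨hXdef.symm, by simp [hxim]⟩
    have hXpos : 0 < X := by simpa using hxre
    -- determinant positivity via a second test vector
    have hH00ne : H 0 0 ≠ 0 := by rw [hX]; exact_mod_cast Complex.ofReal_ne_zero.2 (ne_of_gt hXpos)
    have hv2 : (![-(H 0 1), H 0 0] : Fin 2 → ℂ) ≠ 0 := by
      intro h; exact hH00ne (by simpa using congrFun h 1)
    have hdet := hpos.dotProduct_mulVec_pos hv2
    have hval : dotProduct (star ![-(H 0 1), H 0 0]) (H *ᵥ ![-(H 0 1), H 0 0])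
        = ((X * (X^2 - Complex.normSq (H 0 1)) : ℝ) : ℂ) := by
      simp only [dotProduct, Matrix.mulVec, Fin.sum_univ_two, Pi.star_apply, RCLike.star_def,
        Matrix.cons_val_zero, Matrix.cons_val_one, Matrix.head_cons, map_neg]
      rw [e00, hb10, hX]
      push_cast
      rw [Complex.conj_ofReal]
      linear_combination (-(X:ℂ)) * Complex.mul_conj (H 0 1)
    have hdet' : 0 < X * (X^2 - Complex.normSq (H 0 1)) := by
      rw [hval] at hdet; exact Complex.zero_lt_real.1 hdet
    have hnb : Complex.normSq (H 0 1) < X^2 := by nlinarith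
    -- the key algebraic relation
    have key : (H 0 1 * (1+E)) * (1-E) = ((X:ℂ) * E * (1-E)) * (1-E) := by
      linear_combination (-1 : ℂ) * e01 + (E*E) * f01 + E*(1-E)^2 * e00 + E*(1-E)^2 * hX
    have hbE : H 0 1 * (1+E) = (X:ℂ) * E * (1-E) := mul_right_cancel₀ h1E key
    have hns := congrArg Complex.normSq hbE
    simp only [_root_.map_mul] at hns
    have hnsE : Complex.normSq E = 1 := by
      have hme := Complex.mul_conj E
      rw [hconjE, hEF] at hme
      exact_mod_cast hme.symm
    have hnsX : Complex.normSq ((X:ℝ):ℂ) = X^2 := by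
      rw [Complex.normSq_ofReal]; ring
    rw [hnsE, hnsX] at hns
    have hpE : 0 < Complex.normSq (1+E) := Complex.normSq_pos.2 h1pE
    have hmE_lt : Complex.normSq (1-E) < Complex.normSq (1+E) := by
      nlinarith [Complex.normSq_nonneg (1-E)]
    have hdiff : Complex.normSq (1+E) - Complex.normSq (1-E) = 4 * E.re := by
      simp [Complex.normSq_apply, Complex.add_re, Complex.add_im, Complex.sub_re,
        Complex.sub_im, Complex.one_re, Complex.one_im]
      ring
    linarith
  · -- backward direction
    intro hcos
    have habsE : ‖E‖ = 1 := by
      rw [hEdef, Complex.norm_exp]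
      simp [Complex.mul_re, Complex.mul_im]
    obtain ⟨X, hXdef⟩ : ∃ X : ℝ, X = 1 + Real.cos (Real.pi * a) := ⟨_, rfl⟩
    have hac := Complex.add_conj E
    rw [hconjE] at hac
    have hXc : (X:ℂ) = 1 + (E + F)/2 := by
      rw [hXdef, ← hre]
      push_cast at hac ⊢
      linear_combination (-1/2 : ℂ) * hac
    obtain ⟨b, hbdef⟩ : ∃ b : ℂ, b = (1 - E*E)/2 := ⟨_, rfl⟩
    have hcb : (starRingEnd ℂ) b = (1 - F*F)/2 := by
      rw [hbdef]
      simp [map_div₀, map_sub, _root_.map_mul, hconjE, map_ofNat]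
    refine ⟨!![(X:ℂ), b; (starRingEnd ℂ) b, (X:ℂ)], posdef_aux X b ?_, ?_, ?_⟩
    · have h1 : ‖b‖ ≤ 1 := by
        rw [hbdef]
        have hle : ‖1 - E*E‖ ≤ 2 := by
          calc ‖1 - E*E‖ ≤ ‖(1:ℂ)‖ + ‖E*E‖ := by
                exact norm_sub_le _ _
            _ = 2 := by rw [norm_mul, habsE, norm_one]; norm_num
        rw [norm_div]
        simp only [Complex.norm_two]
        linarith
      have hc : 0 < Real.cos (Real.pi * a) := by rw [← hre]; exact hcos
      have hXeq : X = 1 + Real.cos (Real.pi * a) := hXdef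
      linarith
    · rw [hR']
      have hRT : (!![0, E*E*E; 1, E - E*E])ᴴ = !![0, 1; F*F*F, F - F*F] := by
        ext i j
        fin_cases i <;> fin_cases j <;>
          simp [Matrix.conjTranspose_apply, map_sub, _root_.map_mul, hconjE]
      rw [hRT, Matrix.mul_fin_two, Matrix.mul_fin_two]
      apply fin_two_matrix_ext
      · rw [hXc, hcb, hbdef]; ring
      · rw [hXc, hcb, hbdef]
        linear_combination ((1/2:ℂ) + (-1:ℂ)*E + (-1/2:ℂ)*E^2*F) * hEF
      · rw [hXc, hcb, hbdef]
        linear_combination ((1/2:ℂ) + (-1:ℂ)*F + (-1/2:ℂ)*E*F^2) * hEF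
      · rw [hXc, hcb, hbdef]
        linear_combination ((1:ℂ) + (1/2:ℂ)*F + (1/2:ℂ)*E + E*F^2 + E^2*F + E^2*F^3 + E^3*F^2) * hEF
    · rw [hS']
      have hST : (!![0, E; 1, 1 - E])ᴴ = !![0, 1; F, 1 - F] := by
        ext i j
        fin_cases i <;> fin_cases j <;>
          simp [Matrix.conjTranspose_apply, map_sub, _root_.map_mul, hconjE]
      rw [hST, Matrix.mul_fin_two, Matrix.mul_fin_two]
      apply fin_two_matrix_ext
      · rw [hXc, hcb, hbdef]; ring
      · rw [hXc, hcb, hbdef]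
        linear_combination ((-1/2:ℂ) + (-1/2:ℂ)*F) * hEF
      · rw [hXc, hcb, hbdef]
        linear_combination ((-1/2:ℂ) + (-1/2:ℂ)*E) * hEF
      · rw [hXc, hcb, hbdef]
        linear_combination ((1/2:ℂ)*F + (1/2:ℂ)*F^2 + (1/2:ℂ)*E + (1/2:ℂ)*E^2) * hEF
end

section
/- Let n, k ≥ 1 and for each i ∈ {1,…,k} let A_i : ℝ → M_n(ℝ) be a family of n×n real matrices whose entries are real-analytic functions of t on all of ℝ. If for every t ∈ (0,1) there exists a nonzero vector v ∈ ℝⁿ with A_i(t)·v = v for all i = 1,…,k, then for every t ∈ ℝ there exists a nonzero vector v ∈ ℝⁿ with A_i(t)·v = v for all i = 1,…,k. -/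
open Matrix

lemma sum_mulVec_aux {n : ℕ} {ι : Type*} (s : Finset ι) (M : ι → Matrix (Fin n) (Fin n) ℝ)
    (v : Fin n → ℝ) : (∑ i ∈ s, M i) *ᵥ v = ∑ i ∈ s, M i *ᵥ v := by
  ext p
  simp only [Matrix.mulVec, dotProduct, Matrix.sum_apply, Finset.sum_apply,
    Finset.sum_mul]
  rw [Finset.sum_comm]

lemma dotProduct_sum_aux {n : ℕ} {ι : Type*} (s : Finset ι) (v : Fin n → ℝ)
    (w : ι → Fin n → ℝ) : v ⬝ᵥ (∑ i ∈ s, w i) = ∑ i ∈ s, v ⬝ᵥ w i := by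
  simp only [dotProduct, Finset.sum_apply, Finset.mul_sum]
  rw [Finset.sum_comm]

lemma fixed_iff_det_zero {n k : ℕ} (A : Fin k → ℝ → Matrix (Fin n) (Fin n) ℝ) (t : ℝ) :
    (∃ v : Fin n → ℝ, v ≠ 0 ∧ ∀ i, A i t *ᵥ v = v) ↔
      (∑ i, (A i t - 1)ᵀ * (A i t - 1)).det = 0 := by
  rw [← Matrix.exists_mulVec_eq_zero_iff]
  constructor
  · rintro ⟨v, hv, hfix⟩
    refine ⟨v, hv, ?_⟩
    rw [sum_mulVec_aux]
    apply Finset.sum_eq_zero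
    intro i _
    have : (A i t - 1) *ᵥ v = 0 := by
      rw [Matrix.sub_mulVec, hfix i, Matrix.one_mulVec, sub_self]
    rw [← Matrix.mulVec_mulVec, this, Matrix.mulVec_zero]
  · rintro ⟨v, hv, hQ⟩
    refine ⟨v, hv, fun i => ?_⟩
    have hdot : v ⬝ᵥ ((∑ j, (A j t - 1)ᵀ * (A j t - 1)) *ᵥ v) = 0 := by
      rw [hQ, dotProduct_zero]
    rw [sum_mulVec_aux, dotProduct_sum_aux] at hdot
    have hterm : ∀ j ∈ Finset.univ, (0:ℝ) ≤ v ⬝ᵥ (((A j t - 1)ᵀ * (A j t - 1)) *ᵥ v) := by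
      intro j _
      rw [← Matrix.mulVec_mulVec, Matrix.dotProduct_mulVec, Matrix.vecMul_transpose]
      exact Finset.sum_nonneg fun j _ => mul_self_nonneg _
    have hz := (Finset.sum_eq_zero_iff_of_nonneg hterm).mp hdot i (Finset.mem_univ i)
    rw [← Matrix.mulVec_mulVec, Matrix.dotProduct_mulVec, Matrix.vecMul_transpose,
      dotProduct_self_eq_zero] at hz
    have := hz
    rw [Matrix.sub_mulVec, Matrix.one_mulVec, sub_eq_zero] at this
    exact this

/-- Persistence of nonzero common fixed vectors for a real-analytic family of matrices:
if the entries of `A i : ℝ → Mₙ(ℝ)` are real-analytic on all of `ℝ` and for every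
`t ∈ (0,1)` there is a nonzero vector fixed by all `A i t`, then such a nonzero fixed
vector exists for every `t ∈ ℝ`. -/
theorem analytic_family_fixed_vector_persists {n k : ℕ} (hn : 1 ≤ n) (hk : 1 ≤ k)
    (A : Fin k → ℝ → Matrix (Fin n) (Fin n) ℝ)
    (hA : ∀ i p q, ∀ t : ℝ, AnalyticAt ℝ (fun s => A i s p q) t)
    (h : ∀ t ∈ Set.Ioo (0 : ℝ) 1, ∃ v : Fin n → ℝ, v ≠ 0 ∧ ∀ i, A i t *ᵥ v = v) :
    ∀ t : ℝ, ∃ v : Fin n → ℝ, v ≠ 0 ∧ ∀ i, A i t *ᵥ v = v := by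
  set Q : ℝ → Matrix (Fin n) (Fin n) ℝ := fun s => ∑ i, (A i s - 1)ᵀ * (A i s - 1) with hQdef
  set f : ℝ → ℝ := fun t => (Q t).det with hf
  have hB : ∀ i p q t, AnalyticAt ℝ (fun s => (A i s - 1) p q) t := by
    intro i p q t
    simpa [Matrix.sub_apply] using (hA i p q t).fun_sub analyticAt_const
  have hQ : ∀ p q t, AnalyticAt ℝ (fun s => Q s p q) t := by
    intro p q t
    have : (fun s => Q s p q)
        = fun s => ∑ i, ∑ j, (A i s - 1) j p * (A i s - 1) j q := by
      funext s
      simp [hQdef, Matrix.sum_apply, Matrix.mul_apply, Matrix.transpose_apply, Matrix.one_apply, eq_comm]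
    rw [this]
    exact Finset.analyticAt_fun_sum _ fun i _ =>
      Finset.analyticAt_fun_sum _ fun j _ => (hB i j p t).fun_mul (hB i j q t)
  have hfa : AnalyticOnNhd ℝ f Set.univ := by
    intro t _
    have : f = fun s => ∑ σ : Equiv.Perm (Fin n),
        ((Equiv.Perm.sign σ : ℤ) : ℝ) * ∏ p, Q s (σ p) p := by
      funext s; rw [hf]
      simp [Matrix.det_apply, Units.smul_def, zsmul_eq_mul]
    rw [this]
    refine Finset.analyticAt_fun_sum _ fun σ _ => ?_
    exact analyticAt_const.fun_mul
      (Finset.analyticAt_fun_prod (Finset.univ : Finset (Fin n))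
        (f := fun p s => Q s (σ p) p) fun p _ => hQ (σ p) p t)
  have hzero : f =ᶠ[nhds (1/2 : ℝ)] 0 := by
    filter_upwards [Ioo_mem_nhds (by norm_num : (0:ℝ) < 1/2) (by norm_num : (1/2:ℝ) < 1)] with s hs
    exact (fixed_iff_det_zero A s).mp (h s hs)
  have hall := hfa.eqOn_zero_of_preconnected_of_eventuallyEq_zero isPreconnected_univ
    (Set.mem_univ _) hzero
  intro t
  exact (fixed_iff_det_zero A t).mpr (hall (Set.mem_univ t))
end

section
/- Let k ≥ 1 and for each i ∈ {1,…,k} let M_i : ℝ → M_2(ℂ) be a family of 2×2 complex matrices whose entries are real-analytic functions of t on all of ℝ. Then the set Z = { t ∈ ℝ : there exists a nonzero Hermitian 2×2 matrix H with M_i(t)*·H·M_i(t) = H for all i = 1,…,k } is either equal to all of ℝ or is a discrete subset of ℝ. -/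
open Matrix

namespace InvHerm

/-- The Hermitian matrix with real coordinates `x`. -/
noncomputable def Hm (x : Fin 4 → ℝ) : Matrix (Fin 2) (Fin 2) ℂ :=
  !![(x 0 : ℂ), (x 2 : ℂ) + (x 3 : ℂ) * Complex.I;
     (x 2 : ℂ) - (x 3 : ℂ) * Complex.I, (x 1 : ℂ)]

lemma Hm_add (x y : Fin 4 → ℝ) : Hm (x + y) = Hm x + Hm y := by
  ext i j
  fin_cases i <;> fin_cases j <;> simp [Hm] <;> ring

lemma Hm_smul (r : ℝ) (x : Fin 4 → ℝ) : Hm (r • x) = r • Hm x := by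
  ext i j
  fin_cases i <;> fin_cases j <;> simp [Hm, Complex.real_smul] <;> ring

lemma Hm_zero : Hm 0 = 0 := by
  ext i j
  fin_cases i <;> fin_cases j <;> simp [Hm]

lemma Hm_isHermitian (x : Fin 4 → ℝ) : (Hm x).IsHermitian := by
  unfold Matrix.IsHermitian
  ext i j
  fin_cases i <;> fin_cases j <;>
    simp [Hm, Matrix.conjTranspose_apply, Complex.ext_iff]

lemma Hm_eq_zero_iff {x : Fin 4 → ℝ} : Hm x = 0 ↔ x = 0 := by
  constructor
  · intro h
    funext a
    have h00 := congrFun (congrFun h 0) 0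
    have h11 := congrFun (congrFun h 1) 1
    have h01 := congrFun (congrFun h 0) 1
    simp [Hm, Complex.ext_iff] at h00 h11 h01
    fin_cases a <;> simp [h00, h11, h01.1, h01.2]
  · rintro rfl; exact Hm_zero

/-- `Hm` of the coordinates of a Hermitian matrix `H` recovers `H`. -/
lemma Hm_coords {H : Matrix (Fin 2) (Fin 2) ℂ} (hH : H.IsHermitian) :
    Hm ![(H 0 0).re, (H 1 1).re, (H 0 1).re, (H 0 1).im] = H := by
  have e00 : (H 0 0).im = 0 := by
    have h := hH.apply 0 0
    rw [Complex.ext_iff] at h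
    simp at h
    linarith [h]
  have e11 : (H 1 1).im = 0 := by
    have h := hH.apply 1 1
    rw [Complex.ext_iff] at h
    simp at h
    linarith [h]
  have e10 : H 1 0 = (starRingEnd ℂ) (H 0 1) := by
    have h := hH.apply 0 1
    rw [← h]; simp
  ext i j
  fin_cases i <;> fin_cases j <;>
    simp [Hm, e10, Complex.ext_iff, e00, e11]

/-- real or imaginary part of an entry, as an `ℝ`-linear map. -/
noncomputable def ent (b : Bool) (p q : Fin 2) : Matrix (Fin 2) (Fin 2) ℂ →ₗ[ℝ] ℝ where
  toFun X := if b then (X p q).im else (X p q).re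
  map_add' X Y := by cases b <;> simp
  map_smul' r X := by cases b <;> simp [Complex.smul_re, Complex.smul_im]

/-- The linear map `x ↦ Nᴴ * Hm x * N - Hm x`. -/
noncomputable def L (N : Matrix (Fin 2) (Fin 2) ℂ) :
    (Fin 4 → ℝ) →ₗ[ℝ] Matrix (Fin 2) (Fin 2) ℂ where
  toFun x := Nᴴ * Hm x * N - Hm x
  map_add' x y := by
    rw [Hm_add, Matrix.mul_add, Matrix.add_mul]; abel
  map_smul' r x := by
    simp only [RingHom.id_apply]
    rw [Hm_smul]
    simp [Matrix.mul_smul, Matrix.smul_mul, smul_sub]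

noncomputable def coef (N : Matrix (Fin 2) (Fin 2) ℂ) (p q : Fin 2) (b : Bool)
    (a : Fin 4) : ℝ :=
  ent b p q (L N fun j => if a = j then 1 else 0)

lemma sum_coef (N : Matrix (Fin 2) (Fin 2) ℂ) (p q : Fin 2) (b : Bool) (x : Fin 4 → ℝ) :
    ∑ a, x a * coef N p q b a = ent b p q (L N x) := by
  rw [show ent b p q (L N x) = ((ent b p q).comp (L N)) x from rfl,
    LinearMap.pi_apply_eq_sum_univ]
  simp [coef, smul_eq_mul]

/-- The pointwise equivalence between existence of an invariant nonzero Hermitian matrix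
and a real linear system having a nontrivial kernel. -/
lemma exists_hermitian_iff {k : ℕ} (N : Fin k → Matrix (Fin 2) (Fin 2) ℂ) :
    (∃ H : Matrix (Fin 2) (Fin 2) ℂ, H ≠ 0 ∧ H.IsHermitian ∧
        ∀ i, (N i)ᴴ * H * (N i) = H) ↔
    (∃ x : Fin 4 → ℝ, x ≠ 0 ∧ ∀ ind : Fin k × Fin 2 × Fin 2 × Bool,
        ∑ a, x a * coef (N ind.1) ind.2.1 ind.2.2.1 ind.2.2.2 a = 0) := by
  constructor
  · rintro ⟨H, hH0, hHh, hinv⟩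
    refine ⟨![(H 0 0).re, (H 1 1).re, (H 0 1).re, (H 0 1).im], ?_, ?_⟩
    · intro h
      exact hH0 (by rw [← Hm_coords hHh, h, Hm_zero])
    · rintro ⟨i, p, q, b⟩
      rw [sum_coef]
      have : L (N i) ![(H 0 0).re, (H 1 1).re, (H 0 1).re, (H 0 1).im] = 0 := by
        show (N i)ᴴ * Hm _ * (N i) - Hm _ = 0
        rw [Hm_coords hHh, hinv i, sub_self]
      rw [this, map_zero]
  · rintro ⟨x, hx0, hker⟩
    refine ⟨Hm x, fun h => hx0 (Hm_eq_zero_iff.mp h), Hm_isHermitian x, fun i => ?_⟩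
    have hz : L (N i) x = 0 := by
      ext p q
      have hre := hker ⟨i, p, q, false⟩
      have him := hker ⟨i, p, q, true⟩
      rw [sum_coef] at hre him
      simp only [ent, LinearMap.coe_mk, AddHom.coe_mk, if_true, if_false] at hre him
      rw [Complex.ext_iff]
      exact ⟨by simpa using hre, by simpa using him⟩
    exact sub_eq_zero.mp hz

/-- A Gram determinant criterion for a linear system on `ℝ⁴` to have a nontrivial kernel. -/
lemma gram_det_eq_zero_iff {ι : Type*} [Fintype ι] (c : ι → Fin 4 → ℝ) :
    (Matrix.of fun a b => ∑ ind, c ind a * c ind b).det = 0 ↔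
    ∃ x : Fin 4 → ℝ, x ≠ 0 ∧ ∀ ind, ∑ a, x a * c ind a = 0 := by
  have sA : ∀ (x : Fin 4 → ℝ) a,
      ((Matrix.of fun a b => ∑ ind, c ind a * c ind b) *ᵥ x) a
        = ∑ ind, c ind a * (∑ b, x b * c ind b) := by
    intro x a
    simp only [Matrix.mulVec, dotProduct, Matrix.of_apply, Finset.sum_mul,
      Finset.mul_sum]
    rw [Finset.sum_comm]
    exact Finset.sum_congr rfl fun ind _ => Finset.sum_congr rfl fun b _ => by ring
  constructor
  · intro h
    obtain ⟨x, hx0, hxv⟩ := (Matrix.exists_mulVec_eq_zero_iff).mpr h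
    have hdot : ∑ a, x a * ∑ ind, c ind a * (∑ b, x b * c ind b) = 0 := by
      have : x ⬝ᵥ ((Matrix.of fun a b => ∑ ind, c ind a * c ind b) *ᵥ x) = 0 := by
        rw [hxv]; simp
      simpa [dotProduct, sA] using this
    have h2 : ∑ ind, (∑ a, x a * c ind a) ^ 2 = 0 := by
      calc ∑ ind, (∑ a, x a * c ind a) ^ 2
          = ∑ ind, ∑ a, x a * (c ind a * (∑ b, x b * c ind b)) := by
            refine Finset.sum_congr rfl fun ind _ => ?_
            rw [sq, Finset.sum_mul]
            exact Finset.sum_congr rfl fun a _ => by ring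
        _ = ∑ a, ∑ ind, x a * (c ind a * (∑ b, x b * c ind b)) := Finset.sum_comm
        _ = 0 := by simpa [Finset.mul_sum] using hdot
    refine ⟨x, hx0, fun ind => ?_⟩
    have := (Finset.sum_eq_zero_iff_of_nonneg (fun i _ => sq_nonneg _)).mp h2 ind
      (Finset.mem_univ _)
    exact sq_eq_zero_iff.mp this
  · rintro ⟨x, hx0, hker⟩
    refine Matrix.exists_mulVec_eq_zero_iff.mp ⟨x, hx0, ?_⟩
    funext a
    rw [sA x a]
    simp only [Pi.zero_apply]
    exact Finset.sum_eq_zero fun ind _ => by rw [hker ind, mul_zero]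

lemma coef_eq (N : Matrix (Fin 2) (Fin 2) ℂ) (p q : Fin 2) (b : Bool) (a : Fin 4) :
    coef N p q b a =
      (if b then Complex.im else Complex.re)
        ((∑ r, (∑ u, (starRingEnd ℂ) (N u p) * Hm (fun j => if a = j then 1 else 0) u r)
            * N r q)
          - Hm (fun j => if a = j then 1 else 0) p q) := by
  cases b <;>
    simp [coef, ent, L, Matrix.mul_apply, Matrix.conjTranspose_apply, Matrix.sub_apply]

lemma coef_analytic {k : ℕ} (M : Fin k → ℝ → Matrix (Fin 2) (Fin 2) ℂ)
    (hM : ∀ i p q, ∀ t : ℝ, AnalyticAt ℝ (fun s => M i s p q) t)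
    (i : Fin k) (p q : Fin 2) (b : Bool) (a : Fin 4) (t : ℝ) :
    AnalyticAt ℝ (fun s => coef (M i s) p q b a) t := by
  simp only [coef_eq]
  have base : AnalyticAt ℝ (fun s : ℝ =>
      (∑ r, (∑ u, (starRingEnd ℂ) (M i s u p) * Hm (fun j => if a = j then 1 else 0) u r)
          * M i s r q)
        - Hm (fun j => if a = j then 1 else 0) p q) t := by
    apply AnalyticAt.sub _ analyticAt_const
    apply Finset.analyticAt_fun_sum
    intro r _
    apply AnalyticAt.mul _ (hM i r q t)
    apply Finset.analyticAt_fun_sum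
    intro u _
    apply AnalyticAt.mul _ analyticAt_const
    exact (Complex.conjCLE.toContinuousLinearMap.analyticAt _).comp (hM i u p t)
  cases b
  · exact (Complex.reCLM.analyticAt _).comp base
  · exact (Complex.imCLM.analyticAt _).comp base

/-- The Gram matrix of the real linear system associated to the family `M` at time `t`. -/
noncomputable def gram {k : ℕ} (M : Fin k → ℝ → Matrix (Fin 2) (Fin 2) ℂ) (t : ℝ) :
    Matrix (Fin 4) (Fin 4) ℝ :=
  Matrix.of fun a b => ∑ ind : Fin k × Fin 2 × Fin 2 × Bool,
    coef (M ind.1 t) ind.2.1 ind.2.2.1 ind.2.2.2 a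
      * coef (M ind.1 t) ind.2.1 ind.2.2.1 ind.2.2.2 b

lemma gram_det_analytic {k : ℕ} (M : Fin k → ℝ → Matrix (Fin 2) (Fin 2) ℂ)
    (hM : ∀ i p q, ∀ t : ℝ, AnalyticAt ℝ (fun s => M i s p q) t) (t : ℝ) :
    AnalyticAt ℝ (fun s => (gram M s).det) t := by
  have hentry : ∀ a b, AnalyticAt ℝ (fun s => gram M s a b) t := by
    intro a b
    apply Finset.analyticAt_fun_sum
    intro ind _
    exact (coef_analytic M hM ind.1 ind.2.1 ind.2.2.1 ind.2.2.2 a t).mul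
      (coef_analytic M hM ind.1 ind.2.1 ind.2.2.1 ind.2.2.2 b t)
  have hdet : (fun s => (gram M s).det) = fun s =>
      ∑ σ : Equiv.Perm (Fin 4), (Equiv.Perm.sign σ : ℝ) * ∏ a, gram M s (σ a) a := by
    funext s
    rw [Matrix.det_apply']
  rw [hdet]
  apply Finset.analyticAt_fun_sum
  intro σ _
  exact analyticAt_const.mul (Finset.analyticAt_fun_prod _ fun a _ => hentry _ _)

end InvHerm

/-- For a real-analytic family `M i : ℝ → M₂(ℂ)` of matrices, the set of parameters `t`
at which there is a nonzero Hermitian matrix `H` with `(M i t)* · H · (M i t) = H`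
for all `i` is either all of `ℝ` or a discrete subset of `ℝ`. -/
theorem invariant_hermitian_param_set_univ_or_discrete {k : ℕ} (hk : 1 ≤ k)
    (M : Fin k → ℝ → Matrix (Fin 2) (Fin 2) ℂ)
    (hM : ∀ i p q, ∀ t : ℝ, AnalyticAt ℝ (fun s => M i s p q) t)
    (Z : Set ℝ)
    (hZ : Z = {t : ℝ | ∃ H : Matrix (Fin 2) (Fin 2) ℂ, H ≠ 0 ∧ H.IsHermitian ∧
        ∀ i, (M i t)ᴴ * H * (M i t) = H}) :
    Z = Set.univ ∨ DiscreteTopology Z := by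
  have hmem : ∀ t : ℝ, t ∈ Z ↔ (InvHerm.gram M t).det = 0 := by
    intro t
    rw [hZ]
    simp only [Set.mem_setOf_eq]
    exact (InvHerm.exists_hermitian_iff (fun i => M i t)).trans
      (InvHerm.gram_det_eq_zero_iff
        (fun (ind : Fin k × Fin 2 × Fin 2 × Bool) (a : Fin 4) =>
          InvHerm.coef (M ind.1 t) ind.2.1 ind.2.2.1 ind.2.2.2 a)).symm
  by_cases hall : ∀ t : ℝ, (InvHerm.gram M t).det = 0
  · left
    ext t
    simp [hmem t, hall t]
  · right
    push_neg at hall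
    obtain ⟨t₀, ht₀⟩ := hall
    rw [discreteTopology_subtype_iff]
    intro z _
    rcases (InvHerm.gram_det_analytic M hM z).eventually_eq_zero_or_eventually_ne_zero
      with h | h
    · exact absurd (AnalyticOnNhd.eqOn_zero_of_preconnected_of_eventuallyEq_zero
        (fun x _ => InvHerm.gram_det_analytic M hM x) isPreconnected_univ (Set.mem_univ z) h
        (Set.mem_univ t₀)) ht₀
    · rw [Filter.inf_principal_eq_bot]
      exact Filter.mem_of_superset h fun x hx hxZ => hx ((hmem x).mp hxZ)
end

section
/- Let B be a topological space and let P : B → M_n(ℝ) assign to each λ ∈ B an n×n real matrix whose entries depend continuously on λ, such that for every λ ∈ B the kernel of P(λ) (as a linear map ℝⁿ → ℝⁿ) is exactly 1-dimensional. Then for every λ₀ ∈ B there exist an open neighbourhood U of λ₀ and a continuous map v : U → ℝⁿ such that v(λ) ≠ 0 and P(λ)·v(λ) = 0 for all λ ∈ U. -/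
open Matrix

private lemma vecMulVec_mulVec' {n : ℕ} (x v z : Fin n → ℝ) :
    (vecMulVec x v) *ᵥ z = (v ⬝ᵥ z) • x := by
  funext i
  simp [vecMulVec, mulVec, dotProduct, Finset.mul_sum, mul_comm, mul_left_comm]

/-- A continuous family of real `n×n` matrices whose kernels are all exactly
1-dimensional admits, locally on the parameter space, a continuous nonvanishing
selection of kernel vectors. -/
theorem continuous_local_kernel_selection {n : ℕ} (B : Type*) [TopologicalSpace B]
    (P : B → Matrix (Fin n) (Fin n) ℝ)
    (hcont : ∀ i j, Continuous fun lam => P lam i j)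
    (hker : ∀ lam, Module.finrank ℝ (LinearMap.ker (Matrix.toLin' (P lam))) = 1) :
    ∀ lam₀ : B, ∃ U : Set B, IsOpen U ∧ lam₀ ∈ U ∧
      ∃ v : B → (Fin n → ℝ), ContinuousOn v U ∧
        ∀ lam ∈ U, v lam ≠ 0 ∧ P lam *ᵥ v lam = 0 := by
  intro lam₀
  -- a nonzero kernel vector at lam₀
  have hker_pos : ∀ lam, ∃ w, w ≠ 0 ∧ P lam *ᵥ w = 0 := by
    intro lam
    have h0 : LinearMap.ker (Matrix.toLin' (P lam)) ≠ ⊥ := by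
      intro h
      have := hker lam
      rw [h] at this
      simp at this
    obtain ⟨w, hw, hwne⟩ := Submodule.exists_mem_ne_zero_of_ne_bot h0
    exact ⟨w, hwne, by simpa [Matrix.toLin'_apply] using hw⟩
  obtain ⟨v₀, hv₀ne, hv₀⟩ := hker_pos lam₀
  -- the kernel at lam₀ is the span of v₀
  have hv₀mem : v₀ ∈ LinearMap.ker (Matrix.toLin' (P lam₀)) := by
    simp [Matrix.toLin'_apply, hv₀]
  have hspan : LinearMap.ker (Matrix.toLin' (P lam₀)) = Submodule.span ℝ {v₀} := by
    refine (Submodule.eq_of_le_of_finrank_eq ?_ ?_).symm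
    · rwa [Submodule.span_singleton_le_iff_mem]
    · rw [finrank_span_singleton hv₀ne, hker lam₀]
  -- a vector x not in the range of P lam₀
  have hrange_ne : LinearMap.range (Matrix.toLin' (P lam₀)) ≠ ⊤ := by
    intro h
    have h1 := (Matrix.toLin' (P lam₀)).finrank_range_add_finrank_ker
    rw [h, hker lam₀, finrank_top ℝ _, Module.finrank_pi] at h1
    have hn : 1 ≤ n := by
      have := hker lam₀
      have h2 := Submodule.finrank_le (LinearMap.ker (Matrix.toLin' (P lam₀)))
      rw [this, Module.finrank_pi] at h2
      simpa using h2
    simp at h1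
  obtain ⟨x, hx⟩ : ∃ x, x ∉ LinearMap.range (Matrix.toLin' (P lam₀)) := by
    by_contra h
    push_neg at h
    exact hrange_ne (Submodule.eq_top_iff'.mpr h)
  -- the perturbed family
  set M : B → Matrix (Fin n) (Fin n) ℝ := fun lam => P lam + vecMulVec x v₀ with hM
  have hMvec : ∀ lam z, M lam *ᵥ z = P lam *ᵥ z + (v₀ ⬝ᵥ z) • x := by
    intro lam z
    rw [hM]
    simp [Matrix.add_mulVec, vecMulVec_mulVec']
  -- M lam₀ is injective
  have hker0 : ∀ z, M lam₀ *ᵥ z = 0 → z = 0 := by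
    intro z hz
    rw [hMvec] at hz
    by_cases hc : v₀ ⬝ᵥ z = 0
    · rw [hc, zero_smul, add_zero] at hz
      have hzker : z ∈ LinearMap.ker (Matrix.toLin' (P lam₀)) := by
        simp [Matrix.toLin'_apply, hz]
      rw [hspan, Submodule.mem_span_singleton] at hzker
      obtain ⟨c, rfl⟩ := hzker
      rw [dotProduct_smul] at hc
      rcases smul_eq_zero.mp hc with h | h
      · rw [h, zero_smul]
      · exact absurd h (by simpa using hv₀ne)
    · exfalso
      apply hx
      refine ⟨(-(v₀ ⬝ᵥ z))⁻¹ • z, ?_⟩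
      have hPz : P lam₀ *ᵥ z = (-(v₀ ⬝ᵥ z)) • x := by
        rw [neg_smul, eq_neg_iff_add_eq_zero]; exact hz
      show P lam₀ *ᵥ ((-(v₀ ⬝ᵥ z))⁻¹ • z) = x
      rw [Matrix.mulVec_smul, hPz, smul_smul,
        inv_mul_cancel₀ (neg_ne_zero.mpr hc), one_smul]
  have hMinj : Function.Injective ((M lam₀).mulVec) := by
    have hbot : LinearMap.ker (M lam₀).mulVecLin = ⊥ :=
      (Submodule.eq_bot_iff _).mpr fun z hz => hker0 z (by simpa using hz)
    simpa [Function.Injective, Matrix.mulVecLin_apply] using LinearMap.ker_eq_bot.mp hbot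
  have hMunit : IsUnit (M lam₀).det :=
    (Matrix.isUnit_iff_isUnit_det _).mp (Matrix.mulVec_injective_iff_isUnit.mp hMinj)
  -- the open set
  have hMcont : Continuous M := continuous_matrix fun i j => by
    show Continuous fun lam => (P lam + vecMulVec x v₀) i j
    simp only [Matrix.add_apply, Matrix.vecMulVec_apply]
    exact (hcont i j).add continuous_const
  have hdetcont : Continuous fun lam => (M lam).det := hMcont.matrix_det
  refine ⟨{lam | (M lam).det ≠ 0}, ?_, ?_, ?_⟩
  · exact isOpen_compl_singleton.preimage hdetcont
  · exact hMunit.ne_zero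
  · refine ⟨fun lam => ((M lam).det)⁻¹ • ((M lam).adjugate *ᵥ x), ?_, ?_⟩
    · exact (hdetcont.continuousOn.inv₀ fun lam hlam => hlam).smul
        ((hMcont.matrix_adjugate.matrix_mulVec continuous_const).continuousOn)
    · intro lam hlam
      have hu : IsUnit (M lam).det := isUnit_iff_ne_zero.mpr hlam
      have hinj : Function.Injective ((M lam).mulVec) :=
        Matrix.mulVec_injective_iff_isUnit.mpr ((Matrix.isUnit_iff_isUnit_det _).mpr hu)
      -- v lam = (M lam)⁻¹ *ᵥ x
      have hv_eq : ((M lam).det)⁻¹ • ((M lam).adjugate *ᵥ x) = (M lam)⁻¹ *ᵥ x := by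
        rw [Matrix.inv_def, Ring.inverse_eq_inv', Matrix.smul_mulVec]
      have hMv : M lam *ᵥ (((M lam).det)⁻¹ • ((M lam).adjugate *ᵥ x)) = x := by
        rw [hv_eq, Matrix.mulVec_mulVec, Matrix.mul_nonsing_inv _ hu, Matrix.one_mulVec]
      -- a nonzero kernel vector at lam
      obtain ⟨w, hwne, hw⟩ := hker_pos lam
      have hc : v₀ ⬝ᵥ w ≠ 0 := by
        intro hc
        apply hwne
        apply hinj
        rw [hMvec, hw, hc, zero_smul, add_zero, Matrix.mulVec_zero]
      have hMw : M lam *ᵥ ((v₀ ⬝ᵥ w)⁻¹ • w) = x := by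
        rw [Matrix.mulVec_smul, hMvec, hw, zero_add, smul_smul,
          inv_mul_cancel₀ hc, one_smul]
      have hvw : ((M lam).det)⁻¹ • ((M lam).adjugate *ᵥ x) = (v₀ ⬝ᵥ w)⁻¹ • w :=
        hinj (by rw [hMv, hMw])
      constructor
      · show ((M lam).det)⁻¹ • ((M lam).adjugate *ᵥ x) ≠ 0
        rw [hvw]
        exact smul_ne_zero (inv_ne_zero hc) hwne
      · show P lam *ᵥ (((M lam).det)⁻¹ • ((M lam).adjugate *ᵥ x)) = 0
        rw [hvw, Matrix.mulVec_smul, hw, smul_zero]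
end
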